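/- arXiv:2408.03141 — 3 statements merged into one kernel-verified Lean document; each statement's English description precedes it below -/
import Mathlib

section
/- Let Γ be a groupoid and D a Γ-graded division ring. Define the gr-primality relation on Γ'₀(D) := {e ∈ Γ₀ : 1_e ≠ 0} by e ∼ f iff 1_eD1_f ≠ 0. Then: (1) ∼ is an equivalence relation on Γ'₀(D); (2) for each equivalence class [e], setting Γ_{[e]} := {γ ∈ Γ : d(γ), r(γ) ∈ [e]} and D_{[e]} := ⊕_{γ∈Γ_{[e]}} D_γ, the set D_{[e]} is a nonzero graded ideal of D and D_{[e]}D_{[f]} = 0 for distinct classes [e] ≠ [f]; (3) D = ⊕_{[e]∈Γ'₀(D)/∼} D_{[e]} and each D_{[e]} is a gr-simple gr-division ring; (4) D is gr-prime if and only if D is gr-simple, if and only if Γ'₀(D)/∼ has exactly one equivalence class. -/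
set_option autoImplicit false

noncomputable section

universe u v w x y

/-- A groupoid structure on its set `Γ` of morphisms.  Objects are identified with
the identity morphisms: `src γ` and `tgt γ` are the source and target identities
(`d(γ)` and `r(γ)`), and `comp γ δ h` is the composite `γδ`, which is defined
exactly when `src γ = tgt δ`. -/
structure Gpd (Γ : Type u) where
  src : Γ → Γ
  tgt : Γ → Γ
  inv : Γ → Γ
  comp : (γ δ : Γ) → src γ = tgt δ → Γ
  src_src : ∀ γ, src (src γ) = src γ
  tgt_src : ∀ γ, tgt (src γ) = src γ
  src_tgt : ∀ γ, src (tgt γ) = tgt γ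
  tgt_tgt : ∀ γ, tgt (tgt γ) = tgt γ
  src_comp : ∀ γ δ (h : src γ = tgt δ), src (comp γ δ h) = src δ
  tgt_comp : ∀ γ δ (h : src γ = tgt δ), tgt (comp γ δ h) = tgt γ
  comp_id : ∀ γ, comp γ (src γ) (tgt_src γ).symm = γ
  id_comp : ∀ γ, comp (tgt γ) γ (src_tgt γ) = γ
  comp_assoc : ∀ γ δ ε (h₁ : src γ = tgt δ) (h₂ : src δ = tgt ε),
    comp (comp γ δ h₁) ε ((src_comp γ δ h₁).trans h₂)
      = comp γ (comp δ ε h₂) (h₁.trans (tgt_comp δ ε h₂).symm)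
  src_inv : ∀ γ, src (inv γ) = tgt γ
  tgt_inv : ∀ γ, tgt (inv γ) = src γ
  inv_inv : ∀ γ, inv (inv γ) = γ
  comp_inv : ∀ γ, comp γ (inv γ) (tgt_inv γ).symm = tgt γ
  inv_comp : ∀ γ, comp (inv γ) γ (src_inv γ) = src γ

namespace Gpd

variable {Γ : Type u} (G : Gpd Γ)

/-- `e` is an object of the groupoid, i.e. an identity morphism. -/
def IsObj (e : Γ) : Prop := G.src e = e

open scoped Classical in
/-- Partial composition: `some (γδ)` when defined, `none` otherwise. -/
def mul? (γ δ : Γ) : Option Γ :=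
  if h : G.src γ = G.tgt δ then some (G.comp γ δ h) else none

/-- The partial triple product `σ γ τ⁻¹`, `none` when undefined. -/
def conj? (σ γ τ : Γ) : Option Γ :=
  (G.mul? σ γ).bind fun η => G.mul? η (G.inv τ)

end Gpd

/-- An object unital `Γ`-graded ring structure on the (possibly non-unital) ring `R`:
a decomposition `R = ⊕ R_γ` with `R_γ R_δ ⊆ R_{γδ}` (zero when `γδ` is undefined),
together with local units `1_e ∈ R_e` for the objects `e` such that
`1_{r(γ)} a = a 1_{d(γ)} = a` for homogeneous `a` of degree `γ`. -/
structure GammaRing {Γ : Type u} (G : Gpd Γ) (R : Type v) [NonUnitalRing R] where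
  grade : Γ → AddSubgroup R
  grade_iSup : (⨆ γ : Γ, grade γ) = ⊤
  grade_indep : ∀ γ : Γ, grade γ ⊓ (⨆ (δ : Γ) (_ : δ ≠ γ), grade δ) = ⊥
  mul_mem : ∀ (γ δ : Γ) (h : G.src γ = G.tgt δ) (a b : R),
    a ∈ grade γ → b ∈ grade δ → a * b ∈ grade (G.comp γ δ h)
  mul_ne : ∀ (γ δ : Γ), G.src γ ≠ G.tgt δ → ∀ (a b : R),
    a ∈ grade γ → b ∈ grade δ → a * b = 0
  one : Γ → R
  one_mem : ∀ e : Γ, G.IsObj e → one e ∈ grade e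
  one_mul' : ∀ (γ : Γ) (a : R), a ∈ grade γ → one (G.tgt γ) * a = a
  mul_one' : ∀ (γ : Γ) (a : R), a ∈ grade γ → a * one (G.src γ) = a

/-- A (unital) `Γ`-graded right module over the object unital `Γ`-graded ring `RG`. -/
structure GammaMod {Γ : Type u} {G : Gpd Γ} {R : Type v} [NonUnitalRing R]
    (RG : GammaRing G R) (M : Type w) [AddCommGroup M] where
  smul : M → R → M
  smul_add : ∀ (m : M) (a b : R), smul m (a + b) = smul m a + smul m b
  add_smul : ∀ (m n : M) (a : R), smul (m + n) a = smul m a + smul n a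
  smul_mul : ∀ (m : M) (a b : R), smul m (a * b) = smul (smul m a) b
  grade : Γ → AddSubgroup M
  grade_iSup : (⨆ γ : Γ, grade γ) = ⊤
  grade_indep : ∀ γ : Γ, grade γ ⊓ (⨆ (δ : Γ) (_ : δ ≠ γ), grade δ) = ⊥
  smul_mem : ∀ (σ τ : Γ) (h : G.src σ = G.tgt τ) (m : M) (a : R),
    m ∈ grade σ → a ∈ RG.grade τ → smul m a ∈ grade (G.comp σ τ h)
  smul_ne : ∀ (σ τ : Γ), G.src σ ≠ G.tgt τ → ∀ (m : M) (a : R),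
    m ∈ grade σ → a ∈ RG.grade τ → smul m a = 0
  smul_one : ∀ (σ : Γ) (m : M), m ∈ grade σ → smul m (RG.one (G.src σ)) = m

/-- A (unital) `Γ`-graded left module over the object unital `Γ`-graded ring `RG`. -/
structure GammaLMod {Γ : Type u} {G : Gpd Γ} {R : Type v} [NonUnitalRing R]
    (RG : GammaRing G R) (M : Type w) [AddCommGroup M] where
  smul : R → M → M
  smul_add : ∀ (a : R) (m n : M), smul a (m + n) = smul a m + smul a n
  add_smul : ∀ (a b : R) (m : M), smul (a + b) m = smul a m + smul b m
  mul_smul : ∀ (a b : R) (m : M), smul (a * b) m = smul a (smul b m)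
  grade : Γ → AddSubgroup M
  grade_iSup : (⨆ γ : Γ, grade γ) = ⊤
  grade_indep : ∀ γ : Γ, grade γ ⊓ (⨆ (δ : Γ) (_ : δ ≠ γ), grade δ) = ⊥
  smul_mem : ∀ (τ σ : Γ) (h : G.src τ = G.tgt σ) (a : R) (m : M),
    a ∈ RG.grade τ → m ∈ grade σ → smul a m ∈ grade (G.comp τ σ h)
  smul_ne : ∀ (τ σ : Γ), G.src τ ≠ G.tgt σ → ∀ (a : R) (m : M),
    a ∈ RG.grade τ → m ∈ grade σ → smul a m = 0
  one_smul : ∀ (σ : Γ) (m : M), m ∈ grade σ → smul (RG.one (G.tgt σ)) m = m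

namespace GammaMod

variable {Γ : Type u} {G : Gpd Γ} {R : Type v} [NonUnitalRing R] {RG : GammaRing G R}
  {M : Type w} [AddCommGroup M] (Mod : GammaMod RG M)

/-- `shiftGrade σ γ` is the homogeneous component `M_{σγ}` (zero when undefined):
the degree-`γ` component of the shifted module `M(σ)`. -/
def shiftGrade (σ γ : Γ) : AddSubgroup M := (G.mul? σ γ).elim ⊥ Mod.grade

/-- `N` is a graded submodule of `M`. -/
def IsGradedSub (N : AddSubgroup M) : Prop :=
  (∀ m ∈ N, ∀ a : R, Mod.smul m a ∈ N) ∧ N ≤ ⨆ γ : Γ, (Mod.grade γ ⊓ N)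

/-- `N` is a gr-simple graded submodule of `M`. -/
def IsGrSimpleSub (N : AddSubgroup M) : Prop :=
  Mod.IsGradedSub N ∧ N ≠ ⊥ ∧
    ∀ P : AddSubgroup M, Mod.IsGradedSub P → P ≤ N → P = ⊥ ∨ P = N

/-- `M` is a gr-simple graded module. -/
def IsGrSimple : Prop := Mod.IsGrSimpleSub ⊤

/-- `M` is a gr-semisimple graded module: it is the sum of its gr-simple graded
submodules. -/
def IsGrSemisimple : Prop :=
  (⨆ (N : AddSubgroup M) (_ : Mod.IsGrSimpleSub N), N) = ⊤

/-- The submodule `M(e) = ⊕_{r(γ) = e} M_γ`. -/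
def eComp (e : Γ) : AddSubgroup M := ⨆ (γ : Γ) (_ : G.tgt γ = e), Mod.grade γ

/-- `M` is `Γ₀`-artinian: each `M(e)` satisfies the descending chain condition on
graded submodules. -/
def IsGamma0Artinian : Prop :=
  ∀ e : Γ, G.IsObj e → ∀ f : ℕ → AddSubgroup M,
    (∀ n, Mod.IsGradedSub (f n) ∧ f n ≤ Mod.eComp e) →
    (∀ n, f (n + 1) ≤ f n) → ∃ n, ∀ k, n ≤ k → f k = f n

/-- `M` is a (nonzero) `Γ₀`-simple module: `M(e)` is gr-simple for every `e ∈ Γ'₀(M)`. -/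
def IsGamma0Simple : Prop :=
  (∃ m : M, m ≠ 0) ∧
    ∀ e : Γ, G.IsObj e → Mod.eComp e ≠ ⊥ → Mod.IsGrSimpleSub (Mod.eComp e)

theorem isGradedSub_top : Mod.IsGradedSub (⊤ : AddSubgroup M) := by
  constructor
  · intro m _ a
    exact AddSubgroup.mem_top _
  · have h : (⨆ γ : Γ, (Mod.grade γ ⊓ (⊤ : AddSubgroup M))) = (⊤ : AddSubgroup M) := by
      simp [Mod.grade_iSup]
    rw [h]

/-- `HomGrade γ` is the homogeneous component `HOM_R(M,M)_γ` of the graded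
endomorphism ring `END_R(M)`: the `R`-linear additive endomorphisms `g` with
`g(M_σ) ⊆ M_{γσ}` for all `σ`. -/
def HomGrade (γ : Γ) : Set (M →+ M) :=
  {g | (∀ (m : M) (a : R), g (Mod.smul m a) = Mod.smul (g m) a) ∧
       ∀ (σ : Γ) (m : M), m ∈ Mod.grade σ → g m ∈ Mod.shiftGrade γ σ}

/-- The graded submodule `N` of `M` is gr-isomorphic to a shift of the graded
submodule `N'` of `M₂`: there are `σ ∈ Γ` and a gr-isomorphism `N ≅ N'(σ)`. -/
def SubIso {M₂ : Type x} [AddCommGroup M₂] (Mod₂ : GammaMod RG M₂)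
    (N : AddSubgroup M) (N' : AddSubgroup M₂) (hN : Mod.IsGradedSub N) : Prop :=
  ∃ (σ : Γ) (ψ : N ≃+ N'),
    (∀ (n : N) (a : R),
      ((ψ ⟨Mod.smul n.1 a, hN.1 n.1 n.2 a⟩ : N') : M₂) = Mod₂.smul ((ψ n : N') : M₂) a) ∧
    ∀ γ : Γ, (fun n : N => ((ψ n : N') : M₂)) '' {n : N | (n : M) ∈ Mod.grade γ}
      = {m : M₂ | m ∈ N' ∧ m ∈ Mod₂.shiftGrade σ γ}

variable {ι : Type y}

/-- A pseudo-linearly independent sequence of homogeneous elements. -/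
def PseudoLI (β : ι → Γ) (v : ι → M) : Prop :=
  (∀ i, v i ∈ Mod.grade (β i) ∧ v i ≠ 0) ∧
  ∀ a : ι →₀ R, (∀ i, RG.one (G.src (β i)) * a i = a i) →
    (a.sum fun i r => Mod.smul (v i) r) = 0 → a = 0

/-- A pseudo-basis of `M`: a generating pseudo-linearly independent sequence of
homogeneous elements. -/
def PseudoBasis (β : ι → Γ) (v : ι → M) : Prop :=
  Mod.PseudoLI β v ∧
    AddSubgroup.closure {m : M | ∃ (i : ι) (r : R), m = Mod.smul (v i) r} = ⊤

/-- `M` is pseudo-free: it has a pseudo-basis. -/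
def PseudoFree : Prop :=
  ∃ (κ : Type (max u w)) (β : κ → Γ) (v : κ → M), Mod.PseudoBasis β v

end GammaMod

namespace GammaLMod

variable {Γ : Type u} {G : Gpd Γ} {R : Type v} [NonUnitalRing R] {RG : GammaRing G R}
  {M : Type w} [AddCommGroup M] (Mod : GammaLMod RG M)

/-- `rshiftGrade σ γ` is the homogeneous component `M_{σγ}` (zero when undefined). -/
def rshiftGrade (σ γ : Γ) : AddSubgroup M := (G.mul? σ γ).elim ⊥ Mod.grade

/-- `N` is a graded left submodule of `M`. -/
def IsGradedSub (N : AddSubgroup M) : Prop :=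
  (∀ m ∈ N, ∀ a : R, Mod.smul a m ∈ N) ∧ N ≤ ⨆ γ : Γ, (Mod.grade γ ⊓ N)

def IsGrSimpleSub (N : AddSubgroup M) : Prop :=
  Mod.IsGradedSub N ∧ N ≠ ⊥ ∧
    ∀ P : AddSubgroup M, Mod.IsGradedSub P → P ≤ N → P = ⊥ ∨ P = N

def IsGrSimple : Prop := Mod.IsGrSimpleSub ⊤

def IsGrSemisimple : Prop :=
  (⨆ (N : AddSubgroup M) (_ : Mod.IsGrSimpleSub N), N) = ⊤

/-- The left submodule `(e)M = ⊕_{d(γ) = e} M_γ`. -/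
def lComp (e : Γ) : AddSubgroup M := ⨆ (γ : Γ) (_ : G.src γ = e), Mod.grade γ

def IsGamma0Artinian : Prop :=
  ∀ e : Γ, G.IsObj e → ∀ f : ℕ → AddSubgroup M,
    (∀ n, Mod.IsGradedSub (f n) ∧ f n ≤ Mod.lComp e) →
    (∀ n, f (n + 1) ≤ f n) → ∃ n, ∀ k, n ≤ k → f k = f n

/-- `V` has finite `Γ₀`-dimension: each `(e)V` has a finite pseudo-basis. -/
def FiniteGamma0Dim : Prop :=
  ∀ e : Γ, G.IsObj e → ∃ (n : ℕ) (γs : Fin n → Γ) (u : Fin n → M),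
    (∀ i, G.src (γs i) = e ∧ u i ∈ Mod.grade (γs i) ∧ u i ≠ 0) ∧
    (∀ m ∈ Mod.lComp e,
      m ∈ AddSubgroup.closure {y : M | ∃ (i : Fin n) (a : R), y = Mod.smul a (u i)}) ∧
    ∀ a : Fin n → R, (∀ i, a i * RG.one (G.tgt (γs i)) = a i) →
      (∑ i, Mod.smul (a i) (u i)) = 0 → ∀ i, a i = 0

end GammaLMod

namespace GammaRing

variable {Γ : Type u} {G : Gpd Γ} {R : Type v} [NonUnitalRing R] (RG : GammaRing G R)

/-- The (right) regular graded module `R_R`. -/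
def regular : GammaMod RG R where
  smul := fun m a => m * a
  smul_add := fun m a b => mul_add m a b
  add_smul := fun m n a => add_mul m n a
  smul_mul := fun m a b => (mul_assoc m a b).symm
  grade := RG.grade
  grade_iSup := RG.grade_iSup
  grade_indep := RG.grade_indep
  smul_mem := RG.mul_mem
  smul_ne := RG.mul_ne
  smul_one := RG.mul_one'

/-- The left regular graded module `_R R`. -/
def leftRegular : GammaLMod RG R where
  smul := fun a m => a * m
  smul_add := fun a m n => mul_add a m n
  add_smul := fun a b m => add_mul a b m
  mul_smul := fun a b m => mul_assoc a b m
  grade := RG.grade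
  grade_iSup := RG.grade_iSup
  grade_indep := RG.grade_indep
  smul_mem := RG.mul_mem
  smul_ne := RG.mul_ne
  one_smul := RG.one_mul'

/-- `I` is a graded (two-sided) ideal of `R`. -/
def IsGradedIdeal (I : AddSubgroup R) : Prop :=
  (∀ a ∈ I, ∀ r : R, a * r ∈ I ∧ r * a ∈ I) ∧ I ≤ ⨆ γ : Γ, (RG.grade γ ⊓ I)

/-- `R` is a gr-simple ring. -/
def IsGrSimpleRing : Prop :=
  (∃ a : R, a ≠ 0) ∧ ∀ I : AddSubgroup R, RG.IsGradedIdeal I → I = ⊥ ∨ I = ⊤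

/-- `R` is a gr-prime ring. -/
def IsGrPrime : Prop :=
  (∃ a : R, a ≠ 0) ∧ ∀ I J : AddSubgroup R, RG.IsGradedIdeal I → RG.IsGradedIdeal J →
    I ≠ ⊥ → J ≠ ⊥ → ∃ a ∈ I, ∃ b ∈ J, a * b ≠ 0

/-- `R` is a `Γ`-graded division ring: `R ≠ 0` and every nonzero homogeneous element
of degree `γ` has an inverse of degree `γ⁻¹`. -/
def IsGrDivision : Prop :=
  (∃ a : R, a ≠ 0) ∧ ∀ (γ : Γ) (a : R), a ∈ RG.grade γ → a ≠ 0 →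
    ∃ b ∈ RG.grade (G.inv γ), a * b = RG.one (G.tgt γ) ∧ b * a = RG.one (G.src γ)

/-- `supp(R) ⊆ eΓe`. -/
def SuppLE (e : Γ) : Prop := ∀ γ : Γ, RG.grade γ ≠ ⊥ → G.src γ = e ∧ G.tgt γ = e

def IsRightGrSemisimple : Prop := RG.regular.IsGrSemisimple

def IsLeftGrSemisimple : Prop := RG.leftRegular.IsGrSemisimple

def IsRightGamma0Artinian : Prop := RG.regular.IsGamma0Artinian

def IsLeftGamma0Artinian : Prop := RG.leftRegular.IsGamma0Artinian

/-- The component ring `R_e` is a division ring with identity `1_e`. -/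
def ComponentDivisionRing (e : Γ) : Prop :=
  RG.one e ≠ 0 ∧ ∀ a ∈ RG.grade e, a ≠ 0 →
    ∃ b ∈ RG.grade e, a * b = RG.one e ∧ b * a = RG.one e

/-- The additive subgroup `N` of `R` is, with the induced structure, a gr-simple
graded ring. -/
def SubringGrSimple (N : AddSubgroup R) : Prop :=
  N ≠ ⊥ ∧ ∀ P : AddSubgroup R,
    (P ≤ N ∧ (∀ p ∈ P, ∀ n ∈ N, p * n ∈ P ∧ n * p ∈ P) ∧
      P ≤ ⨆ γ : Γ, (RG.grade γ ⊓ P)) →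
    P = ⊥ ∨ P = N

/-- The additive subgroup `N` of `R` is, with the induced structure, a gr-prime
graded ring. -/
def SubringGrPrime (N : AddSubgroup R) : Prop :=
  (∃ a ∈ N, a ≠ 0) ∧ ∀ P Q : AddSubgroup R,
    (P ≤ N ∧ (∀ p ∈ P, ∀ n ∈ N, p * n ∈ P ∧ n * p ∈ P) ∧
      P ≤ ⨆ γ : Γ, (RG.grade γ ⊓ P)) →
    (Q ≤ N ∧ (∀ q ∈ Q, ∀ n ∈ N, q * n ∈ Q ∧ n * q ∈ Q) ∧
      Q ≤ ⨆ γ : Γ, (RG.grade γ ⊓ Q)) →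
    P ≠ ⊥ → Q ≠ ⊥ → ∃ p ∈ P, ∃ q ∈ Q, p * q ≠ 0

/-- The additive subgroup `N` of `R` is, with the induced structure, a graded
division ring. -/
def SubringGrDivision (N : AddSubgroup R) : Prop :=
  (∃ a ∈ N, a ≠ 0) ∧ ∀ (γ : Γ) (a : R), a ∈ RG.grade γ → a ∈ N → a ≠ 0 →
    RG.one (G.tgt γ) ∈ N ∧ RG.one (G.src γ) ∈ N ∧
    ∃ b ∈ RG.grade (G.inv γ), b ∈ N ∧ a * b = RG.one (G.tgt γ) ∧ b * a = RG.one (G.src γ)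

/-- The additive subgroup `N` of `R` is, with the induced structure, a right
`Γ₀`-artinian graded ring. -/
def SubringRightGamma0Artinian (N : AddSubgroup R) : Prop :=
  ∀ e : Γ, G.IsObj e → ∀ f : ℕ → AddSubgroup R,
    (∀ n, f n ≤ N ⊓ RG.regular.eComp e ∧ (∀ p ∈ f n, ∀ x ∈ N, p * x ∈ f n) ∧
      f n ≤ ⨆ γ : Γ, (RG.grade γ ⊓ f n)) →
    (∀ n, f (n + 1) ≤ f n) → ∃ n, ∀ k, n ≤ k → f k = f n

end GammaRing

/-- A bundled object unital `Γ`-graded ring. -/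
structure BRing.{u', v'} {Γ : Type u'} (G : Gpd Γ) where
  carrier : Type v'
  [ring : NonUnitalRing carrier]
  str : GammaRing G carrier

attribute [instance] BRing.ring

/-- A bundled `Γ`-graded right module over `RG`. -/
structure BMod.{u', v', w'} {Γ : Type u'} {G : Gpd Γ} {R : Type v'} [NonUnitalRing R]
    (RG : GammaRing G R) where
  carrier : Type w'
  [acg : AddCommGroup carrier]
  str : GammaMod RG carrier

attribute [instance] BMod.acg

/-- Two bundled graded modules are in the same isoshift class. -/
def BModSameClass {Γ : Type u} {G : Gpd Γ} {R : Type v} [NonUnitalRing R]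
    {RG : GammaRing G R} (S T : BMod.{u, v, w} RG) : Prop :=
  S.str.SubIso T.str ⊤ ⊤ S.str.isGradedSub_top

/-- The isoshiftical component of `R` of the type of the graded module `S`:
the sum of all graded right ideals of `R` which are gr-simple and lie in the
isoshift class of `S`. -/
def GammaRing.isoComponent {Γ : Type u} {G : Gpd Γ} {R : Type v} [NonUnitalRing R]
    (RG : GammaRing G R) (S : BMod.{u, v, w} RG) : AddSubgroup R :=
  ⨆ (N : AddSubgroup R) (_ : RG.regular.IsGrSimpleSub N ∧
      ∃ hN : RG.regular.IsGradedSub N, RG.regular.SubIso S.str N ⊤ hN), N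

/-- `R` is a pseudo-free module ring: every `Γ`-graded right `R`-module is
pseudo-free. -/
def GammaRing.IsPfm.{u', v', w'} {Γ : Type u'} {G : Gpd Γ} {R : Type v'}
    [NonUnitalRing R] (RG : GammaRing G R) : Prop :=
  ∀ S : BMod.{u', v', w'} RG, S.str.PseudoFree

/-- `R` has invariant pseudo-basis number: any two pseudo-bases of a finitely
generated pseudo-free graded module have the same number of elements. -/
def GammaRing.IPBN.{u', v', w'} {Γ : Type u'} {G : Gpd Γ} {R : Type v'}
    [NonUnitalRing R] (RG : GammaRing G R) : Prop :=
  ∀ (S : BMod.{u', v', w'} RG) (m n : ℕ) (β₁ : Fin m → Γ) (v₁ : Fin m → S.carrier)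
    (β₂ : Fin n → Γ) (v₂ : Fin n → S.carrier),
    S.str.PseudoBasis β₁ v₁ → S.str.PseudoBasis β₂ v₂ → m = n

/-- A `d`-finite sequence of elements of `eΓ`. -/
def DFiniteSeq {Γ : Type u} (G : Gpd Γ) {I : Type w} (e : Γ) (σ : I → Γ) : Prop :=
  (∀ i, G.tgt (σ i) = e) ∧ ∀ f : Γ, {i : I | G.src (σ i) = f}.Finite

/-- The degree-`γ` constraint on the `(i,j)` entry of a homogeneous matrix:
the component `D_{σ_i γ σ_j⁻¹}` (zero when the product is undefined). -/
def entryGrade {Γ : Type u} (G : Gpd Γ) {D : Type v} [NonUnitalRing D]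
    (DG : GammaRing G D) {I : Type w} (σ : I → Γ) (γ : Γ) (i j : I) : AddSubgroup D :=
  (G.conj? (σ i) γ (σ j)).elim ⊥ DG.grade

/-- The `(i,j)` entry of the product of two finitely supported matrices. -/
def matMulEntry {I : Type w} {D : Type v} [NonUnitalRing D]
    (A B : I →₀ I →₀ D) (i j : I) : D :=
  (A i).sum fun k a => a * B k j

/-- `R` is gr-isomorphic to the graded matrix ring `M_I(D)(σ̄)`: there is an
injective additive map from `R` to the finitely supported `I×I` matrices over `D`
which respects matrix multiplication and maps the homogeneous component `R_γ` onto
the set of homogeneous matrices of degree `γ`. -/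
def GammaRing.GrRepMatrix {Γ : Type u} {G : Gpd Γ} {R : Type v} {D : Type x}
    [NonUnitalRing R] [NonUnitalRing D] (RG : GammaRing G R) (DG : GammaRing G D)
    {I : Type w} (σ : I → Γ) : Prop :=
  ∃ φ : R →+ (I →₀ I →₀ D), Function.Injective φ ∧
    (∀ (a b : R) (i j : I), φ (a * b) i j = matMulEntry (φ a) (φ b) i j) ∧
    ∀ γ : Γ, (fun r : R => φ r) '' (RG.grade γ : Set R)
      = {m : I →₀ I →₀ D | ∀ i j : I, m i j ∈ entryGrade G DG σ γ i j}

/-- Entry constraint for matrix rings indexed by a sequence of subsets of `Γ`: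
the component `D_{Σ_i γ Σ_j⁻¹}`. -/
def entryGradeSet {Γ : Type u} (G : Gpd Γ) {D : Type v} [NonUnitalRing D]
    (DG : GammaRing G D) {I : Type w} (Sig : I → Set Γ) (γ : Γ) (i j : I) :
    AddSubgroup D :=
  ⨆ (σ : Γ) (_ : σ ∈ Sig i) (τ : Γ) (_ : τ ∈ Sig j), (G.conj? σ γ τ).elim ⊥ DG.grade

/-- `R` is gr-isomorphic to the graded matrix ring `M_I(D)(Σ̄)` for a sequence of
subsets `Σ̄`. -/
def GammaRing.GrRepMatrixSet {Γ : Type u} {G : Gpd Γ} {R : Type v} {D : Type x}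
    [NonUnitalRing R] [NonUnitalRing D] (RG : GammaRing G R) (DG : GammaRing G D)
    {I : Type w} (Sig : I → Set Γ) : Prop :=
  ∃ φ : R →+ (I →₀ I →₀ D), Function.Injective φ ∧
    (∀ (a b : R) (i j : I), φ (a * b) i j = matMulEntry (φ a) (φ b) i j) ∧
    ∀ γ : Γ, (fun r : R => φ r) '' (RG.grade γ : Set R)
      = {m : I →₀ I →₀ D | ∀ i j : I, m i j ∈ entryGradeSet G DG Sig γ i j}

/-- The family of graded rings `Rj` is summable. -/
def SummableFam {Γ : Type u} {G : Gpd Γ} {J : Type w} (Rj : J → BRing.{u, x} G) : Prop :=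
  ∀ e : Γ, G.IsObj e → {j : J | (Rj j).str.grade e ≠ ⊥}.Finite

/-- `P` (with projections `π`) is the graded direct product `∏^gr_j R_j`. -/
def IsGradedProductB {Γ : Type u} {G : Gpd Γ} {J : Type w} (Rj : J → BRing.{u, x} G)
    {P : Type v} [NonUnitalRing P] (PG : GammaRing G P)
    (π : ∀ j, P →+ (Rj j).carrier) : Prop :=
  (∀ (j : J) (a b : P), π j (a * b) = π j a * π j b) ∧
  (∀ (j : J) (e : Γ), G.IsObj e → π j (PG.one e) = (Rj j).str.one e) ∧
  ∀ (γ : Γ) (xs : ∀ j, (Rj j).carrier), (∀ j, xs j ∈ (Rj j).str.grade γ) →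
    ∃! p : P, p ∈ PG.grade γ ∧ ∀ j, π j p = xs j

/-- `R` and `S` are gr-isomorphic graded rings. -/
def GrIso {Γ : Type u} {G : Gpd Γ} {R : Type v} {S : Type x}
    [NonUnitalRing R] [NonUnitalRing S] (RG : GammaRing G R) (SG : GammaRing G S) :
    Prop :=
  ∃ φ : R ≃+ S, (∀ a b : R, φ (a * b) = φ a * φ b) ∧
    (∀ e : Γ, G.IsObj e → φ (RG.one e) = SG.one e) ∧
    ∀ γ : Γ, (fun a : R => φ a) '' (RG.grade γ : Set R) = (SG.grade γ : Set S)

/-- The gr-primality relation: `1_e D 1_f ≠ 0`. -/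
def GrPrimRel {Γ : Type u} (G : Gpd Γ) {D : Type v} [NonUnitalRing D]
    (DG : GammaRing G D) (e f : Γ) : Prop :=
  ∃ x : D, DG.one e * x * DG.one f ≠ 0

/-- The graded ideal `D_{[e]}` attached to the `∼`-class of `e`. -/
def ClassIdeal {Γ : Type u} (G : Gpd Γ) {D : Type v} [NonUnitalRing D]
    (DG : GammaRing G D) (e : Γ) : AddSubgroup D :=
  ⨆ (γ : Γ) (_ : GrPrimRel G DG (G.tgt γ) e ∧ GrPrimRel G DG (G.src γ) e), DG.grade γ

end
universe u v w x y

section Helpers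

variable {Γ : Type u} {D : Type v} [NonUnitalRing D]

namespace GradedDiv

lemma isObj_src (G : Gpd Γ) (γ : Γ) : G.IsObj (G.src γ) := G.src_src γ

lemma isObj_tgt (G : Gpd Γ) (γ : Γ) : G.IsObj (G.tgt γ) := G.src_tgt γ

lemma tgt_obj {G : Gpd Γ} {e : Γ} (he : G.IsObj e) : G.tgt e = e := by
  calc G.tgt e = G.tgt (G.src e) := by rw [he]
  _ = G.src e := G.tgt_src e
  _ = e := he

variable {G : Gpd Γ} {DG : GammaRing G D}

lemma one_mul_grade {γ : Γ} {a : D} (ha : a ∈ DG.grade γ) {e : Γ} (h : e = G.tgt γ) :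
    DG.one e * a = a := by rw [h]; exact DG.one_mul' γ a ha

lemma grade_mul_one {γ : Γ} {a : D} (ha : a ∈ DG.grade γ) {e : Γ} (h : e = G.src γ) :
    a * DG.one e = a := by rw [h]; exact DG.mul_one' γ a ha

lemma one_mul_grade_ne {e γ : Γ} (he : G.IsObj e) (h : e ≠ G.tgt γ) {a : D}
    (ha : a ∈ DG.grade γ) : DG.one e * a = 0 :=
  DG.mul_ne e γ (by rw [he]; exact h) _ a (DG.one_mem e he) ha

lemma grade_mul_one_ne {e γ : Γ} (he : G.IsObj e) (h : G.src γ ≠ e) {a : D}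
    (ha : a ∈ DG.grade γ) : a * DG.one e = 0 :=
  DG.mul_ne γ e (by rw [tgt_obj he]; exact h) a _ ha (DG.one_mem e he)

end GradedDiv

/-- The auxiliary relation: there is a morphism `γ : f → e` with `D_γ ≠ 0`. -/
def GDRel {Γ : Type u} {D : Type v} [NonUnitalRing D] (G : Gpd Γ) (DG : GammaRing G D)
    (e f : Γ) : Prop :=
  ∃ (γ : Γ) (a : D), G.tgt γ = e ∧ G.src γ = f ∧ a ∈ DG.grade γ ∧ a ≠ 0

namespace GradedDiv

variable {G : Gpd Γ} {DG : GammaRing G D}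

lemma mem_iSup_grade (x : D) : x ∈ ⨆ γ : Γ, DG.grade γ := by
  rw [DG.grade_iSup]; exact AddSubgroup.mem_top x

lemma grade_induction {C : D → Prop} (x : D)
    (mem : ∀ γ : Γ, ∀ a ∈ DG.grade γ, C a) (zero : C 0)
    (add : ∀ a b, C a → C b → C (a + b)) : C x :=
  AddSubgroup.iSup_induction (C := C) _ (mem_iSup_grade x) mem zero add

lemma biSup_induction {p : Γ → Prop} {S : Γ → AddSubgroup D} {C : D → Prop} {x : D}
    (hx : x ∈ ⨆ (γ : Γ) (_ : p γ), S γ)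
    (mem : ∀ γ, p γ → ∀ a ∈ S γ, C a) (zero : C 0)
    (add : ∀ a b, C a → C b → C (a + b)) : C x := by
  rw [iSup_subtype'] at hx
  exact AddSubgroup.iSup_induction (C := C) _ hx (fun i a ha => mem i.1 i.2 a ha) zero add

lemma rel_one_left {e f : Γ} (h : GDRel G DG e f) : DG.one e ≠ 0 := by
  obtain ⟨γ, a, ht, _, ha, ha0⟩ := h
  intro h0
  exact ha0 (by rw [← one_mul_grade ha ht.symm, h0, zero_mul])

lemma rel_one_right {e f : Γ} (h : GDRel G DG e f) : DG.one f ≠ 0 := by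
  obtain ⟨γ, a, _, hs, ha, ha0⟩ := h
  intro h0
  exact ha0 (by rw [← grade_mul_one ha hs.symm, h0, mul_zero])

lemma rel_to_prim {e f : Γ} (h : GDRel G DG e f) : GrPrimRel G DG e f := by
  obtain ⟨γ, a, ht, hs, ha, ha0⟩ := h
  exact ⟨a, by rw [one_mul_grade ha ht.symm, grade_mul_one ha hs.symm]; exact ha0⟩

lemma prim_to_rel {e f : Γ} (he : G.IsObj e) (hf : G.IsObj f) (h : GrPrimRel G DG e f) :
    GDRel G DG e f := by
  obtain ⟨x, hx⟩ := h
  have key : GDRel G DG e f ∨ DG.one e * x * DG.one f = 0 := by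
    refine grade_induction (DG := DG) (C := fun y => GDRel G DG e f ∨ DG.one e * y * DG.one f = 0) x
      (fun γ a ha => ?_) (Or.inr (by rw [mul_zero, zero_mul])) ?_
    · by_cases h1 : e = G.tgt γ
      · by_cases h2 : G.src γ = f
        · by_cases h3 : a = 0
          · exact Or.inr (by rw [h3, mul_zero, zero_mul])
          · exact Or.inl ⟨γ, a, h1.symm, h2, ha, h3⟩
        · exact Or.inr (by rw [one_mul_grade ha h1, grade_mul_one_ne hf h2 ha])
      · exact Or.inr (by rw [one_mul_grade_ne he h1 ha, zero_mul])
    · rintro a b (h | h) (h' | h')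
      · exact Or.inl h
      · exact Or.inl h
      · exact Or.inl h'
      · exact Or.inr (by rw [mul_add, add_mul, h, h', add_zero])
  exact key.resolve_right hx

lemma rel_refl {e : Γ} (he : G.IsObj e) (h0 : DG.one e ≠ 0) : GDRel G DG e e :=
  ⟨e, DG.one e, tgt_obj he, he, DG.one_mem e he, h0⟩

lemma rel_symm (hdiv : DG.IsGrDivision) {e f : Γ} (h : GDRel G DG e f) :
    GDRel G DG f e := by
  obtain ⟨γ, a, ht, hs, ha, ha0⟩ := h
  obtain ⟨b, hb, hab, hba⟩ := hdiv.2 γ a ha ha0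
  have hb0 : b ≠ 0 := by
    intro h0
    have h1 : DG.one (G.src γ) = 0 := by rw [← hba, h0, zero_mul]
    exact ha0 (by rw [← DG.mul_one' γ a ha, h1, mul_zero])
  exact ⟨G.inv γ, b, by rw [G.tgt_inv, hs], by rw [G.src_inv, ht], hb, hb0⟩

lemma rel_trans (hdiv : DG.IsGrDivision) {e f g : Γ} (h1 : GDRel G DG e f)
    (h2 : GDRel G DG f g) : GDRel G DG e g := by
  obtain ⟨γ, a, ht1, hs1, ha, ha0⟩ := h1
  obtain ⟨δ, c, ht2, hs2, hc, hc0⟩ := h2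
  have hcomp : G.src γ = G.tgt δ := hs1.trans ht2.symm
  refine ⟨G.comp γ δ hcomp, a * c, by rw [G.tgt_comp]; exact ht1,
    by rw [G.src_comp]; exact hs2, DG.mul_mem γ δ hcomp a c ha hc, ?_⟩
  intro h0
  obtain ⟨b, hb, hab, hba⟩ := hdiv.2 γ a ha ha0
  apply hc0
  have h1 : DG.one (G.tgt δ) * c = c := one_mul_grade hc rfl
  rw [← h1, ← hcomp, ← hba, mul_assoc, h0, mul_zero]

end GradedDiv

end Helpers

section Helpers2
open scoped Classical

variable {Γ : Type u} {D : Type v} [NonUnitalRing D] {G : Gpd Γ} {DG : GammaRing G D}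

namespace GradedDiv

lemma classIdeal_def (e : Γ) : ClassIdeal G DG e
    = ⨆ (γ : Γ) (_ : GrPrimRel G DG (G.tgt γ) e ∧ GrPrimRel G DG (G.src γ) e),
        DG.grade γ := rfl

lemma grade_le_classIdeal {e γ : Γ}
    (h : GrPrimRel G DG (G.tgt γ) e ∧ GrPrimRel G DG (G.src γ) e) :
    DG.grade γ ≤ ClassIdeal G DG e := by
  rw [classIdeal_def]
  exact le_iSup₂ (f := fun (γ : Γ) _ => DG.grade γ) γ h

lemma sum_units_mul {S : Finset Γ} (hS : ∀ g ∈ S, G.IsObj g) {γ : Γ} {a : D}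
    (ha : a ∈ DG.grade γ) :
    (∑ g ∈ S, DG.one g) * a = if G.tgt γ ∈ S then a else 0 := by
  rw [Finset.sum_mul]
  have h : ∀ g ∈ S, DG.one g * a = if g = G.tgt γ then a else 0 := by
    intro g hg
    by_cases hgt : g = G.tgt γ
    · rw [if_pos hgt]; exact one_mul_grade ha hgt
    · rw [if_neg hgt]; exact one_mul_grade_ne (hS g hg) hgt ha
  rw [Finset.sum_congr rfl h, Finset.sum_ite_eq' S (G.tgt γ) (fun _ => a)]

lemma sum_units_absorb {S T : Finset Γ} (hT : ∀ g ∈ T, G.IsObj g) (hS : ∀ g ∈ S, G.IsObj g)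
    (hsub : S ⊆ T) {y : D} (hy : (∑ g ∈ S, DG.one g) * y = y) :
    (∑ g ∈ T, DG.one g) * y = y := by
  rw [← hy, ← mul_assoc]
  congr 1
  rw [Finset.mul_sum]
  refine Finset.sum_congr rfl fun g hg => ?_
  rw [sum_units_mul hT (DG.one_mem g (hS g hg)), tgt_obj (hS g hg), if_pos (hsub hg)]

lemma exists_units {e : Γ} (x : D) (hx : x ∈ ClassIdeal G DG e) :
    ∃ S : Finset Γ,
      (∀ g ∈ S, G.IsObj g ∧ GrPrimRel G DG g e ∧ DG.one g ∈ ClassIdeal G DG e) ∧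
      (∑ g ∈ S, DG.one g) * x = x := by
  rw [classIdeal_def] at hx
  refine biSup_induction (C := fun x => ∃ S : Finset Γ,
      (∀ g ∈ S, G.IsObj g ∧ GrPrimRel G DG g e ∧ DG.one g ∈ ClassIdeal G DG e) ∧
      (∑ g ∈ S, DG.one g) * x = x) hx (fun γ hγ a ha => ?_) ?_ ?_
  · refine ⟨{G.tgt γ}, ?_, ?_⟩
    · intro g hg
      rw [Finset.mem_singleton] at hg
      subst hg
      refine ⟨isObj_tgt G γ, hγ.1, grade_le_classIdeal ⟨?_, ?_⟩ (DG.one_mem _ (isObj_tgt G γ))⟩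
      · rw [G.tgt_tgt]; exact hγ.1
      · rw [G.src_tgt]; exact hγ.1
    · rw [Finset.sum_singleton]
      exact one_mul_grade ha rfl
  · exact ⟨∅, by simp, by simp⟩
  · rintro a b ⟨S, hS, hSa⟩ ⟨T, hT, hTb⟩
    refine ⟨S ∪ T, ?_, ?_⟩
    · intro g hg
      rcases Finset.mem_union.mp hg with h | h
      · exact hS g h
      · exact hT g h
    · have hobjU : ∀ g ∈ S ∪ T, G.IsObj g := fun g hg => by
        rcases Finset.mem_union.mp hg with h | h
        · exact (hS g h).1
        · exact (hT g h).1
      rw [mul_add,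
        sum_units_absorb hobjU (fun g hg => (hS g hg).1) Finset.subset_union_left hSa,
        sum_units_absorb hobjU (fun g hg => (hT g hg).1) Finset.subset_union_right hTb]

lemma cond_of_mem (hdiv : DG.IsGrDivision) {e γ : Γ} {a : D} (he : G.IsObj e)
    (ha : a ∈ DG.grade γ) (hmem : a ∈ ClassIdeal G DG e) (ha0 : a ≠ 0) :
    GrPrimRel G DG (G.tgt γ) e ∧ GrPrimRel G DG (G.src γ) e := by
  obtain ⟨S, hS, hsum⟩ := exists_units a hmem
  rw [sum_units_mul (fun g hg => (hS g hg).1) ha] at hsum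
  have htgtS : G.tgt γ ∈ S := by
    by_contra h
    rw [if_neg h] at hsum
    exact ha0 hsum.symm
  have h1 : GrPrimRel G DG (G.tgt γ) e := (hS _ htgtS).2.1
  refine ⟨h1, rel_to_prim (rel_trans hdiv ?_ (prim_to_rel (isObj_tgt G γ) he h1))⟩
  exact rel_symm hdiv ⟨γ, a, rfl, rfl, ha, ha0⟩

lemma orth (hdiv : DG.IsGrDivision) {e f : Γ} (he : G.IsObj e) (hf : G.IsObj f)
    (hef : ¬ GrPrimRel G DG e f) :
    ∀ a ∈ ClassIdeal G DG e, ∀ b ∈ ClassIdeal G DG f, a * b = 0 := by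
  intro a ha
  rw [classIdeal_def] at ha
  refine biSup_induction (C := fun a => ∀ b ∈ ClassIdeal G DG f, a * b = 0) ha
    (fun γ hγ a' ha' => ?_) (fun b _ => zero_mul b)
    (fun x y hx hy b hb => by
      show (x + y) * b = 0
      rw [add_mul, hx b hb, hy b hb, add_zero])
  intro b hb
  rw [classIdeal_def] at hb
  refine biSup_induction (C := fun b => a' * b = 0) hb (fun δ hδ b' hb' => ?_)
    (mul_zero a') (fun x y hx hy => by
      show a' * (x + y) = 0
      rw [mul_add, hx, hy, add_zero])
  by_cases hc : G.src γ = G.tgt δ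
  · exfalso
    apply hef
    have h1 : GDRel G DG e (G.src γ) := rel_symm hdiv (prim_to_rel (isObj_src G γ) he hγ.2)
    have h2 : GDRel G DG (G.src γ) f := by
      rw [hc]; exact prim_to_rel (isObj_tgt G δ) hf hδ.1
    exact rel_to_prim (rel_trans hdiv h1 h2)
  · exact DG.mul_ne γ δ hc a' b' ha' hb'

lemma one_mem_classIdeal {e : Γ} (he : G.IsObj e) (h0 : DG.one e ≠ 0) :
    DG.one e ∈ ClassIdeal G DG e := by
  have hrefl : GrPrimRel G DG e e := rel_to_prim (rel_refl he h0)
  exact grade_le_classIdeal ⟨by rw [tgt_obj he]; exact hrefl, by rw [he]; exact hrefl⟩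
    (DG.one_mem e he)

lemma classIdeal_ne_bot {e : Γ} (he : G.IsObj e) (h0 : DG.one e ≠ 0) :
    ClassIdeal G DG e ≠ ⊥ := by
  intro hbot
  have h1 := one_mem_classIdeal he h0
  rw [hbot, AddSubgroup.mem_bot] at h1
  exact h0 h1

lemma classIdeal_graded (hdiv : DG.IsGrDivision) {e : Γ} (he : G.IsObj e) :
    DG.IsGradedIdeal (ClassIdeal G DG e) := by
  constructor
  · intro a ha r
    rw [classIdeal_def] at ha
    refine biSup_induction (C := fun a => ∀ r : D,
        a * r ∈ ClassIdeal G DG e ∧ r * a ∈ ClassIdeal G DG e) ha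
      (fun γ hγ a' ha' => ?_) (fun r => by
        show (0 : D) * r ∈ _ ∧ r * (0 : D) ∈ _
        rw [zero_mul, mul_zero]; exact ⟨zero_mem _, zero_mem _⟩)
      (fun x y hx hy r => by
        show (x + y) * r ∈ _ ∧ r * (x + y) ∈ _
        rw [add_mul, mul_add]
        exact ⟨add_mem (hx r).1 (hy r).1, add_mem (hx r).2 (hy r).2⟩) r
    intro s
    refine grade_induction (DG := DG) (C := fun s =>
        a' * s ∈ ClassIdeal G DG e ∧ s * a' ∈ ClassIdeal G DG e) s
      (fun δ x hx => ?_) (by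
        show a' * (0 : D) ∈ _ ∧ (0 : D) * a' ∈ _
        rw [mul_zero, zero_mul]; exact ⟨zero_mem _, zero_mem _⟩)
      (fun x y hx hy => by
        show a' * (x + y) ∈ _ ∧ (x + y) * a' ∈ _
        rw [mul_add, add_mul]
        exact ⟨add_mem hx.1 hy.1, add_mem hx.2 hy.2⟩)
    show a' * x ∈ ClassIdeal G DG e ∧ x * a' ∈ ClassIdeal G DG e
    by_cases hx0 : x = 0
    · rw [hx0, mul_zero, zero_mul]; exact ⟨zero_mem _, zero_mem _⟩
    have hxrel : GDRel G DG (G.tgt δ) (G.src δ) := ⟨δ, x, rfl, rfl, hx, hx0⟩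
    constructor
    · by_cases hc : G.src γ = G.tgt δ
      · refine grade_le_classIdeal ⟨?_, ?_⟩ (DG.mul_mem γ δ hc a' x ha' hx)
        · rw [G.tgt_comp]; exact hγ.1
        · rw [G.src_comp]
          refine rel_to_prim (rel_trans hdiv (rel_symm hdiv hxrel) ?_)
          rw [← hc]
          exact prim_to_rel (isObj_src G γ) he hγ.2
      · rw [DG.mul_ne γ δ hc a' x ha' hx]; exact zero_mem _
    · by_cases hc : G.src δ = G.tgt γ
      · refine grade_le_classIdeal ⟨?_, ?_⟩ (DG.mul_mem δ γ hc x a' hx ha')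
        · rw [G.tgt_comp]
          refine rel_to_prim (rel_trans hdiv hxrel ?_)
          rw [hc]
          exact prim_to_rel (isObj_tgt G γ) he hγ.1
        · rw [G.src_comp]; exact hγ.2
      · rw [DG.mul_ne δ γ hc x a' hx ha']; exact zero_mem _
  · exact iSup₂_le fun γ hγ =>
      le_trans (le_inf le_rfl (grade_le_classIdeal hγ))
        (le_iSup (fun γ => DG.grade γ ⊓ ClassIdeal G DG e) γ)

end GradedDiv

end Helpers2

section Helpers3
open scoped Classical

variable {Γ : Type u} {D : Type v} [NonUnitalRing D] {G : Gpd Γ} {DG : GammaRing G D}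

namespace GradedDiv

lemma one_src_ne_zero {γ : Γ} {a : D} (ha : a ∈ DG.grade γ) (ha0 : a ≠ 0) :
    DG.one (G.src γ) ≠ 0 :=
  fun h => ha0 (by rw [← DG.mul_one' γ a ha, h, mul_zero])

lemma one_tgt_ne_zero {γ : Γ} {a : D} (ha : a ∈ DG.grade γ) (ha0 : a ≠ 0) :
    DG.one (G.tgt γ) ≠ 0 :=
  fun h => ha0 (by rw [← DG.one_mul' γ a ha, h, zero_mul])

lemma exists_homog (hdiv : DG.IsGrDivision) :
    ∃ (γ : Γ) (a : D), a ∈ DG.grade γ ∧ a ≠ 0 := by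
  obtain ⟨a, ha⟩ := hdiv.1
  have key : a = 0 ∨ ∃ (γ : Γ) (b : D), b ∈ DG.grade γ ∧ b ≠ 0 := by
    refine grade_induction (DG := DG)
      (C := fun x => x = 0 ∨ ∃ (γ : Γ) (b : D), b ∈ DG.grade γ ∧ b ≠ 0) a
      (fun γ b hb => ?_) (Or.inl rfl) ?_
    · by_cases hb0 : b = 0
      · exact Or.inl hb0
      · exact Or.inr ⟨γ, b, hb, hb0⟩
    · rintro x y (hx | hx) (hy | hy)
      · exact Or.inl (by rw [hx, hy, add_zero])
      · exact Or.inr hy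
      · exact Or.inr hx
      · exact Or.inr hx
  exact key.resolve_left ha

lemma exists_ne_zero_of_ne_bot {P : AddSubgroup D} (h : P ≠ ⊥) : ∃ x ∈ P, x ≠ 0 := by
  by_contra hcon
  push_neg at hcon
  exact h ((AddSubgroup.eq_bot_iff_forall P).mpr hcon)

lemma exists_homog_mem {P : AddSubgroup D}
    (hgr : P ≤ ⨆ γ : Γ, (DG.grade γ ⊓ P)) {x : D} (hx : x ∈ P) (hx0 : x ≠ 0) :
    ∃ (γ : Γ) (a : D), a ∈ DG.grade γ ∧ a ∈ P ∧ a ≠ 0 := by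
  have key : x = 0 ∨ ∃ (γ : Γ) (a : D), a ∈ DG.grade γ ∧ a ∈ P ∧ a ≠ 0 := by
    refine AddSubgroup.iSup_induction
      (C := fun x => x = 0 ∨ ∃ (γ : Γ) (a : D), a ∈ DG.grade γ ∧ a ∈ P ∧ a ≠ 0)
      _ (hgr hx) (fun γ p hp => ?_) (Or.inl rfl) ?_
    · by_cases hp0 : p = 0
      · exact Or.inl hp0
      · exact Or.inr ⟨γ, p, hp.1, hp.2, hp0⟩
    · rintro y z (hy | hy) (hz | hz)
      · exact Or.inl (by rw [hy, hz, add_zero])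
      · exact Or.inr hz
      · exact Or.inr hy
      · exact Or.inr hy
  exact key.resolve_left hx0

lemma sup_classIdeal_top :
    (⨆ (e : Γ) (_ : G.IsObj e ∧ DG.one e ≠ 0), ClassIdeal G DG e) = ⊤ := by
  rw [eq_top_iff]
  intro x _
  refine grade_induction (DG := DG)
    (C := fun x => x ∈ ⨆ (e : Γ) (_ : G.IsObj e ∧ DG.one e ≠ 0), ClassIdeal G DG e) x
    (fun γ a ha => ?_) (zero_mem _) (fun a b ha hb => add_mem ha hb)
  show a ∈ _
  by_cases ha0 : a = 0
  · rw [ha0]; exact zero_mem _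
  have h1 : DG.one (G.src γ) ≠ 0 := one_src_ne_zero ha ha0
  have hv : GDRel G DG (G.tgt γ) (G.src γ) := ⟨γ, a, rfl, rfl, ha, ha0⟩
  have hmem : a ∈ ClassIdeal G DG (G.src γ) :=
    grade_le_classIdeal ⟨rel_to_prim hv, rel_to_prim (rel_refl (isObj_src G γ) h1)⟩ ha
  exact le_iSup₂ (f := fun (e : Γ) (_ : G.IsObj e ∧ DG.one e ≠ 0) => ClassIdeal G DG e)
    (G.src γ) ⟨isObj_src G γ, h1⟩ hmem

lemma classIdeal_indep (hdiv : DG.IsGrDivision) {e : Γ} (he : G.IsObj e) :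
    ClassIdeal G DG e ⊓
      (⨆ (f : Γ) (_ : (G.IsObj f ∧ DG.one f ≠ 0) ∧ ¬ GrPrimRel G DG e f),
        ClassIdeal G DG f) = ⊥ := by
  refine (AddSubgroup.eq_bot_iff_forall _).mpr fun x hx => ?_
  obtain ⟨hx1, hx2⟩ := AddSubgroup.mem_inf.mp hx
  obtain ⟨S, hS, hsum⟩ := exists_units x hx1
  have hzero : ∀ u ∈ ClassIdeal G DG e, u * x = 0 := by
    refine biSup_induction (C := fun x => ∀ u ∈ ClassIdeal G DG e, u * x = 0) hx2
      (fun f hf a haf u hu => orth hdiv he hf.1.1 hf.2 u hu a haf)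
      (fun u _ => mul_zero u)
      (fun a b h1 h2 u hu => by
        show u * (a + b) = 0
        rw [mul_add, h1 u hu, h2 u hu, add_zero])
  have husum : (∑ g ∈ S, DG.one g) ∈ ClassIdeal G DG e :=
    sum_mem fun g hg => (hS g hg).2.2
  rw [← hsum]
  exact hzero _ husum

lemma classIdeal_division (hdiv : DG.IsGrDivision) {e : Γ} (he : G.IsObj e)
    (h0 : DG.one e ≠ 0) : DG.SubringGrDivision (ClassIdeal G DG e) := by
  refine ⟨⟨DG.one e, one_mem_classIdeal he h0, h0⟩, ?_⟩
  intro γ a ha hamem ha0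
  obtain ⟨h1, h2⟩ := cond_of_mem hdiv he ha hamem ha0
  have hto : DG.one (G.tgt γ) ∈ ClassIdeal G DG e :=
    grade_le_classIdeal ⟨by rw [G.tgt_tgt]; exact h1, by rw [G.src_tgt]; exact h1⟩
      (DG.one_mem _ (isObj_tgt G γ))
  have hso : DG.one (G.src γ) ∈ ClassIdeal G DG e :=
    grade_le_classIdeal ⟨by rw [G.tgt_src]; exact h2, by rw [G.src_src]; exact h2⟩
      (DG.one_mem _ (isObj_src G γ))
  obtain ⟨b, hb, hab, hba⟩ := hdiv.2 γ a ha ha0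
  have hbmem : b ∈ ClassIdeal G DG e :=
    grade_le_classIdeal ⟨by rw [G.tgt_inv]; exact h2, by rw [G.src_inv]; exact h1⟩ hb
  exact ⟨hto, hso, b, hb, hbmem, hab, hba⟩

lemma classIdeal_simple (hdiv : DG.IsGrDivision) {e : Γ} (he : G.IsObj e)
    (h0 : DG.one e ≠ 0) : DG.SubringGrSimple (ClassIdeal G DG e) := by
  refine ⟨classIdeal_ne_bot he h0, fun P hP => ?_⟩
  obtain ⟨hPI, hPclosed, hPgr⟩ := hP
  by_cases hPb : P = ⊥
  · exact Or.inl hPb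
  right
  obtain ⟨x, hxP, hx0⟩ := exists_ne_zero_of_ne_bot hPb
  obtain ⟨γ, p, hpγ, hpP, hp0⟩ := exists_homog_mem hPgr hxP hx0
  have hcond := cond_of_mem hdiv he hpγ (hPI hpP) hp0
  obtain ⟨q, hq, hpq, hqp⟩ := hdiv.2 γ p hpγ hp0
  have hqI : q ∈ ClassIdeal G DG e :=
    grade_le_classIdeal ⟨by rw [G.tgt_inv]; exact hcond.2, by rw [G.src_inv]; exact hcond.1⟩ hq
  have h1t : DG.one (G.tgt γ) ∈ P := by
    rw [← hpq]; exact (hPclosed p hpP q hqI).1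
  have hle : ClassIdeal G DG e ≤ P := by
    intro y hy
    rw [classIdeal_def] at hy
    refine biSup_induction (C := fun y => y ∈ P) hy (fun δ hδ x hx => ?_) (zero_mem P)
      (fun a b ha hb => add_mem ha hb)
    show x ∈ P
    by_cases hx0' : x = 0
    · rw [hx0']; exact zero_mem P
    have hr1 : GDRel G DG (G.tgt δ) e := prim_to_rel (isObj_tgt G δ) he hδ.1
    have hr2 : GDRel G DG e (G.tgt γ) := rel_symm hdiv (prim_to_rel (isObj_tgt G γ) he hcond.1)
    obtain ⟨η, c, hηt, hηs, hc, hc0⟩ := rel_trans hdiv hr1 hr2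
    have hcI : c ∈ ClassIdeal G DG e :=
      grade_le_classIdeal ⟨by rw [hηt]; exact hδ.1, by rw [hηs]; exact hcond.1⟩ hc
    have hcP : c ∈ P := by
      have h := (hPclosed _ h1t c hcI).2
      rwa [grade_mul_one hc hηs.symm] at h
    obtain ⟨c', hc', hcc', hc'c⟩ := hdiv.2 η c hc hc0
    have hc'I : c' ∈ ClassIdeal G DG e :=
      grade_le_classIdeal ⟨by rw [G.tgt_inv, hηs]; exact hcond.1,
        by rw [G.src_inv, hηt]; exact hδ.1⟩ hc'
    have h1δ : DG.one (G.tgt δ) ∈ P := by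
      have h := (hPclosed c hcP c' hc'I).1
      rwa [hcc', hηt] at h
    have hxI : x ∈ ClassIdeal G DG e := grade_le_classIdeal hδ hx
    have h := (hPclosed _ h1δ x hxI).1
    rwa [one_mul_grade hx rfl] at h
  exact le_antisymm hPI hle

lemma grSimple_iff (hdiv : DG.IsGrDivision) :
    DG.IsGrSimpleRing ↔ ((∃ e : Γ, G.IsObj e ∧ DG.one e ≠ 0) ∧
      ∀ e f : Γ, G.IsObj e → G.IsObj f → DG.one e ≠ 0 → DG.one f ≠ 0 →
        GrPrimRel G DG e f) := by
  constructor
  · intro hs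
    obtain ⟨γ, a, ha, ha0⟩ := exists_homog hdiv
    refine ⟨⟨G.tgt γ, isObj_tgt G γ, one_tgt_ne_zero ha ha0⟩, fun e f he hf h0e h0f => ?_⟩
    have htop : ClassIdeal G DG e = ⊤ :=
      (hs.2 (ClassIdeal G DG e) (classIdeal_graded hdiv he)).resolve_left
        (classIdeal_ne_bot he h0e)
    have hfmem : DG.one f ∈ ClassIdeal G DG e := htop ▸ AddSubgroup.mem_top _
    have hcond := cond_of_mem hdiv he (DG.one_mem f hf) hfmem h0f
    have h1 : GrPrimRel G DG f e := by rw [← tgt_obj hf]; exact hcond.1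
    exact rel_to_prim (rel_symm hdiv (prim_to_rel hf he h1))
  · rintro ⟨⟨e0, he0, h00⟩, hall⟩
    refine ⟨hdiv.1, fun I hI => ?_⟩
    by_cases hIb : I = ⊥
    · exact Or.inl hIb
    right
    obtain ⟨x0, hx0I, hx00⟩ := exists_ne_zero_of_ne_bot hIb
    obtain ⟨γ, a, haγ, haI, ha0⟩ := exists_homog_mem hI.2 hx0I hx00
    obtain ⟨b, hb, hab, hba⟩ := hdiv.2 γ a haγ ha0
    have h1t : DG.one (G.tgt γ) ∈ I := by rw [← hab]; exact (hI.1 a haI b).1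
    have h1t0 : DG.one (G.tgt γ) ≠ 0 := one_tgt_ne_zero haγ ha0
    rw [eq_top_iff]
    intro x _
    refine grade_induction (DG := DG) (C := fun x => x ∈ I) x (fun δ y hy => ?_)
      (zero_mem I) (fun a b ha hb => add_mem ha hb)
    show y ∈ I
    by_cases hy0 : y = 0
    · rw [hy0]; exact zero_mem I
    have h1δ0 : DG.one (G.tgt δ) ≠ 0 := one_tgt_ne_zero hy hy0
    have hrel : GrPrimRel G DG (G.tgt δ) (G.tgt γ) :=
      hall _ _ (isObj_tgt G δ) (isObj_tgt G γ) h1δ0 h1t0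
    obtain ⟨η, c, hηt, hηs, hc, hc0⟩ := prim_to_rel (isObj_tgt G δ) (isObj_tgt G γ) hrel
    have hcI : c ∈ I := by
      have h := (hI.1 _ h1t c).2
      rwa [grade_mul_one hc hηs.symm] at h
    obtain ⟨c', hc', hcc', hc'c⟩ := hdiv.2 η c hc hc0
    have h1δ : DG.one (G.tgt δ) ∈ I := by
      have h := (hI.1 c hcI c').1
      rwa [hcc', hηt] at h
    have h := (hI.1 _ h1δ y).1
    rwa [one_mul_grade hy rfl] at h

lemma grPrime_iff_grSimple (hdiv : DG.IsGrDivision) :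
    DG.IsGrPrime ↔ DG.IsGrSimpleRing := by
  constructor
  · intro hp
    refine (grSimple_iff hdiv).mpr ⟨?_, ?_⟩
    · obtain ⟨γ, a, ha, ha0⟩ := exists_homog hdiv
      exact ⟨G.tgt γ, isObj_tgt G γ, one_tgt_ne_zero ha ha0⟩
    · intro e f he hf h0e h0f
      by_contra hef
      obtain ⟨a, haI, b, hbJ, hab⟩ := hp.2 (ClassIdeal G DG e) (ClassIdeal G DG f)
        (classIdeal_graded hdiv he) (classIdeal_graded hdiv hf)
        (classIdeal_ne_bot he h0e) (classIdeal_ne_bot hf h0f)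
      exact hab (orth hdiv he hf hef a haI b hbJ)
  · intro hs
    refine ⟨hdiv.1, fun I J hI hJ hI0 hJ0 => ?_⟩
    have hItop := (hs.2 I hI).resolve_left hI0
    have hJtop := (hs.2 J hJ).resolve_left hJ0
    obtain ⟨γ, a, ha, ha0⟩ := exists_homog hdiv
    obtain ⟨b, hb, hab, hba⟩ := hdiv.2 γ a ha ha0
    refine ⟨a, hItop ▸ AddSubgroup.mem_top a, b, hJtop ▸ AddSubgroup.mem_top b, ?_⟩
    rw [hab]
    exact one_tgt_ne_zero ha ha0

end GradedDiv

end Helpers3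

/-- decomposition of a graded division ring into gr-simple ones.
Let `D` be a `Γ`-graded division ring, and consider the gr-primality relation
`e ∼ f ⟺ 1_e D 1_f ≠ 0` on `Γ'₀(D) = {e ∈ Γ₀ : 1_e ≠ 0}`.  Then:
(1) `∼` is an equivalence relation on `Γ'₀(D)`;
(2) each `D_{[e]}` is a nonzero graded ideal of `D`, and `D_{[e]} D_{[f]} = 0` for
    distinct classes;
(3) `D` is the direct sum of the `D_{[e]}`, and each `D_{[e]}` is a gr-simple
    gr-division ring;
(4) `D` is gr-prime iff `D` is gr-simple iff there is exactly one equivalence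
    class. -/
theorem graded_division_ring_class_decomposition
    {Γ : Type u} (G : Gpd Γ) {D : Type v} [NonUnitalRing D] (DG : GammaRing G D)
    (hdiv : DG.IsGrDivision) :
    -- (1) equivalence relation on Γ'₀(D)
    ((∀ e : Γ, G.IsObj e → DG.one e ≠ 0 → GrPrimRel G DG e e) ∧
     (∀ e f : Γ, G.IsObj e → G.IsObj f → DG.one e ≠ 0 → DG.one f ≠ 0 →
        GrPrimRel G DG e f → GrPrimRel G DG f e) ∧
     (∀ e f g : Γ, G.IsObj e → G.IsObj f → G.IsObj g →
        DG.one e ≠ 0 → DG.one f ≠ 0 → DG.one g ≠ 0 →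
        GrPrimRel G DG e f → GrPrimRel G DG f g → GrPrimRel G DG e g)) ∧
    -- (2)
    ((∀ e : Γ, G.IsObj e → DG.one e ≠ 0 →
        ClassIdeal G DG e ≠ ⊥ ∧ DG.IsGradedIdeal (ClassIdeal G DG e)) ∧
     (∀ e f : Γ, G.IsObj e → G.IsObj f → DG.one e ≠ 0 → DG.one f ≠ 0 →
        ¬ GrPrimRel G DG e f →
        ∀ a ∈ ClassIdeal G DG e, ∀ b ∈ ClassIdeal G DG f, a * b = 0)) ∧
    -- (3)
    ((⨆ (e : Γ) (_ : G.IsObj e ∧ DG.one e ≠ 0), ClassIdeal G DG e) = ⊤ ∧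
     (∀ e : Γ, G.IsObj e → DG.one e ≠ 0 →
        ClassIdeal G DG e ⊓
          (⨆ (f : Γ) (_ : (G.IsObj f ∧ DG.one f ≠ 0) ∧ ¬ GrPrimRel G DG e f),
            ClassIdeal G DG f) = ⊥) ∧
     (∀ e : Γ, G.IsObj e → DG.one e ≠ 0 →
        DG.SubringGrSimple (ClassIdeal G DG e) ∧
          DG.SubringGrDivision (ClassIdeal G DG e))) ∧
    -- (4)
    ((DG.IsGrPrime ↔ DG.IsGrSimpleRing) ∧
     (DG.IsGrSimpleRing ↔ ((∃ e : Γ, G.IsObj e ∧ DG.one e ≠ 0) ∧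
        ∀ e f : Γ, G.IsObj e → G.IsObj f → DG.one e ≠ 0 → DG.one f ≠ 0 →
          GrPrimRel G DG e f))) := by
  refine ⟨⟨fun e he h0 => GradedDiv.rel_to_prim (GradedDiv.rel_refl he h0),
    fun e f he hf _ _ h =>
      GradedDiv.rel_to_prim (GradedDiv.rel_symm hdiv (GradedDiv.prim_to_rel he hf h)),
    fun e f g he hf hg _ _ _ h1 h2 =>
      GradedDiv.rel_to_prim (GradedDiv.rel_trans hdiv (GradedDiv.prim_to_rel he hf h1)
        (GradedDiv.prim_to_rel hf hg h2))⟩,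
    ⟨fun e he h0 => ⟨GradedDiv.classIdeal_ne_bot he h0, GradedDiv.classIdeal_graded hdiv he⟩,
     fun e f he hf _ _ hef => GradedDiv.orth hdiv he hf hef⟩,
    ⟨GradedDiv.sup_classIdeal_top,
     fun e he _ => GradedDiv.classIdeal_indep hdiv he,
     fun e he h0 => ⟨GradedDiv.classIdeal_simple hdiv he h0,
       GradedDiv.classIdeal_division hdiv he h0⟩⟩,
    GradedDiv.grPrime_iff_grSimple hdiv,
    GradedDiv.grSimple_iff hdiv⟩
end

section
/- Let Γ be a groupoid and R a Γ-graded ring (not necessarily object unital) that is right gr-primitive. Let S be a faithful gr-simple Γ-graded right R-module and D := END_R(S). Then D is a Γ-graded division ring, S is naturally a Γ-graded left D-module, and the map φ: R → END_D(S) given by φ(r) = (x ↦ xr) is an injective gr-homomorphism of Γ-graded rings whose image is a gr-dense subring of END_D(S). -/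
set_option autoImplicit false

noncomputable section

universe u v w x y

/-- A `Γ`-graded ring structure on the (possibly non-unital) ring `R`, not assumed
to be object unital. -/
structure GRingNU {Γ : Type u} (G : Gpd Γ) (R : Type v) [NonUnitalRing R] where
  grade : Γ → AddSubgroup R
  grade_iSup : (⨆ γ : Γ, grade γ) = ⊤
  grade_indep : ∀ γ : Γ, grade γ ⊓ (⨆ (δ : Γ) (_ : δ ≠ γ), grade δ) = ⊥
  mul_mem : ∀ (γ δ : Γ) (h : G.src γ = G.tgt δ) (a b : R),
    a ∈ grade γ → b ∈ grade δ → a * b ∈ grade (G.comp γ δ h)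
  mul_ne : ∀ (γ δ : Γ), G.src γ ≠ G.tgt δ → ∀ (a b : R),
    a ∈ grade γ → b ∈ grade δ → a * b = 0

/-- A `Γ`-graded right module (not assumed unital) over the `Γ`-graded ring `RG`. -/
structure GModNU {Γ : Type u} {G : Gpd Γ} {R : Type v} [NonUnitalRing R]
    (RG : GRingNU G R) (M : Type w) [AddCommGroup M] where
  smul : M → R → M
  smul_add : ∀ (m : M) (a b : R), smul m (a + b) = smul m a + smul m b
  add_smul : ∀ (m n : M) (a : R), smul (m + n) a = smul m a + smul n a
  smul_mul : ∀ (m : M) (a b : R), smul m (a * b) = smul (smul m a) b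
  grade : Γ → AddSubgroup M
  grade_iSup : (⨆ γ : Γ, grade γ) = ⊤
  grade_indep : ∀ γ : Γ, grade γ ⊓ (⨆ (δ : Γ) (_ : δ ≠ γ), grade δ) = ⊥
  smul_mem : ∀ (σ τ : Γ) (h : G.src σ = G.tgt τ) (m : M) (a : R),
    m ∈ grade σ → a ∈ RG.grade τ → smul m a ∈ grade (G.comp σ τ h)
  smul_ne : ∀ (σ τ : Γ), G.src σ ≠ G.tgt τ → ∀ (m : M) (a : R),
    m ∈ grade σ → a ∈ RG.grade τ → smul m a = 0

namespace GModNU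

variable {Γ : Type u} {G : Gpd Γ} {R : Type v} [NonUnitalRing R] {RG : GRingNU G R}
  {M : Type w} [AddCommGroup M] (Mod : GModNU RG M)

/-- `shiftGrade σ γ` is the homogeneous component `M_{σγ}` (zero when undefined). -/
def shiftGrade (σ γ : Γ) : AddSubgroup M := (G.mul? σ γ).elim ⊥ Mod.grade

/-- `N` is a graded submodule of `M`. -/
def IsGradedSub (N : AddSubgroup M) : Prop :=
  (∀ m ∈ N, ∀ a : R, Mod.smul m a ∈ N) ∧ N ≤ ⨆ γ : Γ, (Mod.grade γ ⊓ N)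

/-- `M` is gr-simple: `MR ≠ 0` and its only graded submodules are `0` and `M`. -/
def IsGrSimple : Prop :=
  (∃ (m : M) (a : R), Mod.smul m a ≠ 0) ∧
    ∀ N : AddSubgroup M, Mod.IsGradedSub N → N = ⊥ ∨ N = ⊤

/-- `M` is a faithful `R`-module. -/
def IsFaithful : Prop := ∀ a : R, (∀ m : M, Mod.smul m a = 0) → a = 0

/-- The submodule `M(e) = ⊕_{r(γ) = e} M_γ`. -/
def eComp (e : Γ) : AddSubgroup M := ⨆ (γ : Γ) (_ : G.tgt γ = e), Mod.grade γ

/-- `M` is `Γ₀`-artinian. -/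
def IsGamma0Artinian : Prop :=
  ∀ e : Γ, G.IsObj e → ∀ f : ℕ → AddSubgroup M,
    (∀ n, Mod.IsGradedSub (f n) ∧ f n ≤ Mod.eComp e) →
    (∀ n, f (n + 1) ≤ f n) → ∃ n, ∀ k, n ≤ k → f k = f n

/-- `HomGrade γ` is the homogeneous component `HOM_R(M,M)_γ` of the graded
endomorphism ring `D = END_R(M)`. -/
def HomGrade (γ : Γ) : Set (M →+ M) :=
  {g | (∀ (m : M) (a : R), g (Mod.smul m a) = Mod.smul (g m) a) ∧
       ∀ (σ : Γ) (m : M), m ∈ Mod.grade σ → g m ∈ Mod.shiftGrade γ σ}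

/-- The underlying additive subgroup of `D = END_R(M) = ⊕_γ HOM_R(M,M)_γ`. -/
def EndR : AddSubgroup (M →+ M) := AddSubgroup.closure (⋃ γ : Γ, Mod.HomGrade γ)

/-- Right multiplication `φ(r) = (x ↦ xr)`. -/
def rmul (r : R) : M →+ M :=
  AddMonoidHom.mk' (fun m => Mod.smul m r) (fun m n => Mod.add_smul m n r)

/-- The homogeneous component of degree `γ` of `END_D(M)`, where `D = END_R(M)`
acts on `M` on the left:  additive endomorphisms commuting with all of `D` which
map `M_σ` into `M_{σγ}` for all `σ`. -/
def DEndGrade (γ : Γ) : Set (M →+ M) :=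
  {t | (∀ (δ : Γ) (g : M →+ M), g ∈ Mod.HomGrade δ → ∀ m : M, t (g m) = g (t m)) ∧
       ∀ (σ : Γ) (m : M), m ∈ Mod.grade σ → t m ∈ Mod.shiftGrade σ γ}

/-- The tuple `u` of homogeneous elements (of degrees `γs`) is pseudo-linearly
independent over `D = END_R(M)`: the only family `(a_i)` with `a_i ∈ D 1_{r(γs i)}`
and `∑ a_i u_i = 0` is the zero family. -/
def PLIoverD {n : ℕ} (γs : Fin n → Γ) (u : Fin n → M) : Prop :=
  (∀ i, u i ∈ Mod.grade (γs i)) ∧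
  ∀ a : Fin n → (M →+ M),
    (∀ i, a i ∈ Mod.EndR ∧
      ∀ (σ : Γ) (m : M), m ∈ Mod.grade σ → G.tgt σ ≠ G.tgt (γs i) → a i m = 0) →
    (∑ i, a i (u i)) = 0 → ∀ i, a i = 0

end GModNU

namespace GRingNU

variable {Γ : Type u} {G : Gpd Γ} {R : Type v} [NonUnitalRing R] (RG : GRingNU G R)

/-- The (right) regular graded module `R_R`. -/
def regular : GModNU RG R where
  smul := fun m a => m * a
  smul_add := fun m a b => mul_add m a b
  add_smul := fun m n a => add_mul m n a
  smul_mul := fun m a b => (mul_assoc m a b).symm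
  grade := RG.grade
  grade_iSup := RG.grade_iSup
  grade_indep := RG.grade_indep
  smul_mem := RG.mul_mem
  smul_ne := RG.mul_ne

/-- `I` is a graded (two-sided) ideal of `R`. -/
def IsGradedIdeal (I : AddSubgroup R) : Prop :=
  (∀ a ∈ I, ∀ r : R, a * r ∈ I ∧ r * a ∈ I) ∧ I ≤ ⨆ γ : Γ, (RG.grade γ ⊓ I)

/-- `R` is a gr-simple ring: `R² ≠ 0` and the only graded ideals are `0` and `R`. -/
def IsGrSimpleRing : Prop :=
  (∃ a b : R, a * b ≠ 0) ∧ ∀ I : AddSubgroup R, RG.IsGradedIdeal I → I = ⊥ ∨ I = ⊤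

/-- `R` is right `Γ₀`-artinian. -/
def IsRightGamma0Artinian : Prop := RG.regular.IsGamma0Artinian

end GRingNU

/-- A bundled `Γ`-graded right module (not assumed unital) over `RG`. -/
structure BModNU.{u', v', w'} {Γ : Type u'} {G : Gpd Γ} {R : Type v'} [NonUnitalRing R]
    (RG : GRingNU G R) where
  carrier : Type w'
  [acg : AddCommGroup carrier]
  str : GModNU RG carrier

attribute [instance] BModNU.acg

/-- `R` is right gr-primitive: there is a faithful gr-simple graded right
`R`-module. -/
def GRingNU.IsRightGrPrimitive.{u', v', w'} {Γ : Type u'} {G : Gpd Γ} {R : Type v'}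
    [NonUnitalRing R] (RG : GRingNU G R) : Prop :=
  ∃ S : BModNU.{u', v', w'} RG, S.str.IsGrSimple ∧ S.str.IsFaithful


noncomputable section GradedAuxSection

namespace GradedAux

variable {Γ : Type u}

theorem comp_congr (G : Gpd Γ) {γ γ' δ δ' : Γ} (hγ : γ = γ') (hδ : δ = δ')
    (h : G.src γ = G.tgt δ) (h' : G.src γ' = G.tgt δ') :
    G.comp γ δ h = G.comp γ' δ' h' := by subst hγ; subst hδ; rfl

theorem comp_assoc' (G : Gpd Γ) (γ δ ε : Γ) (h₁ : G.src γ = G.tgt δ) (h₂ : G.src δ = G.tgt ε)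
    (h₃ : G.src (G.comp γ δ h₁) = G.tgt ε) (h₄ : G.src γ = G.tgt (G.comp δ ε h₂)) :
    G.comp (G.comp γ δ h₁) ε h₃ = G.comp γ (G.comp δ ε h₂) h₄ :=
  G.comp_assoc γ δ ε h₁ h₂

theorem inv_comp_comp (G : Gpd Γ) (γ δ : Γ) (h : G.src γ = G.tgt δ)
    (h2 : G.src (G.inv γ) = G.tgt (G.comp γ δ h)) :
    G.comp (G.inv γ) (G.comp γ δ h) h2 = δ := by
  rw [← comp_assoc' G (G.inv γ) γ δ (G.src_inv γ) h
    (by rw [G.src_comp]; exact h) h2]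
  rw [comp_congr G (G.inv_comp γ) rfl (by rw [G.src_comp]; exact h) (by rw [G.src_src]; exact h)]
  rw [comp_congr G h rfl (by rw [G.src_src]; exact h) (G.src_tgt δ)]
  exact G.id_comp δ

theorem comp_left_cancel (G : Gpd Γ) {γ δ δ' : Γ} (h : G.src γ = G.tgt δ)
    (h' : G.src γ = G.tgt δ') (e : G.comp γ δ h = G.comp γ δ' h') : δ = δ' := by
  have h2 : G.src (G.inv γ) = G.tgt (G.comp γ δ h) := by rw [G.src_inv, G.tgt_comp]
  rw [← inv_comp_comp G γ δ h h2, ← inv_comp_comp G γ δ' h' (by rw [G.src_inv, G.tgt_comp])]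
  exact comp_congr G rfl e _ _

theorem comp_inv_comp (G : Gpd Γ) (γ δ : Γ) (h : G.src γ = G.src δ)
    (h1 : G.src γ = G.tgt (G.inv δ)) (h2 : G.src (G.comp γ (G.inv δ) h1) = G.tgt δ) :
    G.comp (G.comp γ (G.inv δ) h1) δ h2 = γ := by
  rw [comp_assoc' G γ (G.inv δ) δ h1 (G.src_inv δ) h2 (by rw [G.tgt_comp]; exact h1)]
  rw [comp_congr G rfl (G.inv_comp δ) (by rw [G.tgt_comp]; exact h1)
    (by rw [G.tgt_src]; exact h)]
  rw [comp_congr G (rfl : γ = γ) h.symm (by rw [G.tgt_src]; exact h) (G.tgt_src γ).symm]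
  exact G.comp_id γ

theorem comp_comp_inv (G : Gpd Γ) (γ δ : Γ) (h : G.src γ = G.tgt δ)
    (h2 : G.src (G.comp γ δ h) = G.tgt (G.inv δ)) :
    G.comp (G.comp γ δ h) (G.inv δ) h2 = γ := by
  rw [comp_assoc' G γ δ (G.inv δ) h (G.tgt_inv δ).symm h2
    (by rw [G.tgt_comp]; exact h)]
  rw [comp_congr G rfl (G.comp_inv δ) (by rw [G.tgt_comp]; exact h)
    (by rw [G.tgt_tgt]; exact h)]
  rw [comp_congr G (rfl : γ = γ) h.symm (by rw [G.tgt_tgt]; exact h) (G.tgt_src γ).symm]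
  exact G.comp_id γ

theorem comp_right_cancel (G : Gpd Γ) {γ γ' δ : Γ} (h : G.src γ = G.tgt δ)
    (h' : G.src γ' = G.tgt δ) (e : G.comp γ δ h = G.comp γ' δ h') : γ = γ' := by
  have h2 : G.src (G.comp γ δ h) = G.tgt (G.inv δ) := by rw [G.src_comp, G.tgt_inv]
  rw [← comp_comp_inv G γ δ h h2, ← comp_comp_inv G γ' δ h' (by rw [G.src_comp, G.tgt_inv])]
  exact comp_congr G e rfl _ _

section Grading

variable {X : Type*} [AddCommGroup X]

/-- The supremum of all homogeneous components other than `γ`. -/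
def otherSup (gr : Γ → AddSubgroup X) (γ : Γ) : AddSubgroup X := ⨆ (δ : Γ) (_ : δ ≠ γ), gr δ

theorem mem_otherSup {gr : Γ → AddSubgroup X} {δ γ : Γ} {x : X} (hx : x ∈ gr δ) (hne : δ ≠ γ) :
    x ∈ otherSup gr γ :=
  AddSubgroup.mem_iSup_of_mem δ (AddSubgroup.mem_iSup_of_mem hne hx)

theorem grade_cancel {gr : Γ → AddSubgroup X}
    (hind : ∀ γ : Γ, gr γ ⊓ (⨆ (δ : Γ) (_ : δ ≠ γ), gr δ) = ⊥) {γ : Γ} {x : X}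
    (h1 : x ∈ gr γ) (h2 : x ∈ otherSup gr γ) : x = 0 := by
  have hmem : x ∈ gr γ ⊓ (⨆ (δ : Γ) (_ : δ ≠ γ), gr δ) := ⟨h1, h2⟩
  rw [hind γ] at hmem
  exact AddSubgroup.mem_bot.mp hmem

theorem sum_single_out {gr : Γ → AddSubgroup X}
    (hind : ∀ γ : Γ, gr γ ⊓ (⨆ (δ : Γ) (_ : δ ≠ γ), gr δ) = ⊥)
    {ι : Type*} [DecidableEq ι] (s : Finset ι) (x : ι → X) {i : ι} (hi : i ∈ s) {γ : Γ}
    (hmem : x i ∈ gr γ) (hrest : ∀ j ∈ s, j ≠ i → x j ∈ otherSup gr γ)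
    {y : X} (hy : y ∈ otherSup gr γ) (hsum : ∑ j ∈ s, x j = y) : x i = 0 := by
  have he : x i + ∑ j ∈ s.erase i, x j = y := by rw [Finset.add_sum_erase s x hi]; exact hsum
  have hxe : x i = y - ∑ j ∈ s.erase i, x j := eq_sub_of_add_eq he
  have hr : (∑ j ∈ s.erase i, x j) ∈ otherSup gr γ :=
    AddSubgroup.sum_mem _
      (fun j hj => hrest j (Finset.mem_of_mem_erase hj) (Finset.ne_of_mem_erase hj))
  have hxo : x i ∈ otherSup gr γ := by rw [hxe]; exact AddSubgroup.sub_mem _ hy hr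
  exact grade_cancel hind hmem hxo

theorem exists_decomp {gr : Γ → AddSubgroup X} (hsup : (⨆ γ : Γ, gr γ) = ⊤) (x : X) :
    ∃ c : Γ →₀ X, (∀ γ, c γ ∈ gr γ) ∧ (c.sum fun _ y => y) = x := by
  classical
  have hx : x ∈ ⨆ γ : Γ, gr γ := by rw [hsup]; exact AddSubgroup.mem_top x
  refine AddSubgroup.iSup_induction
    (C := fun z => ∃ c : Γ →₀ X, (∀ γ, c γ ∈ gr γ) ∧ (c.sum fun _ y => y) = z) gr hx ?_ ?_ ?_
  · intro γ y hy
    refine ⟨Finsupp.single γ y, ?_, Finsupp.sum_single_index rfl⟩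
    intro γ'
    rw [Finsupp.single_apply]
    split
    · next h => exact h ▸ hy
    · exact zero_mem _
  · exact ⟨0, fun γ => zero_mem _, by simp⟩
  · rintro a b ⟨c1, h1, hs1⟩ ⟨c2, h2, hs2⟩
    refine ⟨c1 + c2, fun γ => ?_, ?_⟩
    · rw [Finsupp.add_apply]; exact add_mem (h1 γ) (h2 γ)
    · rw [Finsupp.sum_add_index' (fun _ => rfl) (fun _ _ _ => rfl), hs1, hs2]

end Grading

end GradedAux
end GradedAuxSection

noncomputable section GradedAuxSection2
namespace GradedAux

variable {Γ : Type u} {G : Gpd Γ} {R : Type v} [NonUnitalRing R] {RG : GRingNU G R}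
  {M : Type w} [AddCommGroup M] (Mod : GModNU RG M)

theorem zero_smul0 (a : R) : Mod.smul 0 a = 0 := by
  have h := Mod.add_smul 0 0 a
  rw [add_zero] at h
  have h2 : Mod.smul 0 a + 0 = Mod.smul 0 a + Mod.smul 0 a := by rw [add_zero]; exact h
  exact (add_left_cancel h2).symm

theorem smul_zero0 (m : M) : Mod.smul m 0 = 0 := by
  have h := Mod.smul_add m 0 0
  rw [add_zero] at h
  have h2 : Mod.smul m 0 + 0 = Mod.smul m 0 + Mod.smul m 0 := by rw [add_zero]; exact h
  exact (add_left_cancel h2).symm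

theorem smul_neg0 (m : M) (a : R) : Mod.smul m (-a) = - Mod.smul m a := by
  have h := Mod.smul_add m a (-a)
  rw [add_neg_cancel, smul_zero0] at h
  exact (neg_eq_of_add_eq_zero_right h.symm).symm

theorem neg_smul0 (m : M) (a : R) : Mod.smul (-m) a = - Mod.smul m a := by
  have h := Mod.add_smul m (-m) a
  rw [add_neg_cancel, zero_smul0] at h
  exact (neg_eq_of_add_eq_zero_right h.symm).symm

theorem smul_sub0 (m : M) (a b : R) : Mod.smul m (a - b) = Mod.smul m a - Mod.smul m b := by
  rw [sub_eq_add_neg, Mod.smul_add, smul_neg0, sub_eq_add_neg]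

theorem sub_smul0 (m n : M) (a : R) : Mod.smul (m - n) a = Mod.smul m a - Mod.smul n a := by
  rw [sub_eq_add_neg, Mod.add_smul, neg_smul0, sub_eq_add_neg]

/-- Left multiplication `r ↦ m · r` as an additive map. -/
def lmulHom (m : M) : R →+ M := AddMonoidHom.mk' (Mod.smul m) (Mod.smul_add m)

theorem lmulHom_apply (m : M) (r : R) : lmulHom Mod m r = Mod.smul m r := rfl

theorem smul_sum {ι : Type*} (m : M) (s : Finset ι) (f : ι → R) :
    Mod.smul m (∑ j ∈ s, f j) = ∑ j ∈ s, Mod.smul m (f j) := map_sum (lmulHom Mod m) f s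

theorem sum_smul {ι : Type*} (s : Finset ι) (f : ι → M) (a : R) :
    Mod.smul (∑ j ∈ s, f j) a = ∑ j ∈ s, Mod.smul (f j) a := map_sum (Mod.rmul a) f s

theorem shiftGrade_of {γ σ : Γ} (h : G.src γ = G.tgt σ) :
    Mod.shiftGrade γ σ = Mod.grade (G.comp γ σ h) := by
  unfold GModNU.shiftGrade Gpd.mul?
  rw [dif_pos h]
  rfl

theorem shiftGrade_not {γ σ : Γ} (h : ¬ G.src γ = G.tgt σ) : Mod.shiftGrade γ σ = ⊥ := by
  unfold GModNU.shiftGrade Gpd.mul?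
  rw [dif_neg h]
  rfl

theorem zero_mem_shiftGrade (γ σ : Γ) : (0 : M) ∈ Mod.shiftGrade γ σ := by
  by_cases h : G.src γ = G.tgt σ
  · rw [shiftGrade_of Mod h]; exact zero_mem _
  · rw [shiftGrade_not Mod h]; exact zero_mem _

/-- The annihilator of a family of elements, as an additive subgroup of `R`. -/
def annSub {ι : Type*} (u : ι → M) : AddSubgroup R where
  carrier := {r | ∀ i, Mod.smul (u i) r = 0}
  add_mem' := by
    intro a b ha hb i
    rw [Mod.smul_add, ha i, hb i, add_zero]
  zero_mem' := fun i => smul_zero0 Mod (u i)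
  neg_mem' := by
    intro a ha i
    rw [smul_neg0, ha i, neg_zero]

theorem mem_annSub {ι : Type*} {u : ι → M} {r : R} :
    r ∈ annSub Mod u ↔ ∀ i, Mod.smul (u i) r = 0 := Iff.rfl

theorem annSub_mul {ι : Type*} {u : ι → M} {a : R} (ha : a ∈ annSub Mod u) (r : R) :
    a * r ∈ annSub Mod u := fun i => by
  rw [Mod.smul_mul, (mem_annSub Mod).mp ha i, zero_smul0]

theorem finsupp_total {ι : Type*} (c : ι →₀ R) : (c.sum fun _ y => y) = ∑ τ ∈ c.support, c τ :=
  rfl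

theorem annSub_component {ι : Type*} (u : ι → M) (γu : ι → Γ) (hu : ∀ i, u i ∈ Mod.grade (γu i))
    {a : R} (ha : a ∈ annSub Mod u) {c : Γ →₀ R} (hc : ∀ τ, c τ ∈ RG.grade τ)
    (hsum : (c.sum fun _ y => y) = a) : ∀ τ, c τ ∈ annSub Mod u := by
  classical
  intro τ i
  show Mod.smul (u i) (c τ) = 0
  by_cases hτ : τ ∈ c.support
  case neg => rw [Finsupp.notMem_support_iff.mp hτ, smul_zero0]
  by_cases hd : G.src (γu i) = G.tgt τ
  case neg => exact Mod.smul_ne _ _ hd _ _ (hu i) (hc τ)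
  have ha' : (∑ τ' ∈ c.support, c τ') = a := hsum
  have hsum2 : ∑ τ' ∈ c.support, Mod.smul (u i) (c τ') = 0 := by
    rw [← smul_sum, ha']
    exact (mem_annSub Mod).mp ha i
  refine sum_single_out Mod.grade_indep c.support (fun τ' => Mod.smul (u i) (c τ')) hτ
    (Mod.smul_mem _ _ hd _ _ (hu i) (hc τ)) ?_ (zero_mem _) hsum2
  intro τ' _ hne
  show Mod.smul (u i) (c τ') ∈ otherSup Mod.grade _
  by_cases hd' : G.src (γu i) = G.tgt τ'
  · refine mem_otherSup (Mod.smul_mem _ _ hd' _ _ (hu i) (hc τ')) ?_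
    intro he
    exact hne (comp_left_cancel G hd' hd he)
  · rw [Mod.smul_ne _ _ hd' _ _ (hu i) (hc τ')]
    exact zero_mem _

theorem isGradedSub_annImage {ι : Type*} (u : ι → M) (γu : ι → Γ)
    (hu : ∀ i, u i ∈ Mod.grade (γu i)) {γw : Γ} {w : M} (hw : w ∈ Mod.grade γw) :
    Mod.IsGradedSub ((annSub Mod u).map (lmulHom Mod w)) := by
  classical
  constructor
  · intro m hm a
    obtain ⟨r, hr, he⟩ := AddSubgroup.mem_map.mp hm
    refine AddSubgroup.mem_map.mpr ⟨r * a, annSub_mul Mod hr a, ?_⟩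
    rw [lmulHom_apply, Mod.smul_mul, ← lmulHom_apply Mod w r, he]
  · intro m hm
    obtain ⟨r, hr, he⟩ := AddSubgroup.mem_map.mp hm
    obtain ⟨c, hc, hsum⟩ := exists_decomp RG.grade_iSup r
    have hcomp := annSub_component Mod u γu hu hr hc hsum
    have hms : m = ∑ τ ∈ c.support, Mod.smul w (c τ) := by
      rw [← he, lmulHom_apply, ← smul_sum, ← finsupp_total, hsum]
    rw [hms]
    refine AddSubgroup.sum_mem _ (fun τ _ => ?_)
    by_cases hd : G.src γw = G.tgt τ
    · refine AddSubgroup.mem_iSup_of_mem (G.comp γw τ hd) ?_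
      exact ⟨Mod.smul_mem _ _ hd _ _ hw (hc τ),
        AddSubgroup.mem_map.mpr ⟨c τ, hcomp τ, rfl⟩⟩
    · rw [Mod.smul_ne _ _ hd _ _ hw (hc τ)]
      exact zero_mem _

end GradedAux
end GradedAuxSection2

noncomputable section GradedAuxSection3
namespace GradedAux

variable {Γ : Type u} {G : Gpd Γ} {R : Type v} [NonUnitalRing R] {RG : GRingNU G R}
  {M : Type w} [AddCommGroup M] (Mod : GModNU RG M)

theorem eq_zero_of_smul_all_zero (hsimple : Mod.IsGrSimple) {w : M}
    (hw : ∀ r : R, Mod.smul w r = 0) : w = 0 := by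
  classical
  set Z : AddSubgroup M :=
    { carrier := {m | ∀ r : R, Mod.smul m r = 0}
      add_mem' := by
        intro a b ha hb r
        rw [Mod.add_smul, ha r, hb r, add_zero]
      zero_mem' := fun r => zero_smul0 Mod r
      neg_mem' := by
        intro a ha r
        rw [neg_smul0, ha r, neg_zero] } with hZdef
  have hZmem : ∀ m : M, m ∈ Z ↔ ∀ r : R, Mod.smul m r = 0 := fun m => Iff.rfl
  have hgr : Mod.IsGradedSub Z := by
    constructor
    · intro m hm a
      rw [hZmem]
      intro r
      rw [← Mod.smul_mul]
      exact (hZmem m).mp hm (a * r)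
    · intro m hm
      obtain ⟨c, hc, hsum⟩ := exists_decomp Mod.grade_iSup m
      have hms : (∑ σ ∈ c.support, c σ) = m := hsum
      have hcz : ∀ σ, c σ ∈ Z := by
        intro σ
        rw [hZmem]
        intro r
        obtain ⟨d, hd, hdsum⟩ := exists_decomp RG.grade_iSup r
        have hds : (∑ τ ∈ d.support, d τ) = r := hdsum
        rw [← hds, smul_sum]
        refine Finset.sum_eq_zero (fun τ _ => ?_)
        by_cases hσ : σ ∈ c.support
        case neg => rw [Finsupp.notMem_support_iff.mp hσ, zero_smul0]
        by_cases hdf : G.src σ = G.tgt τ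
        case neg => exact Mod.smul_ne _ _ hdf _ _ (hc σ) (hd τ)
        refine sum_single_out Mod.grade_indep c.support (fun σ' => Mod.smul (c σ') (d τ)) hσ
          (Mod.smul_mem _ _ hdf _ _ (hc σ) (hd τ)) ?_ (zero_mem _) ?_
        · intro σ' _ hne
          show Mod.smul (c σ') (d τ) ∈ otherSup Mod.grade _
          by_cases hdf' : G.src σ' = G.tgt τ
          · exact mem_otherSup (Mod.smul_mem _ _ hdf' _ _ (hc σ') (hd τ))
              (fun he => hne (comp_right_cancel G hdf' hdf he))
          · rw [Mod.smul_ne _ _ hdf' _ _ (hc σ') (hd τ)]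
            exact zero_mem _
        · rw [← sum_smul, hms]
          exact (hZmem m).mp hm (d τ)
      rw [← hms]
      exact AddSubgroup.sum_mem _
        (fun σ _ => AddSubgroup.mem_iSup_of_mem σ ⟨hc σ, hcz σ⟩)
  rcases hsimple.2 Z hgr with h | h
  · have : w ∈ Z := (hZmem w).mpr hw
    rw [h] at this
    exact AddSubgroup.mem_bot.mp this
  · exfalso
    obtain ⟨m, a, hma⟩ := hsimple.1
    have hmZ : m ∈ Z := h ▸ AddSubgroup.mem_top m
    exact hma ((hZmem m).mp hmZ a)

theorem exists_e0 (hsimple : Mod.IsGrSimple) :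
    ∃ γ₀ : Γ, Mod.grade γ₀ ≠ ⊥ ∧ ∀ σ : Γ, G.tgt σ ≠ G.tgt γ₀ → Mod.grade σ = ⊥ := by
  classical
  obtain ⟨m0, a0, hma⟩ := hsimple.1
  have hex : ∃ γ₀ : Γ, Mod.grade γ₀ ≠ ⊥ := by
    by_contra hno
    push_neg at hno
    have htop : (⊤ : AddSubgroup M) = ⊥ := by
      rw [← Mod.grade_iSup]
      exact iSup_eq_bot.mpr hno
    apply hma
    have : Mod.smul m0 a0 ∈ (⊥ : AddSubgroup M) := htop ▸ AddSubgroup.mem_top _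
    have hz : Mod.smul m0 a0 = 0 := AddSubgroup.mem_bot.mp this
    rw [hz]
  obtain ⟨γ₀, hγ₀⟩ := hex
  set e := G.tgt γ₀ with hedef
  set N := Mod.eComp e with hNdef
  have hmemN : ∀ γ : Γ, G.tgt γ = e → Mod.grade γ ≤ N := fun γ hγ =>
    le_iSup₂ (f := fun (γ : Γ) (_ : G.tgt γ = e) => Mod.grade γ) γ hγ
  have hgr : Mod.IsGradedSub N := by
    constructor
    · intro m hm a
      refine AddSubgroup.iSup_induction (C := fun z => ∀ b : R, Mod.smul z b ∈ N)
        (fun γ => ⨆ _ : G.tgt γ = e, Mod.grade γ) hm ?_ ?_ ?_ a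
      · intro γ x hx b
        have hx2 : x ∈ ⨆ (_ : G.tgt γ = e), Mod.grade γ := hx
        by_cases hP : G.tgt γ = e
        · rw [iSup_pos hP] at hx2
          have hx := hx2
          obtain ⟨d, hd, hdsum⟩ := exists_decomp RG.grade_iSup b
          have hds : (∑ τ ∈ d.support, d τ) = b := hdsum
          rw [← hds, smul_sum]
          refine AddSubgroup.sum_mem _ (fun τ _ => ?_)
          by_cases hdf : G.src γ = G.tgt τ
          · exact hmemN _ (by rw [G.tgt_comp]; exact hP) (Mod.smul_mem _ _ hdf _ _ hx (hd τ))
          · rw [Mod.smul_ne _ _ hdf _ _ hx (hd τ)]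
            exact zero_mem _
        · rw [iSup_neg hP] at hx2
          rw [AddSubgroup.mem_bot.mp hx2, zero_smul0]
          exact zero_mem _
      · intro b
        rw [zero_smul0]
        exact zero_mem _
      · intro x y hx hy b
        rw [Mod.add_smul]
        exact add_mem (hx b) (hy b)
    · intro m hm
      refine AddSubgroup.iSup_induction
        (C := fun z => z ∈ ⨆ γ : Γ, (Mod.grade γ ⊓ N))
        (fun γ => ⨆ _ : G.tgt γ = e, Mod.grade γ) hm ?_ (zero_mem _)
        (fun x y hx hy => add_mem hx hy)
      intro γ x hx
      have hx2 : x ∈ ⨆ (_ : G.tgt γ = e), Mod.grade γ := hx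
      by_cases hP : G.tgt γ = e
      · rw [iSup_pos hP] at hx2
        exact AddSubgroup.mem_iSup_of_mem γ ⟨hx2, hmemN γ hP hx2⟩
      · rw [iSup_neg hP] at hx2
        rw [AddSubgroup.mem_bot.mp hx2]
        exact zero_mem _
  rcases hsimple.2 N hgr with h | h
  · exfalso
    apply hγ₀
    rw [eq_bot_iff]
    exact le_trans (hmemN γ₀ rfl) (le_of_eq h)
  · refine ⟨γ₀, hγ₀, ?_⟩
    intro σ hσ
    rw [eq_bot_iff]
    intro x hx
    have hxN : x ∈ N := h ▸ AddSubgroup.mem_top x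
    have hle : N ≤ otherSup Mod.grade σ := by
      refine iSup₂_le (fun γ hγ => ?_)
      intro y hy
      exact mem_otherSup hy (fun he => hσ (by rw [← he]; exact hγ))
    exact AddSubgroup.mem_bot.mpr (grade_cancel Mod.grade_indep hx (hle hxN))

theorem id_mem_homGrade {γ₀ : Γ} (h0 : ∀ σ : Γ, G.tgt σ ≠ G.tgt γ₀ → Mod.grade σ = ⊥) :
    (AddMonoidHom.id M) ∈ Mod.HomGrade (G.tgt γ₀) := by
  constructor
  · intro m a
    rfl
  · intro σ m hm
    by_cases hP : G.tgt σ = G.tgt γ₀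
    · have hd : G.src (G.tgt γ₀) = G.tgt σ := by rw [G.src_tgt]; exact hP.symm
      rw [shiftGrade_of Mod hd]
      have hcomp : G.comp (G.tgt γ₀) σ hd = σ := by
        rw [comp_congr G (show G.tgt γ₀ = G.tgt σ from hP.symm) rfl hd (G.src_tgt σ)]
        exact G.id_comp σ
      rw [hcomp]
      exact hm
    · rw [h0 σ hP] at hm
      rw [AddSubgroup.mem_bot.mp hm]
      exact zero_mem_shiftGrade Mod _ _

theorem homGrade_subset_EndR {γ : Γ} {g : M →+ M} (hg : g ∈ Mod.HomGrade γ) :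
    g ∈ Mod.EndR :=
  AddSubgroup.subset_closure (Set.mem_iUnion.mpr ⟨γ, hg⟩)

theorem isGradedSub_ker {γ : Γ} {g : M →+ M} (hg : g ∈ Mod.HomGrade γ) :
    Mod.IsGradedSub g.ker := by
  classical
  constructor
  · intro m hm a
    rw [AddMonoidHom.mem_ker, hg.1, AddMonoidHom.mem_ker.mp hm, zero_smul0]
  · intro m hm
    obtain ⟨c, hc, hsum⟩ := exists_decomp Mod.grade_iSup m
    have hms : (∑ σ ∈ c.support, c σ) = m := hsum
    have hgz : ∀ σ, g (c σ) = 0 := by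
      intro σ
      by_cases hσ : σ ∈ c.support
      case neg => rw [Finsupp.notMem_support_iff.mp hσ, map_zero]
      by_cases hd : G.src γ = G.tgt σ
      case neg =>
        have hh := hg.2 σ _ (hc σ)
        rw [shiftGrade_not Mod hd] at hh
        exact AddSubgroup.mem_bot.mp hh
      have hmem0 : g (c σ) ∈ Mod.grade (G.comp γ σ hd) := by
        have hh := hg.2 σ _ (hc σ)
        rwa [shiftGrade_of Mod hd] at hh
      refine sum_single_out Mod.grade_indep c.support (fun σ' => g (c σ')) hσ hmem0 ?_
        (zero_mem _) ?_
      · intro σ' _ hne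
        show g (c σ') ∈ otherSup Mod.grade _
        by_cases hd' : G.src γ = G.tgt σ'
        · have hh := hg.2 σ' _ (hc σ')
          rw [shiftGrade_of Mod hd'] at hh
          exact mem_otherSup hh (fun he => hne (comp_left_cancel G hd' hd he))
        · have hh := hg.2 σ' _ (hc σ')
          rw [shiftGrade_not Mod hd'] at hh
          rw [AddSubgroup.mem_bot.mp hh]
          exact zero_mem _
      · rw [← map_sum, hms]
        exact AddMonoidHom.mem_ker.mp hm
    rw [← hms]
    exact AddSubgroup.sum_mem _ (fun σ _ => AddSubgroup.mem_iSup_of_mem σ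
      ⟨hc σ, AddMonoidHom.mem_ker.mpr (hgz σ)⟩)

theorem isGradedSub_range {γ : Γ} {g : M →+ M} (hg : g ∈ Mod.HomGrade γ) :
    Mod.IsGradedSub g.range := by
  classical
  constructor
  · intro m hm a
    obtain ⟨x, hx⟩ := hm
    exact ⟨Mod.smul x a, by rw [hg.1, hx]⟩
  · intro m hm
    obtain ⟨x, hx⟩ := hm
    obtain ⟨c, hc, hsum⟩ := exists_decomp Mod.grade_iSup x
    have hms : (∑ σ ∈ c.support, c σ) = x := hsum
    have hmg : m = ∑ σ ∈ c.support, g (c σ) := by rw [← map_sum, hms, hx]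
    rw [hmg]
    refine AddSubgroup.sum_mem _ (fun σ _ => ?_)
    by_cases hd : G.src γ = G.tgt σ
    · have hh := hg.2 σ _ (hc σ)
      rw [shiftGrade_of Mod hd] at hh
      exact AddSubgroup.mem_iSup_of_mem (G.comp γ σ hd) ⟨hh, ⟨c σ, rfl⟩⟩
    · have hh := hg.2 σ _ (hc σ)
      rw [shiftGrade_not Mod hd] at hh
      rw [AddSubgroup.mem_bot.mp hh]
      exact zero_mem _

end GradedAux
end GradedAuxSection3

noncomputable section GradedAuxSection4
namespace GradedAux

variable {Γ : Type u} {G : Gpd Γ} {R : Type v} [NonUnitalRing R] {RG : GRingNU G R}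
  {M : Type w} [AddCommGroup M] (Mod : GModNU RG M)

theorem division_part (hsimple : Mod.IsGrSimple) {γ₀ : Γ}
    (h0 : ∀ σ : Γ, G.tgt σ ≠ G.tgt γ₀ → Mod.grade σ = ⊥)
    (γ : Γ) (g : M →+ M) (hg : g ∈ Mod.HomGrade γ) (hne : g ≠ 0) :
    ∃ h : M →+ M, h ∈ Mod.HomGrade (G.inv γ) ∧
      (∀ (σ : Γ) (m : M), m ∈ Mod.grade σ →
        (G.tgt σ = G.src γ → h (g m) = m) ∧ (G.tgt σ ≠ G.src γ → h (g m) = 0)) ∧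
      (∀ (σ : Γ) (m : M), m ∈ Mod.grade σ →
        (G.tgt σ = G.tgt γ → g (h m) = m) ∧ (G.tgt σ ≠ G.tgt γ → g (h m) = 0)) := by
  classical
  -- find a homogeneous element not killed by g
  have hex : ∃ (σ₁ : Γ) (m₁ : M), m₁ ∈ Mod.grade σ₁ ∧ g m₁ ≠ 0 := by
    by_contra hno
    push_neg at hno
    apply hne
    ext m
    obtain ⟨c, hc, hsum⟩ := exists_decomp Mod.grade_iSup m
    have hms : (∑ σ ∈ c.support, c σ) = m := hsum
    show g m = 0
    rw [← hms, map_sum]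
    exact Finset.sum_eq_zero (fun σ _ => hno σ (c σ) (hc σ))
  obtain ⟨σ₁, m₁, hm₁, hgm₁⟩ := hex
  have hd1 : G.src γ = G.tgt σ₁ := by
    by_contra hd
    have hh := hg.2 σ₁ m₁ hm₁
    rw [shiftGrade_not Mod hd] at hh
    exact hgm₁ (AddSubgroup.mem_bot.mp hh)
  have hgm₁mem : g m₁ ∈ Mod.grade (G.comp γ σ₁ hd1) := by
    have hh := hg.2 σ₁ m₁ hm₁
    rwa [shiftGrade_of Mod hd1] at hh
  have htγ : G.tgt γ = G.tgt γ₀ := by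
    by_contra hcon
    have : Mod.grade (G.comp γ σ₁ hd1) = ⊥ := h0 _ (by rw [G.tgt_comp]; exact hcon)
    rw [this] at hgm₁mem
    exact hgm₁ (AddSubgroup.mem_bot.mp hgm₁mem)
  have htσ₁ : G.tgt σ₁ = G.tgt γ₀ := by
    by_contra hcon
    rw [h0 σ₁ hcon] at hm₁
    rw [AddSubgroup.mem_bot.mp hm₁] at hgm₁
    exact hgm₁ (map_zero g)
  have hsγ : G.src γ = G.tgt γ₀ := hd1.trans htσ₁
  -- kernel is trivial
  have hker : g.ker = ⊥ := by
    rcases hsimple.2 _ (isGradedSub_ker Mod hg) with h | h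
    · exact h
    · exfalso
      have : m₁ ∈ g.ker := h ▸ AddSubgroup.mem_top m₁
      exact hgm₁ (AddMonoidHom.mem_ker.mp this)
  have hinj : Function.Injective g := by
    intro x y hxy
    have : x - y ∈ g.ker := by
      rw [AddMonoidHom.mem_ker, map_sub, hxy, sub_self]
    rw [hker] at this
    exact sub_eq_zero.mp (AddSubgroup.mem_bot.mp this)
  have hsurj : Function.Surjective g := by
    rcases hsimple.2 _ (isGradedSub_range Mod hg) with h | h
    · exfalso
      have : g m₁ ∈ g.range := ⟨m₁, rfl⟩
      rw [h] at this
      exact hgm₁ (AddSubgroup.mem_bot.mp this)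
    · intro y
      have : y ∈ g.range := h ▸ AddSubgroup.mem_top y
      exact this
  set E := AddEquiv.ofBijective g ⟨hinj, hsurj⟩ with hEdef
  set h : M →+ M := E.symm.toAddMonoidHom with hhdef
  have hgE : ∀ m : M, E m = g m := fun m => rfl
  have hhg : ∀ m : M, h (g m) = m := fun m => E.symm_apply_apply m
  have hgh : ∀ m : M, g (h m) = m := fun m => E.apply_symm_apply m
  have hhom : h ∈ Mod.HomGrade (G.inv γ) := by
    constructor
    · intro m a
      apply hinj
      rw [hgh, hg.1, hgh]
    · intro σ m hm
      by_cases htσ : G.tgt σ = G.tgt γ₀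
      · have hd : G.src (G.inv γ) = G.tgt σ := by rw [G.src_inv, htγ, ← htσ]
        rw [shiftGrade_of Mod hd]
        obtain ⟨c, hc, hsum⟩ := exists_decomp Mod.grade_iSup (h m)
        have hms : (∑ δ ∈ c.support, c δ) = h m := hsum
        have hcz : ∀ δ, c δ ∈ Mod.grade (G.comp (G.inv γ) σ hd) := by
          intro δ
          by_cases hδs : δ ∈ c.support
          case neg => rw [Finsupp.notMem_support_iff.mp hδs]; exact zero_mem _
          by_cases hδ : δ = G.comp (G.inv γ) σ hd
          case pos => exact hδ ▸ hc δ
          suffices hz : g (c δ) = 0 by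
            rw [hinj (hz.trans (map_zero g).symm)]
            exact zero_mem _
          by_cases hdd : G.src γ = G.tgt δ
          case neg =>
            have hh2 := hg.2 δ _ (hc δ)
            rw [shiftGrade_not Mod hdd] at hh2
            exact AddSubgroup.mem_bot.mp hh2
          have hmem0 : g (c δ) ∈ Mod.grade (G.comp γ δ hdd) := by
            have hh2 := hg.2 δ _ (hc δ)
            rwa [shiftGrade_of Mod hdd] at hh2
          have hne2 : σ ≠ G.comp γ δ hdd := by
            intro he
            apply hδ
            have hcc : G.comp (G.inv γ) σ hd = δ := by
              rw [comp_congr G rfl he hd (by rw [G.src_inv, G.tgt_comp])]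
              exact inv_comp_comp G γ δ hdd _
            exact hcc.symm
          refine sum_single_out Mod.grade_indep c.support (fun δ' => g (c δ')) hδs hmem0 ?_
            (mem_otherSup hm hne2) ?_
          · intro δ' _ hne'
            show g (c δ') ∈ otherSup Mod.grade _
            by_cases hdd' : G.src γ = G.tgt δ'
            · have hh2 := hg.2 δ' _ (hc δ')
              rw [shiftGrade_of Mod hdd'] at hh2
              exact mem_otherSup hh2 (fun he => hne' (comp_left_cancel G hdd' hdd he))
            · have hh2 := hg.2 δ' _ (hc δ')
              rw [shiftGrade_not Mod hdd'] at hh2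
              rw [AddSubgroup.mem_bot.mp hh2]
              exact zero_mem _
          · rw [← map_sum, hms, hgh]
        rw [← hms]
        exact AddSubgroup.sum_mem _ (fun δ _ => hcz δ)
      · rw [h0 σ htσ] at hm
        rw [AddSubgroup.mem_bot.mp hm, map_zero]
        exact zero_mem_shiftGrade Mod _ _
  refine ⟨h, hhom, ?_, ?_⟩
  · intro σ m hm
    refine ⟨fun _ => hhg m, fun hts => ?_⟩
    rw [h0 σ (fun he => hts (he.trans hsγ.symm))] at hm
    rw [AddSubgroup.mem_bot.mp hm, map_zero, map_zero]
  · intro σ m hm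
    refine ⟨fun _ => hgh m, fun hts => ?_⟩
    rw [h0 σ (fun he => hts (he.trans htγ.symm))] at hm
    rw [AddSubgroup.mem_bot.mp hm, map_zero, map_zero]

end GradedAux
end GradedAuxSection4

noncomputable section GradedAuxSection5
namespace GradedAux

variable {Γ : Type u} {G : Gpd Γ} {R : Type v} [NonUnitalRing R] {RG : GRingNU G R}
  {M : Type w} [AddCommGroup M] (Mod : GModNU RG M)

/-- The inductive step of the graded Jacobson density theorem: if every `r ∈ R`
annihilating all the homogeneous `u i` also annihilates the homogeneous `w`, then
`w` is a `D`-linear combination of the `u i`. -/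
theorem key (hsimple : Mod.IsGrSimple) :
    ∀ (n : ℕ) (γs : Fin n → Γ) (u : Fin n → M), (∀ i, u i ∈ Mod.grade (γs i)) →
    ∀ (γ : Γ) (w : M), w ∈ Mod.grade γ →
    (∀ r : R, (∀ i, Mod.smul (u i) r = 0) → Mod.smul w r = 0) →
    ∃ a : Fin n → (M →+ M),
      (∀ i, a i ∈ Mod.EndR ∧
        ∀ (σ : Γ) (m : M), m ∈ Mod.grade σ → G.tgt σ ≠ G.tgt (γs i) → a i m = 0) ∧
      (∑ i, a i (u i)) = w := by
  intro n
  induction n with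
  | zero =>
    intro γs u hu γ w hw H
    refine ⟨fun _ => 0, fun i => i.elim0, ?_⟩
    rw [Finset.univ_eq_empty, Finset.sum_empty]
    exact (eq_zero_of_smul_all_zero Mod hsimple (fun r => H r (fun i => i.elim0))).symm
  | succ n IH =>
    intro γs u hu γ w hw H
    classical
    set γl := γs (Fin.last n) with hγl
    set ul := u (Fin.last n) with hul
    set u' : Fin n → M := fun i => u i.castSucc with hu'def
    set γs' : Fin n → Γ := fun i => γs i.castSucc with hγs'def
    have hu' : ∀ i, u' i ∈ Mod.grade (γs' i) := fun i => hu _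
    have hulg : ul ∈ Mod.grade γl := hu _
    set A := annSub Mod u' with hA
    have hall : ∀ r ∈ A, Mod.smul ul r = 0 → ∀ i : Fin (n+1), Mod.smul (u i) r = 0 := by
      intro r hr hl i
      refine Fin.lastCases ?_ ?_ i
      · exact hl
      · exact fun j => (mem_annSub Mod).mp hr j
    have useIH : (∀ r, r ∈ A → Mod.smul w r = 0) →
        ∃ a : Fin (n+1) → (M →+ M),
          (∀ i, a i ∈ Mod.EndR ∧
            ∀ (σ : Γ) (m : M), m ∈ Mod.grade σ → G.tgt σ ≠ G.tgt (γs i) → a i m = 0) ∧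
          (∑ i, a i (u i)) = w := by
      intro hWA
      obtain ⟨a', ha', hsum'⟩ := IH γs' u' hu' γ w hw (fun r hr => hWA r hr)
      refine ⟨Fin.snoc a' 0, ?_, ?_⟩
      · intro i
        refine Fin.lastCases ?_ ?_ i
        · rw [Fin.snoc_last]
          exact ⟨zero_mem _, fun σ m _ _ => rfl⟩
        · intro j
          rw [Fin.snoc_castSucc]
          exact ha' j
      · rw [Fin.sum_univ_castSucc]
        simp only [Fin.snoc_castSucc, Fin.snoc_last, AddMonoidHom.zero_apply, add_zero]
        exact hsum'
    by_cases hsrc : G.src γ = G.src γl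
    case neg =>
      apply useIH
      intro r hr
      obtain ⟨c, hc, hsum⟩ := exists_decomp RG.grade_iSup r
      have hcA := annSub_component Mod u' γs' hu' hr hc hsum
      have hms : (∑ τ ∈ c.support, c τ) = r := hsum
      rw [← hms, smul_sum]
      refine Finset.sum_eq_zero (fun τ _ => ?_)
      by_cases hdw : G.src γ = G.tgt τ
      · have hdl : ¬ G.src γl = G.tgt τ := fun h2 => hsrc (hdw.trans h2.symm)
        have hul0 : Mod.smul ul (c τ) = 0 := Mod.smul_ne _ _ hdl _ _ hulg (hc τ)
        exact H _ (hall _ (hcA τ) hul0)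
      · exact Mod.smul_ne _ _ hdw _ _ hw (hc τ)
    case pos =>
    set N := A.map (lmulHom Mod ul) with hN
    rcases hsimple.2 N (isGradedSub_annImage Mod u' γs' hu' hulg) with hNb | hNt
    · -- N = ⊥
      apply useIH
      intro r hr
      have hmem : Mod.smul ul r ∈ N := AddSubgroup.mem_map.mpr ⟨r, hr, rfl⟩
      rw [hNb] at hmem
      exact H r (hall r hr (AddSubgroup.mem_bot.mp hmem))
    · -- N = ⊤ : build the homogeneous D-endomorphism g
      have hsurj : ∀ m : M, ∃ r, r ∈ A ∧ Mod.smul ul r = m := by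
        intro m
        have : m ∈ N := hNt ▸ AddSubgroup.mem_top m
        obtain ⟨r, hr, he⟩ := AddSubgroup.mem_map.mp this
        exact ⟨r, hr, he⟩
      set pick : M → R := fun m => (hsurj m).choose with hpick
      have hpickA : ∀ m, pick m ∈ A := fun m => (hsurj m).choose_spec.1
      have hpickE : ∀ m, Mod.smul ul (pick m) = m := fun m => (hsurj m).choose_spec.2
      have hwd : ∀ r ∈ A, Mod.smul w (pick (Mod.smul ul r)) = Mod.smul w r := by
        intro r hr
        have hdiff : (pick (Mod.smul ul r) - r) ∈ A := sub_mem (hpickA _) hr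
        have h1 : Mod.smul ul (pick (Mod.smul ul r) - r) = 0 := by
          rw [smul_sub0, hpickE, sub_self]
        have h2 := H _ (hall _ hdiff h1)
        rw [smul_sub0] at h2
        exact sub_eq_zero.mp h2
      have hadd : ∀ m1 m2 : M,
          Mod.smul w (pick (m1 + m2)) = Mod.smul w (pick m1) + Mod.smul w (pick m2) := by
        intro m1 m2
        have he : m1 + m2 = Mod.smul ul (pick m1 + pick m2) := by
          rw [Mod.smul_add, hpickE, hpickE]
        rw [he, hwd _ (add_mem (hpickA m1) (hpickA m2)), Mod.smul_add]
      set g : M →+ M := AddMonoidHom.mk' (fun m => Mod.smul w (pick m)) hadd with hgdef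
      have hgap : ∀ m, g m = Mod.smul w (pick m) := fun m => rfl
      have hgA : ∀ r ∈ A, g (Mod.smul ul r) = Mod.smul w r := fun r hr => hwd r hr
      have hgsmul : ∀ (m : M) (r : R), g (Mod.smul m r) = Mod.smul (g m) r := by
        intro m r
        conv_lhs => rw [← hpickE m, ← Mod.smul_mul]
        rw [hgA _ (annSub_mul Mod (hpickA m) r), Mod.smul_mul]
        rfl
      have hγ'd : G.src γ = G.tgt (G.inv γl) := by rw [G.tgt_inv]; exact hsrc
      set γ' := G.comp γ (G.inv γl) hγ'd with hγ'
      have hsγ' : G.src γ' = G.tgt γl := by rw [G.src_comp, G.src_inv]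
      have hclaim : ∀ (σ : Γ) (m : M), m ∈ Mod.grade σ → g m ∈ Mod.shiftGrade γ' σ := by
        intro σ m hm
        obtain ⟨c, hc, hsum⟩ := exists_decomp RG.grade_iSup (pick m)
        have hcA := annSub_component Mod u' γs' hu' (hpickA m) hc hsum
        have hcs : (∑ τ ∈ c.support, c τ) = pick m := hsum
        have hgm : g m = ∑ τ ∈ c.support, Mod.smul w (c τ) := by
          rw [hgap, ← hcs, smul_sum]
        have claim0 : ∀ τ ∈ c.support, (∀ hdl : G.src γl = G.tgt τ, G.comp γl τ hdl ≠ σ) →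
            Mod.smul w (c τ) = 0 := by
          intro τ hτ hns
          have hul0 : Mod.smul ul (c τ) = 0 := by
            by_cases hdl : G.src γl = G.tgt τ
            · refine sum_single_out Mod.grade_indep c.support
                (fun τ' => Mod.smul ul (c τ')) hτ
                (Mod.smul_mem _ _ hdl _ _ hulg (hc τ))
                ?_ (mem_otherSup hm (Ne.symm (hns hdl))) ?_
              · intro τ' _ hne'
                show Mod.smul ul (c τ') ∈ otherSup Mod.grade _
                by_cases hdl' : G.src γl = G.tgt τ'
                · exact mem_otherSup (Mod.smul_mem _ _ hdl' _ _ hulg (hc τ'))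
                    (fun he => hne' (comp_left_cancel G hdl' hdl he))
                · rw [Mod.smul_ne _ _ hdl' _ _ hulg (hc τ')]
                  exact zero_mem _
              · rw [← smul_sum, hcs, hpickE]
            · exact Mod.smul_ne _ _ hdl _ _ hulg (hc τ)
          exact H _ (hall _ (hcA τ) hul0)
        by_cases hts : G.tgt σ = G.tgt γl
        · have hdσ : G.src γ' = G.tgt σ := by rw [hsγ']; exact hts.symm
          rw [shiftGrade_of Mod hdσ, hgm]
          refine AddSubgroup.sum_mem _ (fun τ hτ => ?_)
          by_cases hcsd : ∃ hdl : G.src γl = G.tgt τ, G.comp γl τ hdl = σ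
          · obtain ⟨hdl, he⟩ := hcsd
            have hdτ : G.src γ = G.tgt τ := hsrc.trans hdl
            have hmem2 : Mod.smul w (c τ) ∈ Mod.grade (G.comp γ τ hdτ) :=
              Mod.smul_mem _ _ hdτ _ _ hw (hc τ)
            have hce : G.comp γ' σ hdσ = G.comp γ τ hdτ := by
              rw [comp_congr G rfl he.symm hdσ (by rw [hsγ', G.tgt_comp])]
              rw [comp_assoc' G γ (G.inv γl) (G.comp γl τ hdl) hγ'd
                (by rw [G.src_inv, G.tgt_comp]) _ (by rw [G.tgt_comp]; exact hγ'd)]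
              rw [comp_congr G rfl (inv_comp_comp G γl τ hdl (by rw [G.src_inv, G.tgt_comp]))
                (by rw [G.tgt_comp]; exact hγ'd) hdτ]
            rw [hce]
            exact hmem2
          · push_neg at hcsd
            rw [claim0 τ hτ hcsd]
            exact zero_mem _
        · rw [shiftGrade_not Mod (by rw [hsγ']; exact fun he => hts he.symm)]
          rw [AddSubgroup.mem_bot, hgm]
          refine Finset.sum_eq_zero (fun τ hτ => claim0 τ hτ ?_)
          intro hdl he
          apply hts
          rw [← he, G.tgt_comp]
      have ghom : g ∈ Mod.HomGrade γ' := ⟨hgsmul, hclaim⟩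
      have hgul : g ul ∈ Mod.grade γ := by
        have hh := hclaim γl ul hulg
        rw [shiftGrade_of Mod (by rw [hsγ'] : G.src γ' = G.tgt γl)] at hh
        rwa [comp_inv_comp G γ γl hsrc hγ'd _] at hh
      have H' : ∀ r : R, (∀ i, Mod.smul (u' i) r = 0) → Mod.smul (w - g ul) r = 0 := by
        intro r hr
        rw [sub_smul0]
        have he2 : Mod.smul (g ul) r = Mod.smul w r := by
          rw [← hgsmul]
          exact hgA r hr
        rw [he2, sub_self]
      obtain ⟨a', ha', hsum'⟩ := IH γs' u' hu' γ (w - g ul) (sub_mem hw hgul) H'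
      refine ⟨Fin.snoc a' g, ?_, ?_⟩
      · intro i
        refine Fin.lastCases ?_ ?_ i
        · rw [Fin.snoc_last]
          refine ⟨homGrade_subset_EndR Mod ghom, ?_⟩
          intro σ m hmσ htne
          have hh := hclaim σ m hmσ
          rw [shiftGrade_not Mod (by rw [hsγ']; exact fun he => htne he.symm)] at hh
          exact AddSubgroup.mem_bot.mp hh
        · intro j
          rw [Fin.snoc_castSucc]
          exact ha' j
      · rw [Fin.sum_univ_castSucc]
        simp only [Fin.snoc_castSucc, Fin.snoc_last]
        rw [show (∑ i : Fin n, a' i (u i.castSucc)) = w - g ul from hsum', sub_add_cancel]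

end GradedAux
end GradedAuxSection5
end
universe u v w x y

/-- graded Jacobson–Chevalley density theorem.
Let `R` be a right gr-primitive `Γ`-graded ring (not necessarily object unital),
`S` a faithful gr-simple graded right `R`-module, and `D := END_R(S)`.  Then `D`
is a `Γ`-graded division ring, and the map `φ : R → END_D(S)`, `φ(r) = (x ↦ xr)`,
is an injective graded multiplicative map (into the `D`-linear endomorphisms of
`S` as a graded left `D`-module) whose image is a gr-dense subring of
`END_D(S)`. -/
theorem graded_density_theorem
    {Γ : Type u} (G : Gpd Γ) {R : Type v} [NonUnitalRing R] (RG : GRingNU G R)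
    {M : Type w} [AddCommGroup M] (Mod : GModNU RG M)
    (hsimple : Mod.IsGrSimple) (hfaithful : Mod.IsFaithful) :
    -- `D = END_R(S)` is a `Γ`-graded division ring:
    ((∃ (γ : Γ) (g : M →+ M), g ∈ Mod.HomGrade γ ∧ g ≠ 0) ∧
     (∀ (γ : Γ) (g : M →+ M), g ∈ Mod.HomGrade γ → g ≠ 0 →
       ∃ h : M →+ M, h ∈ Mod.HomGrade (G.inv γ) ∧
         (∀ (σ : Γ) (m : M), m ∈ Mod.grade σ →
           (G.tgt σ = G.src γ → h (g m) = m) ∧ (G.tgt σ ≠ G.src γ → h (g m) = 0)) ∧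
         (∀ (σ : Γ) (m : M), m ∈ Mod.grade σ →
           (G.tgt σ = G.tgt γ → g (h m) = m) ∧ (G.tgt σ ≠ G.tgt γ → g (h m) = 0)))) ∧
    -- `φ` is injective:
    Function.Injective (fun r : R => Mod.rmul r) ∧
    -- `φ` is multiplicative (a gr-homomorphism of rings into `END_D(S)`,
    -- endomorphisms of the left `D`-module `S` being written on the right):
    (∀ (r s : R) (m : M), Mod.rmul (r * s) m = Mod.rmul s (Mod.rmul r m)) ∧
    -- `φ` is graded, with values in `END_D(S)`:
    (∀ (γ : Γ) (r : R), r ∈ RG.grade γ → Mod.rmul r ∈ Mod.DEndGrade γ) ∧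
    -- the image of `φ` is a gr-dense subring of `END_D(S)`:
    (∀ (n : ℕ) (γs δs : Fin n → Γ) (u v : Fin n → M),
      Mod.PLIoverD γs u →
      (∀ i, v i ∈ Mod.grade (δs i) ∧ G.tgt (δs i) = G.tgt (γs i)) →
      ∃ r : R, ∀ i, Mod.smul (u i) r = v i) := by
  classical
  obtain ⟨γ₀, hγ₀ne, h0⟩ := GradedAux.exists_e0 Mod hsimple
  obtain ⟨x0, hx0mem, hx0ne⟩ : ∃ x ∈ Mod.grade γ₀, x ≠ 0 := by
    by_contra hno
    push_neg at hno
    exact hγ₀ne ((AddSubgroup.eq_bot_iff_forall _).mpr hno)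
  have hid : (AddMonoidHom.id M) ∈ Mod.HomGrade (G.tgt γ₀) := GradedAux.id_mem_homGrade Mod h0
  refine ⟨⟨⟨G.tgt γ₀, AddMonoidHom.id M, hid, ?_⟩, GradedAux.division_part Mod hsimple h0⟩,
    ?_, ?_, ?_, ?_⟩
  · -- id ≠ 0
    intro he
    have hx := congrArg (fun f : M →+ M => f x0) he
    simp only [AddMonoidHom.id_apply, AddMonoidHom.zero_apply] at hx
    exact hx0ne hx
  · -- injectivity
    intro r s hrs
    have hz : ∀ m : M, Mod.smul m (r - s) = 0 := by
      intro m
      have hm := congrArg (fun f : M →+ M => f m) hrs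
      simp only at hm
      have hm' : Mod.smul m r = Mod.smul m s := hm
      rw [GradedAux.smul_sub0, hm', sub_self]
    exact sub_eq_zero.mp (hfaithful _ hz)
  · -- multiplicativity
    intro r s m
    exact Mod.smul_mul m r s
  · -- graded, with values in END_D(S)
    intro γ r hr
    constructor
    · intro δ g hg m
      exact (hg.1 m r).symm
    · intro σ m hm
      by_cases hd : G.src σ = G.tgt γ
      · rw [GradedAux.shiftGrade_of Mod hd]
        exact Mod.smul_mem _ _ hd _ _ hm hr
      · rw [GradedAux.shiftGrade_not Mod hd]
        exact AddSubgroup.mem_bot.mpr (Mod.smul_ne _ _ hd _ _ hm hr)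
  · -- density
    intro n γs δs u v hPLI hv
    have hu := hPLI.1
    have hex : ∀ j : Fin n, ∃ r : R,
        (∀ i, i ≠ j → Mod.smul (u i) r = 0) ∧ Mod.smul (u j) r = v j := by
      intro j
      by_cases hdeg : G.tgt (γs j) = G.tgt γ₀
      case neg =>
        have hvj : v j = 0 := by
          have hvm := (hv j).1
          rw [h0 (δs j) (by rw [(hv j).2]; exact hdeg)] at hvm
          exact AddSubgroup.mem_bot.mp hvm
        exact ⟨0, fun i _ => GradedAux.smul_zero0 Mod _,
          by rw [GradedAux.smul_zero0 Mod, hvj]⟩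
      set m' : Fin n → M := fun i => if i = j then 0 else u i with hm'def
      have hm'g : ∀ i, m' i ∈ Mod.grade (γs i) := by
        intro i
        by_cases hij : i = j
        · simp only [hm'def, if_pos hij]
          exact zero_mem _
        · simp only [hm'def, if_neg hij]
          exact hu i
      have hm'j : m' j = 0 := by simp [hm'def]
      have hm'ne : ∀ i, i ≠ j → m' i = u i := fun i hij => by simp [hm'def, hij]
      set A := GradedAux.annSub Mod m' with hA
      set N := A.map (GradedAux.lmulHom Mod (u j)) with hN
      rcases hsimple.2 N (GradedAux.isGradedSub_annImage Mod m' γs hm'g (hu j)) with hNb | hNt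
      · exfalso
        have H : ∀ r : R, (∀ i, Mod.smul (m' i) r = 0) → Mod.smul (u j) r = 0 := by
          intro r hr
          have hmem : Mod.smul (u j) r ∈ N := AddSubgroup.mem_map.mpr ⟨r, hr, rfl⟩
          rw [hNb] at hmem
          exact AddSubgroup.mem_bot.mp hmem
        obtain ⟨a, ha, hsum⟩ := GradedAux.key Mod hsimple n γs m' hm'g (γs j) (u j) (hu j) H
        set b : Fin n → (M →+ M) := fun i => if i = j then -(AddMonoidHom.id M) else a i
          with hbdef
        have hconds : ∀ i, b i ∈ Mod.EndR ∧
            ∀ (σ : Γ) (m : M), m ∈ Mod.grade σ → G.tgt σ ≠ G.tgt (γs i) → b i m = 0 := by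
          intro i
          by_cases hij : i = j
          · subst hij
            constructor
            · simp only [hbdef, if_pos rfl]
              exact neg_mem (GradedAux.homGrade_subset_EndR Mod hid)
            · intro σ m hmσ htne
              simp only [hbdef, if_pos rfl]
              have hmz : m = 0 := by
                have h2 := h0 σ (fun he => htne (he.trans hdeg.symm))
                rw [h2] at hmσ
                exact AddSubgroup.mem_bot.mp hmσ
              simp [hmz]
          · simp only [hbdef, if_neg hij]
            exact ha i
        have hsum0 : (∑ i, b i (u i)) = 0 := by
          have h1 : (∑ i ∈ Finset.univ.erase j, b i (u i))
              = ∑ i ∈ Finset.univ.erase j, a i (m' i) := by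
            refine Finset.sum_congr rfl (fun i hi => ?_)
            have hij := Finset.ne_of_mem_erase hi
            simp only [hbdef, if_neg hij, hm'ne i hij]
          have h3 := Finset.add_sum_erase Finset.univ (fun i => a i (m' i)) (Finset.mem_univ j)
          have h3' : (a j) (m' j) + ∑ x ∈ Finset.univ.erase j, (a x) (m' x)
              = ∑ x : Fin n, (a x) (m' x) := h3
          rw [hm'j, map_zero, zero_add] at h3'
          have h4 := Finset.add_sum_erase Finset.univ (fun i => b i (u i)) (Finset.mem_univ j)
          have h4' : (b j) (u j) + ∑ x ∈ Finset.univ.erase j, (b x) (u x)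
              = ∑ x : Fin n, (b x) (u x) := h4
          rw [← h4', h1, h3', hsum]
          show b j (u j) + u j = 0
          simp [hbdef]
        have hbj := hPLI.2 b hconds hsum0 j
        have hbj' : -(AddMonoidHom.id M) = 0 := by
          rw [show -(AddMonoidHom.id M) = b j from by simp [hbdef], hbj]
        have hx := congrArg (fun f : M →+ M => f x0) hbj'
        simp only [AddMonoidHom.neg_apply, AddMonoidHom.id_apply,
          AddMonoidHom.zero_apply, neg_eq_zero] at hx
        exact hx0ne hx
      · have hvmem : v j ∈ N := hNt ▸ AddSubgroup.mem_top (v j)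
        obtain ⟨r, hr, he⟩ := AddSubgroup.mem_map.mp hvmem
        refine ⟨r, ?_, he⟩
        intro i hij
        have hri := (GradedAux.mem_annSub Mod).mp hr i
        rwa [hm'ne i hij] at hri
    choose rr hrr1 hrr2 using hex
    refine ⟨∑ j, rr j, ?_⟩
    intro i
    rw [GradedAux.smul_sum]
    rw [Finset.sum_eq_single i (fun j _ hji => hrr1 j i (Ne.symm hji))
      (fun hn => absurd (Finset.mem_univ i) hn)]
    exact hrr2 i
end

section
/- Let Γ be a groupoid and R an object unital Γ-graded ring. The following are equivalent: (1) R is a Γ-graded division ring; (2) R_R is a Γ₀-simple right R-module, i.e. R(e) is a gr-simple right R-module for every e ∈ Γ'₀(R); (3) R is right gr-semisimple and R_e is a division ring for every e ∈ Γ'₀(R); (4) there exists a family {R_j}_{j∈J} of gr-prime Γ-graded division rings with supp(R_j) ∩ supp(R_{j'}) = ∅ for all distinct j, j' ∈ J such that R = ⊕_{j∈J} R_j (as Γ-graded rings). -/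
set_option autoImplicit false

universe u v w x y

section GDRaux

open DirectSum

namespace GDRaux

variable {Γ : Type u} {G : Gpd Γ}

/-! ### Groupoid lemmas -/

lemma isObj_src (γ : Γ) : G.IsObj (G.src γ) := G.src_src γ

lemma isObj_tgt (γ : Γ) : G.IsObj (G.tgt γ) := G.src_tgt γ

lemma tgt_obj {e : Γ} (he : G.IsObj e) : G.tgt e = e := by
  calc G.tgt e = G.tgt (G.src e) := by rw [he]
  _ = G.src e := G.tgt_src e
  _ = e := he

lemma comp_congr_left {x y δ : Γ} (hxy : x = y) (h : G.src x = G.tgt δ) :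
    G.comp x δ h = G.comp y δ (hxy ▸ h) := by subst hxy; rfl

lemma comp_congr_right {γ x y : Γ} (hxy : x = y) (h : G.src γ = G.tgt x) :
    G.comp γ x h = G.comp γ y (hxy ▸ h) := by subst hxy; rfl

lemma comp_src_left {δ x : Γ} (hx : x = G.tgt δ) (h : G.src x = G.tgt δ) :
    G.comp x δ h = δ := by subst hx; exact G.id_comp δ

lemma comp_tgt_right {γ x : Γ} (hx : x = G.src γ) (h : G.src γ = G.tgt x) :
    G.comp γ x h = γ := by subst hx; exact G.comp_id γ

lemma inv_obj {e : Γ} (he : G.IsObj e) : G.inv e = e := by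
  have h1 : G.comp e (G.inv e) ((G.tgt_inv e).symm) = G.tgt e := G.comp_inv e
  have h2 : G.comp e (G.inv e) ((G.tgt_inv e).symm) = G.inv e := by
    apply comp_src_left
    rw [G.tgt_inv, he]
  rw [h2] at h1
  rw [h1, tgt_obj he]

lemma inv_comp_comp {γ δ : Γ} (h : G.src γ = G.tgt δ)
    (h2 : G.src (G.inv γ) = G.tgt (G.comp γ δ h)) :
    G.comp (G.inv γ) (G.comp γ δ h) h2 = δ := by
  have ha := G.comp_assoc (G.inv γ) γ δ (G.src_inv γ) h
  have hb : G.comp (G.comp (G.inv γ) γ (G.src_inv γ)) δ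
      (((G.src_comp _ _ _).trans h)) = δ := by
    rw [comp_congr_left (G.inv_comp γ)]
    exact comp_src_left h _
  exact ha.symm.trans hb

lemma comp_comp_inv {δ γ : Γ} (h : G.src δ = G.tgt γ)
    (h2 : G.src (G.comp δ γ h) = G.tgt (G.inv γ)) :
    G.comp (G.comp δ γ h) (G.inv γ) h2 = δ := by
  have ha := G.comp_assoc δ γ (G.inv γ) h ((G.tgt_inv γ).symm)
  have hb : G.comp δ (G.comp γ (G.inv γ) ((G.tgt_inv γ).symm))
      (h.trans (G.tgt_comp _ _ _).symm) = δ := by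
    rw [comp_congr_right (G.comp_inv γ)]
    exact comp_tgt_right h.symm _
  exact ha.trans hb

lemma comp_left_cancel {γ δ δ' : Γ} (h : G.src γ = G.tgt δ) (h' : G.src γ = G.tgt δ')
    (heq : G.comp γ δ h = G.comp γ δ' h') : δ = δ' := by
  have h2 : G.src (G.inv γ) = G.tgt (G.comp γ δ h) := by
    rw [G.src_inv, G.tgt_comp]
  calc δ = G.comp (G.inv γ) (G.comp γ δ h) h2 := (inv_comp_comp h h2).symm
  _ = G.comp (G.inv γ) (G.comp γ δ' h') (heq ▸ h2) := comp_congr_right heq h2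
  _ = δ' := inv_comp_comp h' _

lemma comp_right_cancel {γ δ δ' : Γ} (h : G.src δ = G.tgt γ) (h' : G.src δ' = G.tgt γ)
    (heq : G.comp δ γ h = G.comp δ' γ h') : δ = δ' := by
  have h2 : G.src (G.comp δ γ h) = G.tgt (G.inv γ) := by
    rw [G.src_comp, G.tgt_inv]
  calc δ = G.comp (G.comp δ γ h) (G.inv γ) h2 := (comp_comp_inv h h2).symm
  _ = G.comp (G.comp δ' γ h') (G.inv γ) (heq ▸ h2) := comp_congr_left heq h2
  _ = δ' := comp_comp_inv h' _

lemma eq_comp_of_tgt_eq {γ η : Γ} (h : G.tgt η = G.tgt γ) :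
    ∃ (δ : Γ) (hc : G.src γ = G.tgt δ), η = G.comp γ δ hc := by
  have hc0 : G.src (G.inv γ) = G.tgt η := by rw [G.src_inv, h]
  refine ⟨G.comp (G.inv γ) η hc0, by rw [G.tgt_comp, G.tgt_inv], ?_⟩
  have ha := G.comp_assoc γ (G.inv γ) η ((G.tgt_inv γ).symm) hc0
  have hb : G.comp (G.comp γ (G.inv γ) ((G.tgt_inv γ).symm)) η
      ((G.src_comp _ _ _).trans hc0) = η := by
    rw [comp_congr_left (G.comp_inv γ)]
    exact comp_src_left h.symm _
  exact hb.symm.trans ha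


/-! ### Projections onto homogeneous components -/

variable {R : Type v} [NonUnitalRing R]

noncomputable local instance instDecEqAux : DecidableEq Γ := Classical.decEq Γ

lemma internal (RG : GammaRing G R) :
    DirectSum.IsInternal (fun γ : Γ => AddSubgroup.toIntSubmodule (RG.grade γ)) := by
  rw [DirectSum.isInternal_submodule_iff_iSupIndep_and_iSup_eq_top]
  constructor
  · intro γ
    rw [disjoint_iff]
    apply le_bot_iff.mp
    intro x hx
    have h1 : x ∈ RG.grade γ := hx.1
    have h2 : x ∈ (⨆ (δ : Γ) (_ : δ ≠ γ), RG.grade δ) := by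
      have hle : (⨆ (δ : Γ) (_ : δ ≠ γ), AddSubgroup.toIntSubmodule (RG.grade δ) : Submodule ℤ R)
          ≤ AddSubgroup.toIntSubmodule (⨆ (δ : Γ) (_ : δ ≠ γ), RG.grade δ) := by
        apply iSup₂_le
        intro δ hδ y hy
        exact AddSubgroup.mem_iSup_of_mem δ
          (AddSubgroup.mem_iSup_of_mem hδ (show y ∈ RG.grade δ from hy))
      exact hle hx.2
    have hind := RG.grade_indep γ
    have hx3 : x ∈ RG.grade γ ⊓ (⨆ (δ : Γ) (_ : δ ≠ γ), RG.grade δ) := ⟨h1, h2⟩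
    rw [hind] at hx3
    simpa using hx3
  · apply le_antisymm le_top
    intro x _
    have hx : x ∈ (⊤ : AddSubgroup R) := trivial
    rw [← RG.grade_iSup] at hx
    have hle : (⨆ γ : Γ, RG.grade γ) ≤
        (⨆ γ : Γ, AddSubgroup.toIntSubmodule (RG.grade γ)).toAddSubgroup := by
      apply iSup_le
      intro γ y hy
      exact le_iSup (fun γ : Γ => AddSubgroup.toIntSubmodule (RG.grade γ)) γ
        (show y ∈ AddSubgroup.toIntSubmodule (RG.grade γ) from hy)
    exact hle hx

noncomputable def dcmp (RG : GammaRing G R) :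
    (⨁ γ : Γ, (AddSubgroup.toIntSubmodule (RG.grade γ) : Submodule ℤ R)) ≃ₗ[ℤ] R :=
  LinearEquiv.ofBijective (DirectSum.coeLinearMap _) (internal RG)

noncomputable def proj (RG : GammaRing G R) (γ : Γ) (x : R) : R :=
  (((dcmp RG).symm x) γ : R)

lemma proj_mem (RG : GammaRing G R) (γ : Γ) (x : R) : proj RG γ x ∈ RG.grade γ :=
  (((dcmp RG).symm x) γ).2

lemma proj_add (RG : GammaRing G R) (γ : Γ) (x y : R) :
    proj RG γ (x + y) = proj RG γ x + proj RG γ y := by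
  unfold proj
  rw [map_add]
  rfl

lemma proj_zero (RG : GammaRing G R) (γ : Γ) : proj RG γ (0 : R) = 0 := by
  unfold proj
  rw [map_zero]
  rfl

lemma proj_neg (RG : GammaRing G R) (γ : Γ) (x : R) : proj RG γ (-x) = - proj RG γ x := by
  unfold proj
  rw [map_neg]
  rfl

lemma proj_of_mem (RG : GammaRing G R) {γ : Γ} {x : R} (hx : x ∈ RG.grade γ) :
    proj RG γ x = x := by
  unfold proj dcmp
  rw [DirectSum.IsInternal.ofBijective_coeLinearMap_of_mem (internal RG) hx]

lemma proj_of_mem_ne (RG : GammaRing G R) {γ δ : Γ} {x : R} (hx : x ∈ RG.grade δ)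
    (hne : δ ≠ γ) : proj RG γ x = 0 := by
  unfold proj dcmp
  have h := DirectSum.IsInternal.ofBijective_coeLinearMap_of_ne (internal RG) hne
    (⟨x, hx⟩ : AddSubgroup.toIntSubmodule (RG.grade δ))
  rw [show ((⟨x, hx⟩ : AddSubgroup.toIntSubmodule (RG.grade δ)) : R) = x from rfl] at h
  rw [h]
  rfl

lemma exists_finset_proj (RG : GammaRing G R) (x : R) :
    ∃ s : Finset Γ, (∀ γ ∉ s, proj RG γ x = 0) ∧ x = ∑ γ ∈ s, proj RG γ x := by
  set d := (dcmp RG).symm x with hd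
  refine ⟨d.support, ?_, ?_⟩
  · intro γ hγ
    rw [DFinsupp.notMem_support_iff] at hγ
    show ((d γ : R)) = 0
    rw [hγ]
    rfl
  · have h1 : (∑ γ ∈ d.support, DirectSum.of
        (fun γ : Γ => (AddSubgroup.toIntSubmodule (RG.grade γ) : Submodule ℤ R)) γ (d γ)) = d :=
      DirectSum.sum_support_of d
    have h3 : (dcmp RG) d = x := by
      rw [hd, LinearEquiv.apply_symm_apply]
    calc x = (dcmp RG) d := h3.symm
    _ = (dcmp RG) (∑ γ ∈ d.support, DirectSum.of _ γ (d γ)) := by rw [h1]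
    _ = ∑ γ ∈ d.support, (dcmp RG) (DirectSum.of _ γ (d γ)) := map_sum _ _ _
    _ = ∑ γ ∈ d.support, ((d γ : R)) := by
        refine Finset.sum_congr rfl (fun γ _ => ?_)
        unfold dcmp
        exact DirectSum.coeLinearMap_of (R := ℤ)
          (fun γ : Γ => AddSubgroup.toIntSubmodule (RG.grade γ)) γ (d γ)
    _ = ∑ γ ∈ d.support, proj RG γ x := rfl

lemma eq_zero_of_proj (RG : GammaRing G R) {x : R} (h : ∀ γ, proj RG γ x = 0) : x = 0 := by
  obtain ⟨s, -, hsum⟩ := exists_finset_proj RG x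
  rw [hsum]
  exact Finset.sum_eq_zero fun γ _ => h γ

lemma exists_proj_ne_zero (RG : GammaRing G R) {x : R} (h : x ≠ 0) :
    ∃ γ, proj RG γ x ≠ 0 := by
  by_contra hc
  push_neg at hc
  exact h (eq_zero_of_proj RG hc)

lemma mem_sup_grades (RG : GammaRing G R) {S : AddSubgroup R}
    (h : ∀ γ, RG.grade γ ≤ S) (x : R) : x ∈ S := by
  have : (⊤ : AddSubgroup R) ≤ S := by
    rw [← RG.grade_iSup]
    exact iSup_le h
  exact this trivial

lemma mem_biSup_iff (RG : GammaRing G R) (p : Γ → Prop) (x : R) :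
    x ∈ (⨆ (γ : Γ) (_ : p γ), RG.grade γ) ↔ ∀ γ, ¬ p γ → proj RG γ x = 0 := by
  constructor
  · intro hx
    let T : AddSubgroup R :=
      { carrier := {y | ∀ γ, ¬ p γ → proj RG γ y = 0}
        zero_mem' := fun γ _ => proj_zero RG γ
        add_mem' := by
          intro a b ha hb γ hγ
          rw [proj_add, ha γ hγ, hb γ hγ, add_zero]
        neg_mem' := by
          intro a ha γ hγ
          rw [proj_neg, ha γ hγ, neg_zero] }
    have hle : (⨆ (γ : Γ) (_ : p γ), RG.grade γ) ≤ T := by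
      apply iSup₂_le
      intro δ hδ y hy γ hγ
      exact proj_of_mem_ne RG hy (fun h => hγ (h ▸ hδ))
    exact hle hx
  · intro h
    obtain ⟨s, -, hsum⟩ := exists_finset_proj RG x
    rw [hsum]
    apply AddSubgroup.sum_mem
    intro γ _
    by_cases hp : p γ
    · exact AddSubgroup.mem_iSup_of_mem γ (AddSubgroup.mem_iSup_of_mem hp (proj_mem RG γ x))
    · rw [h γ hp]
      exact zero_mem _

lemma graded_iff (RG : GammaRing G R) (N : AddSubgroup R) :
    N ≤ (⨆ γ : Γ, RG.grade γ ⊓ N) ↔ ∀ x ∈ N, ∀ γ, proj RG γ x ∈ N := by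
  constructor
  · intro hle x hx γ
    let T : AddSubgroup R :=
      { carrier := {y | ∀ δ, proj RG δ y ∈ N}
        zero_mem' := fun δ => by rw [proj_zero]; exact zero_mem N
        add_mem' := by
          intro a b ha hb δ
          rw [proj_add]; exact add_mem (ha δ) (hb δ)
        neg_mem' := by
          intro a ha δ
          rw [proj_neg]; exact neg_mem (ha δ) }
    have h2 : (⨆ γ : Γ, RG.grade γ ⊓ N) ≤ T := by
      apply iSup_le
      intro δ y hy δ'
      by_cases hd : δ = δ'
      · rw [proj_of_mem RG (hd ▸ hy.1)]; exact hy.2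
      · rw [proj_of_mem_ne RG hy.1 hd]; exact zero_mem N
    exact h2 (hle hx) γ
  · intro h x hx
    obtain ⟨s, -, hsum⟩ := exists_finset_proj RG x
    rw [hsum]
    apply AddSubgroup.sum_mem
    intro γ _
    exact AddSubgroup.mem_iSup_of_mem γ ⟨proj_mem RG γ x, h x hx γ⟩


/-! ### Projections and multiplication -/

lemma proj_mul_left (RG : GammaRing G R) {γ δ : Γ} {a : R} (ha : a ∈ RG.grade γ)
    (h : G.src γ = G.tgt δ) (x : R) :
    proj RG (G.comp γ δ h) (a * x) = a * proj RG δ x := by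
  let T : AddSubgroup R :=
    { carrier := {y | proj RG (G.comp γ δ h) (a * y) = a * proj RG δ y}
      zero_mem' := by simp [proj_zero]
      add_mem' := by
        intro p q hp hq
        show proj RG _ (a * (p + q)) = a * proj RG δ (p + q)
        rw [mul_add, proj_add, proj_add, mul_add, hp, hq]
      neg_mem' := by
        intro p hp
        show proj RG _ (a * (-p)) = a * proj RG δ (-p)
        rw [mul_neg, proj_neg, proj_neg, mul_neg, hp] }
  refine mem_sup_grades RG (S := T) ?_ x
  intro τ y hy
  show proj RG (G.comp γ δ h) (a * y) = a * proj RG δ y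
  by_cases hτ : τ = δ
  · subst hτ
    rw [proj_of_mem RG hy, proj_of_mem RG (RG.mul_mem γ τ h a y ha hy)]
  · rw [proj_of_mem_ne RG hy hτ, mul_zero]
    by_cases hc : G.src γ = G.tgt τ
    · refine proj_of_mem_ne RG (RG.mul_mem γ τ hc a y ha hy) ?_
      intro heq
      exact hτ (comp_left_cancel hc h heq)
    · rw [RG.mul_ne γ τ hc a y ha hy, proj_zero]

lemma proj_mul_right (RG : GammaRing G R) {γ δ : Γ} {a : R} (ha : a ∈ RG.grade γ)
    (h : G.src δ = G.tgt γ) (x : R) :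
    proj RG (G.comp δ γ h) (x * a) = proj RG δ x * a := by
  let T : AddSubgroup R :=
    { carrier := {y | proj RG (G.comp δ γ h) (y * a) = proj RG δ y * a}
      zero_mem' := by simp [proj_zero]
      add_mem' := by
        intro p q hp hq
        show proj RG _ ((p + q) * a) = proj RG δ (p + q) * a
        rw [add_mul, proj_add, proj_add, add_mul, hp, hq]
      neg_mem' := by
        intro p hp
        show proj RG _ ((-p) * a) = proj RG δ (-p) * a
        rw [neg_mul, proj_neg, proj_neg, neg_mul, hp] }
  refine mem_sup_grades RG (S := T) ?_ x
  intro τ y hy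
  show proj RG (G.comp δ γ h) (y * a) = proj RG δ y * a
  by_cases hτ : τ = δ
  · subst hτ
    rw [proj_of_mem RG hy, proj_of_mem RG (RG.mul_mem τ γ h y a hy ha)]
  · rw [proj_of_mem_ne RG hy hτ, zero_mul]
    by_cases hc : G.src τ = G.tgt γ
    · refine proj_of_mem_ne RG (RG.mul_mem τ γ hc y a hy ha) ?_
      intro heq
      exact hτ (comp_right_cancel hc h heq)
    · rw [RG.mul_ne τ γ hc y a hy ha, proj_zero]

lemma proj_mul_left_zero (RG : GammaRing G R) {γ η : Γ} {a : R} (ha : a ∈ RG.grade γ)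
    (hη : G.tgt η ≠ G.tgt γ) (x : R) :
    proj RG η (a * x) = 0 := by
  let T : AddSubgroup R :=
    { carrier := {y | proj RG η (a * y) = 0}
      zero_mem' := by simp [proj_zero]
      add_mem' := by
        intro p q hp hq
        show proj RG η (a * (p + q)) = 0
        rw [mul_add, proj_add, hp, hq, add_zero]
      neg_mem' := by
        intro p hp
        show proj RG η (a * (-p)) = 0
        rw [mul_neg, proj_neg, hp, neg_zero] }
  refine mem_sup_grades RG (S := T) ?_ x
  intro τ y hy
  show proj RG η (a * y) = 0
  by_cases hc : G.src γ = G.tgt τ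
  · refine proj_of_mem_ne RG (RG.mul_mem γ τ hc a y ha hy) ?_
    intro heq
    apply hη
    rw [← heq, G.tgt_comp]
  · rw [RG.mul_ne γ τ hc a y ha hy, proj_zero]

/-! ### The principal graded right ideal `aR` -/

def lmulSub (a : R) : AddSubgroup R where
  carrier := Set.range (fun r => a * r)
  zero_mem' := ⟨0, mul_zero a⟩
  add_mem' := by
    rintro _ _ ⟨r, rfl⟩ ⟨s, rfl⟩
    exact ⟨r + s, mul_add a r s⟩
  neg_mem' := by
    rintro _ ⟨r, rfl⟩
    exact ⟨-r, mul_neg a r⟩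

lemma lmulSub_mul {a : R} {x : R} (hx : x ∈ lmulSub a) (r : R) : x * r ∈ lmulSub a := by
  obtain ⟨s, rfl⟩ := hx
  exact ⟨s * r, (mul_assoc a s r).symm⟩

lemma mem_lmulSub_self (RG : GammaRing G R) {γ : Γ} {a : R} (ha : a ∈ RG.grade γ) :
    a ∈ lmulSub a :=
  ⟨RG.one (G.src γ), RG.mul_one' γ a ha⟩

lemma lmulSub_proj (RG : GammaRing G R) {γ : Γ} {a : R} (ha : a ∈ RG.grade γ)
    (η : Γ) {x : R} (hx : x ∈ lmulSub a) : proj RG η x ∈ lmulSub a := by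
  obtain ⟨r, rfl⟩ := hx
  by_cases hη : G.tgt η = G.tgt γ
  · obtain ⟨δ, hc, hcomp⟩ := eq_comp_of_tgt_eq (G := G) hη
    rw [hcomp, proj_mul_left RG ha hc r]
    exact ⟨proj RG δ r, rfl⟩
  · rw [proj_mul_left_zero RG ha hη r]
    exact zero_mem _

lemma lmulSub_le_eComp (RG : GammaRing G R) {γ : Γ} {a : R} (ha : a ∈ RG.grade γ) :
    lmulSub a ≤ (⨆ (η : Γ) (_ : G.tgt η = G.tgt γ), RG.grade η) := by
  rintro _ ⟨r, rfl⟩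
  rw [mem_biSup_iff]
  intro η hη
  exact proj_mul_left_zero RG ha hη r

/-! ### Division helpers -/

lemma one_tgt_ne_zero (RG : GammaRing G R) {γ : Γ} {a : R} (ha : a ∈ RG.grade γ)
    (h0 : a ≠ 0) : RG.one (G.tgt γ) ≠ 0 := by
  intro h
  exact h0 (by rw [← RG.one_mul' γ a ha, h, zero_mul])

lemma one_src_ne_zero (RG : GammaRing G R) {γ : Γ} {a : R} (ha : a ∈ RG.grade γ)
    (h0 : a ≠ 0) : RG.one (G.src γ) ≠ 0 := by
  intro h
  exact h0 (by rw [← RG.mul_one' γ a ha, h, mul_zero])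

lemma isGrDivision_of_right_inv (RG : GammaRing G R) (hR : ∃ a : R, a ≠ 0)
    (H : ∀ (γ : Γ) (a : R), a ∈ RG.grade γ → a ≠ 0 →
      ∃ b ∈ RG.grade (G.inv γ), a * b = RG.one (G.tgt γ)) :
    RG.IsGrDivision := by
  refine ⟨hR, fun γ a ha h0 => ?_⟩
  obtain ⟨b, hb, hab⟩ := H γ a ha h0
  have hb0 : b ≠ 0 := by
    intro h
    exact one_tgt_ne_zero RG ha h0 (by rw [← hab, h, mul_zero])
  obtain ⟨c, hc, hbc⟩ := H (G.inv γ) b hb hb0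
  rw [G.inv_inv] at hc
  rw [G.tgt_inv] at hbc
  have hca : c = a := by
    have h1 : a * (b * c) = a := by
      rw [hbc]
      exact RG.mul_one' γ a ha
    have h2 : (a * b) * c = c := by
      rw [hab]
      exact RG.one_mul' γ c hc
    rw [mul_assoc] at h2
    rw [h1] at h2
    exact h2.symm
  refine ⟨b, hb, hab, ?_⟩
  rw [← hca]
  exact hbc

lemma div_mul_ne_zero (RG : GammaRing G R) (h1 : RG.IsGrDivision) {γ δ : Γ} {a b : R}
    (ha : a ∈ RG.grade γ) (hb : b ∈ RG.grade δ) (ha0 : a ≠ 0) (hb0 : b ≠ 0)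
    (h : G.src γ = G.tgt δ) : a * b ≠ 0 := by
  obtain ⟨c, hc, hca1, hca2⟩ := h1.2 γ a ha ha0
  intro hab
  have h2 : c * (a * b) = 0 := by rw [hab, mul_zero]
  rw [← mul_assoc, hca2] at h2
  rw [h] at h2
  rw [RG.one_mul' δ b hb] at h2
  exact hb0 h2

lemma grade_ne_bot_iff (RG : GammaRing G R) (γ : Γ) :
    RG.grade γ ≠ ⊥ ↔ ∃ a ∈ RG.grade γ, a ≠ 0 := by
  constructor
  · intro h
    by_contra hc
    push_neg at hc
    exact h ((AddSubgroup.eq_bot_iff_forall _).mpr hc)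
  · rintro ⟨a, ha, h0⟩ hbot
    rw [hbot] at ha
    exact h0 ha

lemma addSubgroup_ne_bot_iff (N : AddSubgroup R) :
    N ≠ ⊥ ↔ ∃ a ∈ N, a ≠ 0 := by
  constructor
  · intro h
    by_contra hc
    push_neg at hc
    exact h ((AddSubgroup.eq_bot_iff_forall _).mpr hc)
  · rintro ⟨a, ha, h0⟩ hbot
    rw [hbot] at ha
    exact h0 ha


/-! ### Regular module lemmas -/

lemma regular_eComp (RG : GammaRing G R) (e : Γ) :
    RG.regular.eComp e = ⨆ (γ : Γ) (_ : G.tgt γ = e), RG.grade γ := rfl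

lemma regular_isGradedSub_iff (RG : GammaRing G R) (N : AddSubgroup R) :
    RG.regular.IsGradedSub N ↔
      ((∀ m ∈ N, ∀ a : R, m * a ∈ N) ∧ ∀ x ∈ N, ∀ γ, proj RG γ x ∈ N) := by
  constructor
  · rintro ⟨h1, h2⟩
    exact ⟨h1, (graded_iff RG N).mp h2⟩
  · rintro ⟨h1, h2⟩
    exact ⟨h1, (graded_iff RG N).mpr h2⟩

lemma mul_mem_of_forall (RG : GammaRing G R) {p q : Γ → Prop} {W : AddSubgroup R}
    (h : ∀ γ, p γ → ∀ δ, q δ → ∀ a ∈ RG.grade γ, ∀ b ∈ RG.grade δ, a * b ∈ W)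
    {x y : R} (hx : x ∈ ⨆ (γ : Γ) (_ : p γ), RG.grade γ)
    (hy : y ∈ ⨆ (δ : Γ) (_ : q δ), RG.grade δ) :
    x * y ∈ W := by
  let T : AddSubgroup R :=
    { carrier := {x | ∀ y ∈ (⨆ (δ : Γ) (_ : q δ), RG.grade δ), x * y ∈ W}
      zero_mem' := by
        intro y _
        rw [zero_mul]
        exact zero_mem W
      add_mem' := by
        intro p' q' hp hq y hy
        rw [add_mul]
        exact add_mem (hp y hy) (hq y hy)
      neg_mem' := by
        intro p' hp y hy
        rw [neg_mul]
        exact neg_mem (hp y hy) }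
  suffices hT : (⨆ (γ : Γ) (_ : p γ), RG.grade γ) ≤ T from hT hx y hy
  apply iSup₂_le
  intro γ hγ a ha
  intro y' hy'
  let T' : AddSubgroup R :=
    { carrier := {y | a * y ∈ W}
      zero_mem' := by
        show a * 0 ∈ W
        rw [mul_zero]
        exact zero_mem W
      add_mem' := by
        intro p' q' hp hq
        show a * (p' + q') ∈ W
        rw [mul_add]
        exact add_mem hp hq
      neg_mem' := by
        intro p' hp
        show a * (-p') ∈ W
        rw [mul_neg]
        exact neg_mem hp }
  suffices hT' : (⨆ (δ : Γ) (_ : q δ), RG.grade δ) ≤ T' from hT' hy'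
  apply iSup₂_le
  intro δ hδ b hb
  exact h γ hγ δ hδ a ha b hb

lemma eComp_mul (RG : GammaRing G R) {e : Γ} {x : R} (hx : x ∈ RG.regular.eComp e)
    (r : R) : x * r ∈ RG.regular.eComp e := by
  rw [regular_eComp] at hx ⊢
  refine mul_mem_of_forall RG (q := fun _ => True) ?_ hx ?_
  · intro γ hγ δ _ a ha b hb
    by_cases hc : G.src γ = G.tgt δ
    · refine AddSubgroup.mem_iSup_of_mem (G.comp γ δ hc) (AddSubgroup.mem_iSup_of_mem ?_
        (RG.mul_mem γ δ hc a b ha hb))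
      rw [G.tgt_comp]
      exact hγ
    · rw [RG.mul_ne γ δ hc a b ha hb]
      exact zero_mem _
  · refine mem_sup_grades RG ?_ r
    intro δ y hy
    exact AddSubgroup.mem_iSup_of_mem δ (AddSubgroup.mem_iSup_of_mem trivial hy)

lemma eComp_isGradedSub (RG : GammaRing G R) (e : Γ) :
    RG.regular.IsGradedSub (RG.regular.eComp e) := by
  rw [regular_isGradedSub_iff]
  refine ⟨fun m hm a => eComp_mul RG hm a, ?_⟩
  intro x hx γ
  by_cases hγ : G.tgt γ = e
  · rw [regular_eComp]
    exact AddSubgroup.mem_iSup_of_mem γ (AddSubgroup.mem_iSup_of_mem hγ (proj_mem RG γ x))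
  · rw [regular_eComp] at hx
    rw [(mem_biSup_iff RG _ x).mp hx γ hγ]
    exact zero_mem _

lemma grade_le_eComp (RG : GammaRing G R) (γ : Γ) :
    RG.grade γ ≤ RG.regular.eComp (G.tgt γ) := by
  rw [regular_eComp]
  exact le_iSup_of_le γ (le_iSup_of_le rfl le_rfl)

/-! ### (1) → (2) -/

lemma eComp_grSimple (RG : GammaRing G R) (h1 : RG.IsGrDivision) {e : Γ}
    (hobj : G.IsObj e) (hne : RG.regular.eComp e ≠ ⊥) :
    RG.regular.IsGrSimpleSub (RG.regular.eComp e) := by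
  refine ⟨eComp_isGradedSub RG e, hne, ?_⟩
  intro P hP hPle
  by_cases hPbot : P = ⊥
  · left; exact hPbot
  right
  rw [regular_isGradedSub_iff] at hP
  obtain ⟨x, hxP, hx0⟩ := (addSubgroup_ne_bot_iff P).mp hPbot
  obtain ⟨γ, hpγ⟩ := exists_proj_ne_zero RG hx0
  have hpP : proj RG γ x ∈ P := hP.2 x hxP γ
  have htγ : G.tgt γ = e := by
    by_contra hne'
    have hxe : x ∈ RG.regular.eComp e := hPle hxP
    rw [regular_eComp] at hxe
    exact hpγ ((mem_biSup_iff RG _ x).mp hxe γ hne')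
  obtain ⟨b, hb, hab, -⟩ := h1.2 γ (proj RG γ x) (proj_mem RG γ x) hpγ
  have h1e : RG.one e ∈ P := by
    have hmul := hP.1 _ hpP b
    rw [hab, htγ] at hmul
    exact hmul
  refine le_antisymm hPle ?_
  rw [regular_eComp]
  apply iSup₂_le
  intro δ hδ y hy
  have hy' : RG.one e * y = y := by
    rw [← hδ]
    exact RG.one_mul' δ y hy
  rw [← hy']
  exact hP.1 _ h1e y

lemma impl12 (RG : GammaRing G R) (hR : ∃ a : R, a ≠ 0) (h1 : RG.IsGrDivision) :
    RG.regular.IsGamma0Simple :=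
  ⟨hR, fun _ hobj hne => eComp_grSimple RG h1 hobj hne⟩

/-! ### (2) → (1) -/

lemma impl21 (RG : GammaRing G R) (h2 : RG.regular.IsGamma0Simple) : RG.IsGrDivision := by
  refine isGrDivision_of_right_inv RG h2.1 ?_
  intro γ a ha h0
  have hobj : G.IsObj (G.tgt γ) := isObj_tgt γ
  have hgle : RG.grade γ ≤ RG.regular.eComp (G.tgt γ) := grade_le_eComp RG γ
  have hne : RG.regular.eComp (G.tgt γ) ≠ ⊥ := by
    intro hbot
    have hmem := hgle ha
    rw [hbot] at hmem
    exact h0 (AddSubgroup.mem_bot.mp hmem)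
  obtain ⟨-, -, hmax⟩ := h2.2 (G.tgt γ) hobj hne
  have hPgr : RG.regular.IsGradedSub (lmulSub a) := by
    rw [regular_isGradedSub_iff]
    exact ⟨fun m hm r => lmulSub_mul hm r, fun x hx η => lmulSub_proj RG ha η hx⟩
  have hPle : lmulSub a ≤ RG.regular.eComp (G.tgt γ) := by
    rw [regular_eComp]
    exact lmulSub_le_eComp RG ha
  rcases hmax _ hPgr hPle with hbot | heq
  · exfalso
    have hmem := mem_lmulSub_self RG ha
    rw [hbot] at hmem
    exact h0 (AddSubgroup.mem_bot.mp hmem)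
  · have h1e : RG.one (G.tgt γ) ∈ lmulSub a := by
      rw [heq, regular_eComp]
      exact AddSubgroup.mem_iSup_of_mem (G.tgt γ) (AddSubgroup.mem_iSup_of_mem (tgt_obj hobj)
        (RG.one_mem _ hobj))
    obtain ⟨b₀, hb₀⟩ := h1e
    have hb₀' : a * b₀ = RG.one (G.tgt γ) := hb₀
    refine ⟨proj RG (G.inv γ) b₀, proj_mem RG _ _, ?_⟩
    have hkey := proj_mul_left RG ha ((G.tgt_inv γ).symm) b₀
    rw [hb₀'] at hkey
    rw [show G.comp γ (G.inv γ) ((G.tgt_inv γ).symm) = G.tgt γ from G.comp_inv γ] at hkey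
    rw [proj_of_mem RG (RG.one_mem _ hobj)] at hkey
    exact hkey.symm

/-! ### (1) → (3) -/

lemma impl13 (RG : GammaRing G R) (h1 : RG.IsGrDivision) :
    RG.IsRightGrSemisimple ∧
      ∀ e : Γ, G.IsObj e → RG.one e ≠ 0 → RG.ComponentDivisionRing e := by
  constructor
  · apply le_antisymm le_top
    have hsup : (⨆ γ : Γ, RG.grade γ) ≤
        ⨆ (N : AddSubgroup R) (_ : RG.regular.IsGrSimpleSub N), N := by
      apply iSup_le
      intro γ
      by_cases hγ : RG.regular.eComp (G.tgt γ) = ⊥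
      · have hle := grade_le_eComp RG γ
        rw [hγ] at hle
        exact hle.trans bot_le
      · exact (grade_le_eComp RG γ).trans
          (le_iSup₂ (f := fun (N : AddSubgroup R) (_ : RG.regular.IsGrSimpleSub N) => N)
            (RG.regular.eComp (G.tgt γ)) (eComp_grSimple RG h1 (isObj_tgt γ) hγ))
    rw [RG.grade_iSup] at hsup
    exact hsup
  · intro e hobj h1e
    refine ⟨h1e, fun a ha h0 => ?_⟩
    obtain ⟨b, hb, hab, hba⟩ := h1.2 e a ha h0
    rw [inv_obj hobj] at hb
    rw [tgt_obj hobj] at hab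
    rw [hobj] at hba
    exact ⟨b, hb, hab, hba⟩


/-! ### (3) → (1) -/

lemma impl31 (RG : GammaRing G R) (hR : ∃ a : R, a ≠ 0)
    (h3 : RG.IsRightGrSemisimple ∧
      ∀ e : Γ, G.IsObj e → RG.one e ≠ 0 → RG.ComponentDivisionRing e) :
    RG.IsGrDivision := by
  refine isGrDivision_of_right_inv RG hR ?_
  intro γ a ha h0
  -- the set of graded right ideals intersecting aR trivially
  set S : Set (AddSubgroup R) :=
    {C | (∀ x ∈ C, ∀ r : R, x * r ∈ C) ∧ (∀ x ∈ C, ∀ η : Γ, proj RG η x ∈ C) ∧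
      lmulSub a ⊓ C = ⊥} with hS
  have hbotS : (⊥ : AddSubgroup R) ∈ S := by
    refine ⟨?_, ?_, inf_bot_eq _⟩
    · intro x hx r
      rw [AddSubgroup.mem_bot] at hx
      rw [hx, zero_mul]
      exact zero_mem _
    · intro x hx η
      rw [AddSubgroup.mem_bot] at hx
      rw [hx, proj_zero]
      exact zero_mem _
  have hchain : ∀ c ⊆ S, IsChain (· ≤ ·) c → ∀ y ∈ c, ∃ ub ∈ S, ∀ z ∈ c, z ≤ ub := by
    intro c hcS hc y hyc
    let U : AddSubgroup R :=
      { carrier := ⋃ C ∈ c, (C : Set R)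
        zero_mem' := Set.mem_biUnion hyc (zero_mem y)
        add_mem' := by
          rintro p q hp hq
          rw [Set.mem_iUnion₂] at hp hq
          obtain ⟨C₁, hC₁, hp⟩ := hp
          obtain ⟨C₂, hC₂, hq⟩ := hq
          rcases hc.total hC₁ hC₂ with h12 | h21
          · exact Set.mem_biUnion hC₂ (add_mem (h12 hp) hq)
          · exact Set.mem_biUnion hC₁ (add_mem hp (h21 hq))
        neg_mem' := by
          rintro p hp
          rw [Set.mem_iUnion₂] at hp
          obtain ⟨C₁, hC₁, hp⟩ := hp
          exact Set.mem_biUnion hC₁ (neg_mem hp) }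
    have hmemU : ∀ {x : R}, x ∈ U ↔ ∃ C ∈ c, x ∈ C := by
      intro x
      constructor
      · intro hx
        rw [show (x ∈ U) = (x ∈ ⋃ C ∈ c, (C : Set R)) from rfl] at hx
        rw [Set.mem_iUnion₂] at hx
        obtain ⟨C, hC, hx⟩ := hx
        exact ⟨C, hC, hx⟩
      · rintro ⟨C, hC, hx⟩
        exact Set.mem_biUnion hC hx
    refine ⟨U, ⟨?_, ?_, ?_⟩, ?_⟩
    · intro x hx r
      obtain ⟨C, hC, hx⟩ := hmemU.mp hx
      exact hmemU.mpr ⟨C, hC, (hcS hC).1 x hx r⟩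
    · intro x hx η
      obtain ⟨C, hC, hx⟩ := hmemU.mp hx
      exact hmemU.mpr ⟨C, hC, (hcS hC).2.1 x hx η⟩
    · apply le_bot_iff.mp
      intro x hx
      obtain ⟨C, hC, hxC⟩ := hmemU.mp hx.2
      have : x ∈ lmulSub a ⊓ C := ⟨hx.1, hxC⟩
      rw [(hcS hC).2.2] at this
      exact this
    · intro z hz x hx
      exact hmemU.mpr ⟨z, hz, hx⟩
  obtain ⟨C, -, hCmax⟩ := zorn_le_nonempty₀ S hchain ⊥ hbotS
  have hCS : C ∈ S := hCmax.1
  -- every gr-simple submodule is contained in aR ⊔ C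
  have hsimple_le : ∀ N : AddSubgroup R, RG.regular.IsGrSimpleSub N →
      N ≤ lmulSub a ⊔ C := by
    intro N hN
    by_contra hnot
    have hNgr := (regular_isGradedSub_iff RG N).mp hN.1
    -- the intersection N ⊓ (aR ⊔ C) is a graded submodule of N
    have hsupmul : ∀ x ∈ lmulSub a ⊔ C, ∀ r : R, x * r ∈ lmulSub a ⊔ C := by
      intro x hx r
      obtain ⟨p, hp, q, hq, rfl⟩ := AddSubgroup.mem_sup.mp hx
      rw [add_mul]
      exact add_mem (AddSubgroup.mem_sup_left (lmulSub_mul hp r))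
        (AddSubgroup.mem_sup_right (hCS.1 q hq r))
    have hsupproj : ∀ x ∈ lmulSub a ⊔ C, ∀ η : Γ, proj RG η x ∈ lmulSub a ⊔ C := by
      intro x hx η
      obtain ⟨p, hp, q, hq, rfl⟩ := AddSubgroup.mem_sup.mp hx
      rw [proj_add]
      exact add_mem (AddSubgroup.mem_sup_left (lmulSub_proj RG ha η hp))
        (AddSubgroup.mem_sup_right (hCS.2.1 q hq η))
    have hNIgr : RG.regular.IsGradedSub (N ⊓ (lmulSub a ⊔ C)) := by
      rw [regular_isGradedSub_iff]
      constructor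
      · intro m hm r
        exact ⟨hNgr.1 m hm.1 r, hsupmul m hm.2 r⟩
      · intro x hx η
        exact ⟨hNgr.2 x hx.1 η, hsupproj x hx.2 η⟩
    rcases hN.2.2 _ hNIgr inf_le_left with hbot | heq
    · -- C ⊔ N would be a strictly larger member of S
      have hNS : C ⊔ N ∈ S := by
        refine ⟨?_, ?_, ?_⟩
        · intro x hx r
          obtain ⟨q, hq, n, hn, rfl⟩ := AddSubgroup.mem_sup.mp hx
          rw [add_mul]
          exact add_mem (AddSubgroup.mem_sup_left (hCS.1 q hq r))
            (AddSubgroup.mem_sup_right (hNgr.1 n hn r))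
        · intro x hx η
          obtain ⟨q, hq, n, hn, rfl⟩ := AddSubgroup.mem_sup.mp hx
          rw [proj_add]
          exact add_mem (AddSubgroup.mem_sup_left (hCS.2.1 q hq η))
            (AddSubgroup.mem_sup_right (hNgr.2 n hn η))
        · apply le_bot_iff.mp
          intro x hx
          obtain ⟨hxa, hxCN⟩ := AddSubgroup.mem_inf.mp hx
          obtain ⟨q, hq, n, hn, rfl⟩ := AddSubgroup.mem_sup.mp hxCN
          have hnmem : n ∈ N ⊓ (lmulSub a ⊔ C) := by
            refine AddSubgroup.mem_inf.mpr ⟨hn, ?_⟩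
            have : n = (q + n) - q := by abel
            rw [this]
            exact sub_mem (AddSubgroup.mem_sup_left hxa) (AddSubgroup.mem_sup_right hq)
          rw [hbot] at hnmem
          rw [AddSubgroup.mem_bot.mp hnmem, add_zero] at hxa ⊢
          have : q ∈ lmulSub a ⊓ C := ⟨hxa, hq⟩
          rw [hCS.2.2] at this
          exact this
      have hle : C ≤ C ⊔ N := le_sup_left
      have := hCmax.2 hNS hle
      -- then N ≤ C, contradicting hnot
      apply hnot
      have hNC : N ≤ C := le_sup_right.trans this
      exact hNC.trans le_sup_right
    · apply hnot
      intro x hx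
      have hx2 : x ∈ N ⊓ (lmulSub a ⊔ C) := by rw [heq]; exact hx
      exact hx2.2
  have htop : ∀ x : R, x ∈ lmulSub a ⊔ C := by
    intro x
    have h := h3.1
    unfold GammaRing.IsRightGrSemisimple GammaMod.IsGrSemisimple at h
    have hle : (⨆ (N : AddSubgroup R) (_ : RG.regular.IsGrSimpleSub N), N)
        ≤ lmulSub a ⊔ C := iSup₂_le hsimple_le
    rw [h] at hle
    exact hle trivial
  -- decompose 1_{tgt γ}
  obtain ⟨t, ht, cc, hcc, htc⟩ := AddSubgroup.mem_sup.mp (htop (RG.one (G.tgt γ)))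
  obtain ⟨b₀, hb₀⟩ := ht
  have hb₀' : a * b₀ = t := hb₀
  -- a = a * b₀ * a
  have haba : a * b₀ * a = a := by
    have h1 : t * a + cc * a = a := by
      rw [← add_mul, htc]
      exact RG.one_mul' γ a ha
    have hca : cc * a = a - t * a := by
      rw [eq_sub_iff_add_eq, add_comm]
      exact h1
    have hcmem : cc * a ∈ lmulSub a ⊓ C := by
      constructor
      · rw [hca, ← hb₀']
        have : a - a * b₀ * a = a * (RG.one (G.src γ) - b₀ * a) := by
          rw [mul_sub, RG.mul_one' γ a ha, mul_assoc]
        rw [this]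
        exact ⟨_, rfl⟩
      · exact hCS.1 cc hcc a
    rw [hCS.2.2] at hcmem
    have := AddSubgroup.mem_bot.mp hcmem
    rw [this] at hca
    rw [hb₀']
    have := sub_eq_zero.mp hca.symm
    exact this.symm
  -- extract homogeneous components
  have hstep1 : proj RG (G.tgt γ) (a * b₀) = a * proj RG (G.inv γ) b₀ := by
    have hkey := proj_mul_left RG ha ((G.tgt_inv γ).symm) b₀
    rw [show G.comp γ (G.inv γ) ((G.tgt_inv γ).symm) = G.tgt γ from G.comp_inv γ] at hkey
    exact hkey
  have hstep2 : a * proj RG (G.inv γ) b₀ * a = a := by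
    have hkey := proj_mul_right RG ha (G.src_tgt γ) (a * b₀)
    rw [show G.comp (G.tgt γ) γ (G.src_tgt γ) = γ from G.id_comp γ] at hkey
    rw [haba, proj_of_mem RG ha] at hkey
    rw [← hstep1]
    exact hkey.symm
  set b₁ := proj RG (G.inv γ) b₀ with hb₁
  have hb₁mem : b₁ ∈ RG.grade (G.inv γ) := proj_mem RG _ _
  have htmem : a * b₁ ∈ RG.grade (G.tgt γ) := by
    have := RG.mul_mem γ (G.inv γ) ((G.tgt_inv γ).symm) a b₁ ha hb₁mem
    rw [show G.comp γ (G.inv γ) ((G.tgt_inv γ).symm) = G.tgt γ from G.comp_inv γ] at this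
    exact this
  have ht0 : a * b₁ ≠ 0 := by
    intro h
    rw [h, zero_mul] at hstep2
    exact h0 hstep2.symm
  obtain ⟨-, hdiv⟩ := h3.2 (G.tgt γ) (isObj_tgt γ) (one_tgt_ne_zero RG ha h0)
  obtain ⟨s', hs', hts', -⟩ := hdiv (a * b₁) htmem ht0
  refine ⟨b₁ * s', ?_, ?_⟩
  · have hc : G.src (G.inv γ) = G.tgt (G.tgt γ) := by
      rw [G.src_inv, G.tgt_tgt]
    have := RG.mul_mem (G.inv γ) (G.tgt γ) hc b₁ s' hb₁mem hs'
    rw [show G.comp (G.inv γ) (G.tgt γ) hc = G.inv γ from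
      comp_tgt_right (G.src_inv γ).symm hc] at this
    exact this
  · rw [← mul_assoc]
    exact hts'


/-! ### Connectedness classes for (1) → (4) -/

def conn (RG : GammaRing G R) (e f : Γ) : Prop :=
  ∃ γ : Γ, RG.grade γ ≠ ⊥ ∧ G.src γ = e ∧ G.tgt γ = f

def sset (RG : GammaRing G R) (e : Γ) : Set Γ := {γ | conn RG (G.src γ) e}

def classSup (RG : GammaRing G R) (e : Γ) : AddSubgroup R :=
  ⨆ (γ : Γ) (_ : γ ∈ sset RG e), RG.grade γ

lemma mem_classSup_iff (RG : GammaRing G R) (e : Γ) (x : R) :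
    x ∈ classSup RG e ↔ ∀ γ, γ ∉ sset RG e → proj RG γ x = 0 :=
  mem_biSup_iff RG (fun γ => γ ∈ sset RG e) x

lemma conn_symm (RG : GammaRing G R) (h1 : RG.IsGrDivision) {e f : Γ}
    (h : conn RG e f) : conn RG f e := by
  obtain ⟨γ, hγ, hsrc, htgt⟩ := h
  obtain ⟨a, ha, ha0⟩ := (grade_ne_bot_iff RG γ).mp hγ
  obtain ⟨b, hb, hab, -⟩ := h1.2 γ a ha ha0
  have hb0 : b ≠ 0 := by
    intro h'
    exact one_tgt_ne_zero RG ha ha0 (by rw [← hab, h', mul_zero])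
  exact ⟨G.inv γ, (grade_ne_bot_iff RG _).mpr ⟨b, hb, hb0⟩,
    by rw [G.src_inv, htgt], by rw [G.tgt_inv, hsrc]⟩

lemma conn_trans (RG : GammaRing G R) (h1 : RG.IsGrDivision) {e f g : Γ}
    (hef : conn RG e f) (hfg : conn RG f g) : conn RG e g := by
  obtain ⟨γ, hγ, hsγ, htγ⟩ := hef
  obtain ⟨δ, hδ, hsδ, htδ⟩ := hfg
  have hc : G.src δ = G.tgt γ := by rw [hsδ, htγ]
  obtain ⟨a, ha, ha0⟩ := (grade_ne_bot_iff RG γ).mp hγ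
  obtain ⟨b, hb, hb0⟩ := (grade_ne_bot_iff RG δ).mp hδ
  exact ⟨G.comp δ γ hc, (grade_ne_bot_iff RG _).mpr ⟨b * a, RG.mul_mem δ γ hc b a hb ha,
    div_mul_ne_zero RG h1 hb ha hb0 ha0 hc⟩,
    by rw [G.src_comp, hsγ], by rw [G.tgt_comp, htδ]⟩

lemma sset_eq_of_conn (RG : GammaRing G R) (h1 : RG.IsGrDivision) {e f : Γ}
    (h : conn RG e f) : sset RG e = sset RG f := by
  ext γ
  constructor
  · intro hγ
    exact conn_trans RG h1 hγ h
  · intro hγ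
    exact conn_trans RG h1 hγ (conn_symm RG h1 h)

lemma classSup_eq_of_conn (RG : GammaRing G R) (h1 : RG.IsGrDivision) {e f : Γ}
    (h : conn RG e f) : classSup RG e = classSup RG f := by
  unfold classSup
  rw [sset_eq_of_conn RG h1 h]

lemma grade_le_classSup (RG : GammaRing G R) {γ e : Γ} (hγ : γ ∈ sset RG e) :
    RG.grade γ ≤ classSup RG e :=
  le_iSup_of_le γ (le_iSup_of_le hγ le_rfl)

lemma mem_sset_of (RG : GammaRing G R) {γ e : Γ} {x : R} (hx : x ∈ RG.grade γ)
    (hx0 : x ≠ 0) (hcs : x ∈ classSup RG e) : γ ∈ sset RG e := by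
  by_contra h
  have := (mem_classSup_iff RG e x).mp hcs γ h
  rw [proj_of_mem RG hx] at this
  exact hx0 this

/-! ### (1) → (4) -/

lemma impl14 (RG : GammaRing G R) (hR : ∃ a : R, a ≠ 0) (h1 : RG.IsGrDivision) :
    ∃ (J : Type v) (A : J → AddSubgroup R),
      (∀ j, (∀ a ∈ A j, ∀ b ∈ A j, a * b ∈ A j) ∧
        A j ≤ (⨆ γ : Γ, (RG.grade γ ⊓ A j)) ∧
        RG.SubringGrDivision (A j) ∧ RG.SubringGrPrime (A j)) ∧
      (∀ j k, j ≠ k → ∀ γ : Γ, RG.grade γ ⊓ A j = ⊥ ∨ RG.grade γ ⊓ A k = ⊥) ∧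
      (∀ j k, j ≠ k → ∀ a ∈ A j, ∀ b ∈ A k, a * b = 0) ∧
      (⨆ j, A j) = ⊤ ∧
      (∀ j, A j ⊓ (⨆ (k) (_ : k ≠ j), A k) = ⊥) := by
  refine ⟨{N : AddSubgroup R // ∃ e : Γ, conn RG e e ∧ N = classSup RG e},
    fun j => j.1, ?_, ?_, ?_, ?_, ?_⟩
  · -- each class is a gr-prime graded division subring
    rintro ⟨N, hN⟩
    obtain ⟨e, hce, rfl⟩ := hN
    have hnonzero : ∃ a ∈ classSup RG e, a ≠ 0 := by
      obtain ⟨μ, hμ, hsμ, htμ⟩ := id hce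
      obtain ⟨a, ha, ha0⟩ := (grade_ne_bot_iff RG μ).mp hμ
      have hμs : μ ∈ sset RG e := by
        show conn RG (G.src μ) e
        rw [hsμ]
        exact hce
      exact ⟨a, grade_le_classSup RG hμs ha, ha0⟩
    refine ⟨?_, ?_, ?_, ?_⟩
    · -- multiplicative closure
      intro x hx y hy
      refine mul_mem_of_forall RG (p := fun γ => γ ∈ sset RG e)
        (q := fun γ => γ ∈ sset RG e) ?_ hx hy
      intro γ hγ δ hδ a ha b hb
      by_cases hc : G.src γ = G.tgt δ
      · refine grade_le_classSup RG (γ := G.comp γ δ hc) ?_ (RG.mul_mem γ δ hc a b ha hb)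
        show conn RG (G.src (G.comp γ δ hc)) e
        rw [G.src_comp]
        exact hδ
      · rw [RG.mul_ne γ δ hc a b ha hb]
        exact zero_mem _
    · -- gradedness
      refine (graded_iff RG _).mpr ?_
      intro x hx η
      by_cases hη : η ∈ sset RG e
      · exact grade_le_classSup RG hη (proj_mem RG η x)
      · rw [(mem_classSup_iff RG e x).mp hx η hη]
        exact zero_mem _
    · -- graded division subring
      refine ⟨hnonzero, ?_⟩
      intro γ a ha haN ha0
      have hγs : γ ∈ sset RG e := mem_sset_of RG ha ha0 haN
      have hγne : RG.grade γ ≠ ⊥ := (grade_ne_bot_iff RG γ).mpr ⟨a, ha, ha0⟩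
      have hconn_tgt : conn RG (G.tgt γ) e :=
        conn_trans RG h1 (conn_symm RG h1 ⟨γ, hγne, rfl, rfl⟩) hγs
      refine ⟨?_, ?_, ?_⟩
      · have hm : G.tgt γ ∈ sset RG e := by
          show conn RG (G.src (G.tgt γ)) e
          rw [G.src_tgt]
          exact hconn_tgt
        exact grade_le_classSup RG hm (RG.one_mem _ (isObj_tgt γ))
      · have hm : G.src γ ∈ sset RG e := by
          show conn RG (G.src (G.src γ)) e
          rw [G.src_src]
          exact hγs
        exact grade_le_classSup RG hm (RG.one_mem _ (isObj_src γ))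
      · obtain ⟨b, hb, hab, hba⟩ := h1.2 γ a ha ha0
        have hm : G.inv γ ∈ sset RG e := by
          show conn RG (G.src (G.inv γ)) e
          rw [G.src_inv]
          exact hconn_tgt
        exact ⟨b, hb, grade_le_classSup RG hm hb, hab, hba⟩
    · -- gr-prime
      refine ⟨hnonzero, ?_⟩
      intro P Q hP hQ hPbot hQbot
      obtain ⟨x, hxP, hx0⟩ := (addSubgroup_ne_bot_iff P).mp hPbot
      obtain ⟨γ₀, hp0⟩ := exists_proj_ne_zero RG hx0
      have hpP : proj RG γ₀ x ∈ P := (graded_iff RG P).mp hP.2.2 x hxP γ₀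
      have hpγ : proj RG γ₀ x ∈ RG.grade γ₀ := proj_mem RG γ₀ x
      have hγ₀s : γ₀ ∈ sset RG e := mem_sset_of RG hpγ hp0 (hP.1 hpP)
      obtain ⟨y, hyQ, hy0⟩ := (addSubgroup_ne_bot_iff Q).mp hQbot
      obtain ⟨δ₀, hq0⟩ := exists_proj_ne_zero RG hy0
      have hqQ : proj RG δ₀ y ∈ Q := (graded_iff RG Q).mp hQ.2.2 y hyQ δ₀
      have hqδ : proj RG δ₀ y ∈ RG.grade δ₀ := proj_mem RG δ₀ y
      have hδ₀s : δ₀ ∈ sset RG e := mem_sset_of RG hqδ hq0 (hQ.1 hqQ)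
      have hδ₀ne : RG.grade δ₀ ≠ ⊥ := (grade_ne_bot_iff RG δ₀).mpr ⟨_, hqδ, hq0⟩
      have c1 : conn RG (G.tgt δ₀) e :=
        conn_trans RG h1 (conn_symm RG h1 ⟨δ₀, hδ₀ne, rfl, rfl⟩) hδ₀s
      have c2 : conn RG (G.tgt δ₀) (G.src γ₀) :=
        conn_trans RG h1 c1 (conn_symm RG h1 hγ₀s)
      obtain ⟨μ, hμ, hsμ, htμ⟩ := c2
      obtain ⟨c, hcμ, hc0⟩ := (grade_ne_bot_iff RG μ).mp hμ
      have hcN : c ∈ classSup RG e := by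
        refine grade_le_classSup RG ?_ hcμ
        show conn RG (G.src μ) e
        rw [hsμ]
        exact c1
      have hpc : proj RG γ₀ x * c ∈ P := (hP.2.1 _ hpP c hcN).1
      have hcomp1 : G.src γ₀ = G.tgt μ := htμ.symm
      have hpc0 : proj RG γ₀ x * c ≠ 0 :=
        div_mul_ne_zero RG h1 hpγ hcμ hp0 hc0 hcomp1
      have hpcg : proj RG γ₀ x * c ∈ RG.grade (G.comp γ₀ μ hcomp1) :=
        RG.mul_mem γ₀ μ hcomp1 _ c hpγ hcμ
      have hcomp2 : G.src (G.comp γ₀ μ hcomp1) = G.tgt δ₀ := by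
        rw [G.src_comp, hsμ]
      exact ⟨_, hpc, _, hqQ, div_mul_ne_zero RG h1 hpcg hqδ hpc0 hq0 hcomp2⟩
  · -- disjoint supports
    intro j k hjk γ
    by_contra hcon
    push_neg at hcon
    obtain ⟨hj1, hk1⟩ := hcon
    obtain ⟨e, hce, hje⟩ := j.2
    obtain ⟨f, hcf, hkf⟩ := k.2
    obtain ⟨x, hx, hx0⟩ := (addSubgroup_ne_bot_iff _).mp hj1
    obtain ⟨hxγ, hxj⟩ := AddSubgroup.mem_inf.mp hx
    obtain ⟨y, hy, hy0⟩ := (addSubgroup_ne_bot_iff _).mp hk1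
    obtain ⟨hyγ, hyk⟩ := AddSubgroup.mem_inf.mp hy
    have hγe : γ ∈ sset RG e := mem_sset_of RG hxγ hx0 (by rw [← hje]; exact hxj)
    have hγf : γ ∈ sset RG f := mem_sset_of RG hyγ hy0 (by rw [← hkf]; exact hyk)
    have hef : conn RG e f := conn_trans RG h1 (conn_symm RG h1 hγe) hγf
    apply hjk
    apply Subtype.ext
    rw [hje, hkf]
    exact classSup_eq_of_conn RG h1 hef
  · -- products between distinct classes vanish
    intro j k hjk a haj b hbk
    obtain ⟨e, hce, hje⟩ := j.2
    obtain ⟨f, hcf, hkf⟩ := k.2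
    have haj' : a ∈ classSup RG e := by rw [← hje]; exact haj
    have hbk' : b ∈ classSup RG f := by rw [← hkf]; exact hbk
    have : a * b ∈ (⊥ : AddSubgroup R) := by
      refine mul_mem_of_forall RG (p := fun γ => γ ∈ sset RG e)
        (q := fun γ => γ ∈ sset RG f) ?_ haj' hbk'
      intro γ hγ δ hδ a' ha' b' hb'
      by_cases hc : G.src γ = G.tgt δ
      · by_cases ha0 : a' = 0
        · rw [ha0, zero_mul]; exact zero_mem _
        by_cases hb0 : b' = 0
        · rw [hb0, mul_zero]; exact zero_mem _
        exfalso
        have hγne : RG.grade γ ≠ ⊥ := (grade_ne_bot_iff RG γ).mpr ⟨a', ha', ha0⟩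
        have hδne : RG.grade δ ≠ ⊥ := (grade_ne_bot_iff RG δ).mpr ⟨b', hb', hb0⟩
        have h1' : conn RG e (G.src γ) := conn_symm RG h1 hγ
        rw [hc] at h1'
        have h2' : conn RG (G.tgt δ) f :=
          conn_trans RG h1 (conn_symm RG h1 ⟨δ, hδne, rfl, rfl⟩) hδ
        have hef : conn RG e f := conn_trans RG h1 h1' h2'
        apply hjk
        apply Subtype.ext
        rw [hje, hkf]
        exact classSup_eq_of_conn RG h1 hef
      · rw [RG.mul_ne γ δ hc a' b' ha' hb']
        exact zero_mem _
    exact AddSubgroup.mem_bot.mp this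
  · -- the classes cover R
    apply le_antisymm le_top
    rw [← RG.grade_iSup]
    apply iSup_le
    intro γ
    by_cases hγ : RG.grade γ = ⊥
    · rw [hγ]
      exact bot_le
    · have hself : conn RG (G.src γ) (G.src γ) :=
        conn_trans RG h1 ⟨γ, hγ, rfl, rfl⟩ (conn_symm RG h1 ⟨γ, hγ, rfl, rfl⟩)
      refine le_trans (grade_le_classSup RG (e := G.src γ) hself) ?_
      exact le_iSup (fun j : {N : AddSubgroup R // ∃ e : Γ, conn RG e e ∧ N = classSup RG e}
        => j.1) ⟨classSup RG (G.src γ), G.src γ, hself, rfl⟩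
  · -- independence
    intro j
    obtain ⟨e, hce, hje⟩ := j.2
    apply le_bot_iff.mp
    intro x hx
    obtain ⟨hx1, hx2⟩ := AddSubgroup.mem_inf.mp hx
    rw [AddSubgroup.mem_bot]
    apply eq_zero_of_proj RG
    intro γ
    by_cases hγ : γ ∈ sset RG e
    · have hle : (⨆ (k) (_ : k ≠ j), (k : {N : AddSubgroup R // ∃ e : Γ,
          conn RG e e ∧ N = classSup RG e}).1)
          ≤ ⨆ (η : Γ) (_ : η ∉ sset RG e), RG.grade η := by
        apply iSup₂_le
        intro k hk
        obtain ⟨f, hcf, hkf⟩ := k.2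
        rw [hkf]
        apply iSup₂_le
        intro η hη
        refine le_iSup_of_le η (le_iSup_of_le ?_ le_rfl)
        intro hηe
        apply hk
        apply Subtype.ext
        rw [hje, hkf]
        exact (classSup_eq_of_conn RG h1
          (conn_trans RG h1 (conn_symm RG h1 hηe) hη)).symm
      exact (mem_biSup_iff RG (fun η => η ∉ sset RG e) x).mp (hle hx2) γ
        (fun h => h hγ)
    · have hx1' : x ∈ classSup RG e := by rw [← hje]; exact hx1
      exact (mem_classSup_iff RG e x).mp hx1' γ hγ

/-! ### (4) → (1) -/

lemma impl41 (RG : GammaRing G R) (hR : ∃ a : R, a ≠ 0)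
    (h4 : ∃ (J : Type v) (A : J → AddSubgroup R),
      (∀ j, (∀ a ∈ A j, ∀ b ∈ A j, a * b ∈ A j) ∧
        A j ≤ (⨆ γ : Γ, (RG.grade γ ⊓ A j)) ∧
        RG.SubringGrDivision (A j) ∧ RG.SubringGrPrime (A j)) ∧
      (∀ j k, j ≠ k → ∀ γ : Γ, RG.grade γ ⊓ A j = ⊥ ∨ RG.grade γ ⊓ A k = ⊥) ∧
      (∀ j k, j ≠ k → ∀ a ∈ A j, ∀ b ∈ A k, a * b = 0) ∧
      (⨆ j, A j) = ⊤ ∧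
      (∀ j, A j ⊓ (⨆ (k) (_ : k ≠ j), A k) = ⊥)) :
    RG.IsGrDivision := by
  obtain ⟨J, A, hA, hdisj, -, hsup, -⟩ := h4
  refine ⟨hR, ?_⟩
  intro γ a ha h0
  have hmem : a ∈ ⨆ j : J, (RG.grade γ ⊓ A j) := by
    let T : AddSubgroup R :=
      { carrier := {x | ∀ δ, proj RG δ x ∈ ⨆ j : J, (RG.grade δ ⊓ A j)}
        zero_mem' := by
          intro δ
          rw [proj_zero]
          exact zero_mem _
        add_mem' := by
          intro p q hp hq δ
          rw [proj_add]
          exact add_mem (hp δ) (hq δ)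
        neg_mem' := by
          intro p hp δ
          rw [proj_neg]
          exact neg_mem (hp δ) }
    have hle : (⨆ j, A j) ≤ T := by
      apply iSup_le
      intro j x hx δ
      exact AddSubgroup.mem_iSup_of_mem j
        ⟨proj_mem RG δ x, (graded_iff RG (A j)).mp (hA j).2.1 x hx δ⟩
    have hxT : a ∈ T := hle (by rw [hsup]; trivial)
    have := hxT γ
    rwa [proj_of_mem RG ha] at this
  by_cases hex : ∃ j, RG.grade γ ⊓ A j ≠ ⊥
  · obtain ⟨j₀, hj₀⟩ := hex
    have hle : (⨆ j : J, (RG.grade γ ⊓ A j)) ≤ A j₀ := by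
      apply iSup_le
      intro j
      by_cases hj : j = j₀
      · subst hj
        exact inf_le_right
      · rcases hdisj j j₀ hj γ with h | h
        · rw [h]
          exact bot_le
        · exact absurd h hj₀
    have haj : a ∈ A j₀ := hle hmem
    obtain ⟨-, -, hdiv, -⟩ := hA j₀
    obtain ⟨-, -, b, hb, -, hab, hba⟩ := hdiv.2 γ a ha haj h0
    exact ⟨b, hb, hab, hba⟩
  · exfalso
    push_neg at hex
    have hbot : (⨆ j : J, (RG.grade γ ⊓ A j)) = ⊥ := by
      apply le_bot_iff.mp
      exact iSup_le fun j => le_of_eq (hex j)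
    rw [hbot] at hmem
    exact h0 (AddSubgroup.mem_bot.mp hmem)

end GDRaux

end GDRaux
/-- characterizations of graded division rings.
For a nonzero object unital `Γ`-graded ring `R` the following are equivalent:
(1) `R` is a `Γ`-graded division ring;
(2) `R_R` is a `Γ₀`-simple right `R`-module;
(3) `R` is right gr-semisimple and `R_e` is a division ring for every
    `e ∈ Γ'₀(R)`;
(4) `R` is the direct sum of a family of gr-prime `Γ`-graded division rings with
    pairwise disjoint supports. -/
theorem graded_division_ring_tfae
    {Γ : Type u} (G : Gpd Γ) {R : Type v} [NonUnitalRing R] (RG : GammaRing G R)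
    (hR : ∃ a : R, a ≠ 0) :
    [RG.IsGrDivision,
     RG.regular.IsGamma0Simple,
     RG.IsRightGrSemisimple ∧
       ∀ e : Γ, G.IsObj e → RG.one e ≠ 0 → RG.ComponentDivisionRing e,
     ∃ (J : Type v) (A : J → AddSubgroup R),
       (∀ j, (∀ a ∈ A j, ∀ b ∈ A j, a * b ∈ A j) ∧
         A j ≤ (⨆ γ : Γ, (RG.grade γ ⊓ A j)) ∧
         RG.SubringGrDivision (A j) ∧ RG.SubringGrPrime (A j)) ∧
       (∀ j k, j ≠ k → ∀ γ : Γ, RG.grade γ ⊓ A j = ⊥ ∨ RG.grade γ ⊓ A k = ⊥) ∧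
       (∀ j k, j ≠ k → ∀ a ∈ A j, ∀ b ∈ A k, a * b = 0) ∧
       (⨆ j, A j) = ⊤ ∧
       (∀ j, A j ⊓ (⨆ (k : J) (_ : k ≠ j), A k) = ⊥)].TFAE := by
  tfae_have 1 → 2 := GDRaux.impl12 RG hR
  tfae_have 2 → 1 := GDRaux.impl21 RG
  tfae_have 1 → 3 := GDRaux.impl13 RG
  tfae_have 3 → 1 := GDRaux.impl31 RG hR
  tfae_have 1 → 4 := GDRaux.impl14 RG hR
  tfae_have 4 → 1 := GDRaux.impl41 RG hR
  tfae_finish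
end
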